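/- arXiv:2401.02775 — 11 statements merged into one kernel-verified Lean document; each statement's English description precedes it below -/
import Mathlib

section
/- Let M be a monoid that embeds into a group (i.e., there exists a group G and an injective monoid homomorphism from M into G). Then there exists a simple graph Γ* such that the bimorphism monoid Bi(Γ*) is isomorphic to M as a monoid. -/
/-- The bimorphism monoid of a simple graph `Γ`: the submonoid of `Function.End V`
(self-maps of the vertex set under composition) consisting of the bijective
self-maps that preserve adjacency. -/
def biSubmonoid {V : Type*} (Γ : SimpleGraph V) : Submonoid (Function.End V) where
  carrier := {f | Function.Bijective f ∧ ∀ a b, Γ.Adj a b → Γ.Adj (f a) (f b)}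
  one_mem' := ⟨Function.bijective_id, fun _ _ h => h⟩
  mul_mem' := by
    rintro f g ⟨hf, hf'⟩ ⟨hg, hg'⟩
    exact ⟨hf.comp hg, fun a b h => hf' _ _ (hg' _ _ h)⟩

namespace BiRealize

universe u

/-! ### A rigidity lemma for well-orders -/

/-- If `α, β` are bijections of a well-ordered set such that `t ≤ s → β t ≤ α s`,
then `α = β = id`. -/
theorem wo_fix {σ : Type u} (r : σ → σ → Prop) [IsWellOrder σ r]
    {α β : σ → σ} (hα : Function.Bijective α) (hβ : Function.Bijective β)
    (H : ∀ t s, (r t s ∨ t = s) → (r (β t) (α s) ∨ β t = α s)) :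
    ∀ x, α x = x ∧ β x = x := by
  intro x
  refine IsWellFounded.induction r (motive := fun z => α z = z ∧ β z = z) x ?_
  intro x IH
  -- first show `α x = x`
  have hax : α x = x := by
    obtain ⟨s, hs⟩ := hα.2 x
    rcases trichotomous_of r s x with hlt | heq | hgt
    · exfalso
      have h1 : α s = s := (IH s hlt).1
      rw [h1] at hs; subst hs
      exact irrefl_of r s hlt
    · rw [heq] at hs; exact hs
    · exfalso
      -- `r x s` and `α s = x`
      have hbx : β x = x := by
        rcases H x s (Or.inl hgt) with h1 | h1
        · rw [hs] at h1
          have h2 : β (β x) = β x := (IH (β x) h1).2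
          exact hβ.1 h2
        · rw [hs] at h1; exact h1
      rcases H s s (Or.inr rfl) with h1 | h1
      · rw [hs] at h1
        have h2 : β (β s) = β s := (IH (β s) h1).2
        have h3 : β s = s := hβ.1 h2
        rw [h3] at h1
        exact asymm_of r hgt h1
      · rw [hs, ← hbx] at h1
        have : s = x := hβ.1 h1
        subst this
        exact irrefl_of r s hgt
  refine ⟨hax, ?_⟩
  rcases H x x (Or.inr rfl) with h1 | h1
  · rw [hax] at h1
    have h2 : β (β x) = β x := (IH (β x) h1).2
    have h3 : β x = x := hβ.1 h2
    rw [h3] at h1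
    exact absurd h1 (irrefl_of r x)
  · rw [hax] at h1; exact h1

/-! ### The vertex set and the graph -/

variable (G : Type u) [Group G]

/-- The set of colors: nonidentity elements of `G`. -/
def SGr : Type u := {g : G // g ≠ 1}

/-- Indexing type for the pair of "code" families. -/
def CIdx : Type u := Option (SGr G) × ℕ

/-- A well-order (without maximum) on `CIdx G`. -/
def cr : CIdx G → CIdx G → Prop := Prod.Lex WellOrderingRel (· < ·)

instance : IsWellOrder (CIdx G) (cr G) :=
  inferInstanceAs (IsWellOrder (Option (SGr G) × ℕ) (Prod.Lex WellOrderingRel (· < ·)))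

variable {G}

/-- Reflexive closure of `cr`. -/
def crle (t x : CIdx G) : Prop := cr G t x ∨ t = x

/-- successor in the second coordinate -/
def csucc (t : CIdx G) : CIdx G := (t.1, t.2 + 1)

theorem cr_csucc (t : CIdx G) : cr G t (csucc t) := by
  obtain ⟨b, n⟩ := t
  exact Prod.Lex.right b (Nat.lt_succ_self n)

theorem csucc_ne (t : CIdx G) : csucc t ≠ t := by
  obtain ⟨b, n⟩ := t
  intro h
  have := congrArg Prod.snd h
  simp [csucc] at this

/-- color index of a color -/
def cin (s : SGr G) : CIdx G := (some s, 0)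

/-- the marker index -/
def cmk : CIdx G := (none, 0)

theorem cin_inj : Function.Injective (cin (G := G)) := by
  intro a b h
  have := congrArg Prod.fst h
  simpa [cin] using this

theorem cin_ne_cmk (s : SGr G) : cin s ≠ cmk := by
  intro h
  have := congrArg Prod.fst h
  simp [cin, cmk] at this

variable (G) in
/-- The vertices. -/
inductive Vert : Type u
  | vr0 : Vert
  | vr1 : Vert
  | vc : CIdx G → Vert
  | vd : CIdx G → Vert
  | vg : G → Vert
  | vp : G → SGr G → Vert
  | vh : G → SGr G → Vert

open Vert

/-- The base (asymmetric) edge relation. -/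
inductive E (Nset : Set G) : Vert G → Vert G → Prop
  | rr : E Nset vr0 vr1
  | rc (x : CIdx G) : E Nset vr1 (vc x)
  | cd (x t : CIdx G) : crle t x → E Nset (vc x) (vd t)
  | gc (a : G) : a ∈ Nset → E Nset (vg a) (vc cmk)
  | pg (a : G) (s : SGr G) : E Nset (vp a s) (vg a)
  | pc (a : G) (s : SGr G) : E Nset (vp a s) (vc (cin s))
  | ph (a : G) (s : SGr G) : E Nset (vp a s) (vh a s)
  | hg (a : G) (s : SGr G) : E Nset (vh a s) (vg (a * s.val))
  | hga (a : G) (s : SGr G) : E Nset (vh a s) (vg a)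

/-- The graph. -/
def Gam (Nset : Set G) : SimpleGraph (Vert G) := SimpleGraph.fromRel (E Nset)

variable {Nset : Set G}

theorem adj_iff {u v : Vert G} :
    (Gam Nset).Adj u v ↔ u ≠ v ∧ (E Nset u v ∨ E Nset v u) :=
  SimpleGraph.fromRel_adj _ u v

theorem adjE {u v : Vert G} (h : E Nset u v) (hne : u ≠ v) : (Gam Nset).Adj u v :=
  adj_iff.2 ⟨hne, Or.inl h⟩

/-! #### Neighborhood classification lemmas -/

theorem adj_vr0 {v : Vert G} (h : (Gam Nset).Adj v vr0) : v = vr1 := by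
  rcases adj_iff.1 h with ⟨-, h | h⟩ <;> cases h
  rfl

theorem adj_vr1 {v : Vert G} (h : (Gam Nset).Adj v vr1) :
    v = vr0 ∨ ∃ x, v = vc x := by
  rcases adj_iff.1 h with ⟨-, h | h⟩ <;> cases h
  · exact Or.inl rfl
  · exact Or.inr ⟨_, rfl⟩

theorem adj_vc {v : Vert G} {y : CIdx G} (h : (Gam Nset).Adj v (vc y)) :
    v = vr1 ∨ (∃ t, v = vd t ∧ crle t y) ∨ (∃ b s, v = vp b s ∧ y = cin s) ∨
      (∃ a, v = vg a ∧ y = cmk ∧ a ∈ Nset) := by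
  rcases adj_iff.1 h with ⟨-, h | h⟩
  · cases h with
    | rc => exact Or.inl rfl
    | gc a ha => exact Or.inr (Or.inr (Or.inr ⟨a, rfl, rfl, ha⟩))
    | pc a s => exact Or.inr (Or.inr (Or.inl ⟨a, s, rfl, rfl⟩))
  · cases h with
    | cd x t ht => exact Or.inr (Or.inl ⟨t, rfl, ht⟩)

theorem adj_vd {v : Vert G} {t : CIdx G} (h : (Gam Nset).Adj v (vd t)) :
    ∃ x, v = vc x ∧ crle t x := by
  rcases adj_iff.1 h with ⟨-, h | h⟩ <;> cases h
  exact ⟨_, rfl, by assumption⟩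

theorem adj_vg {v : Vert G} {a : G} (h : (Gam Nset).Adj v (vg a)) :
    (∃ s, v = vp a s) ∨ (∃ s, v = vh a s) ∨ (∃ b s, v = vh b s ∧ b * s.val = a) ∨
      (v = vc cmk ∧ a ∈ Nset) := by
  rcases adj_iff.1 h with ⟨-, h | h⟩
  · cases h with
    | pg a s => exact Or.inl ⟨s, rfl⟩
    | hg b s => exact Or.inr (Or.inr (Or.inl ⟨b, s, rfl, rfl⟩))
    | hga a s => exact Or.inr (Or.inl ⟨s, rfl⟩)
  · cases h with
    | gc a ha => exact Or.inr (Or.inr (Or.inr ⟨rfl, ha⟩))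

theorem adj_vp {v : Vert G} {b : G} {s : SGr G} (h : (Gam Nset).Adj v (vp b s)) :
    v = vg b ∨ v = vc (cin s) ∨ v = vh b s := by
  rcases adj_iff.1 h with ⟨-, h | h⟩ <;> cases h
  · exact Or.inl rfl
  · exact Or.inr (Or.inl rfl)
  · exact Or.inr (Or.inr rfl)

theorem adj_vh {v : Vert G} {b : G} {s : SGr G} (h : (Gam Nset).Adj v (vh b s)) :
    v = vp b s ∨ v = vg (b * s.val) ∨ v = vg b := by
  rcases adj_iff.1 h with ⟨-, h | h⟩ <;> cases h
  · exact Or.inl rfl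
  · exact Or.inr (Or.inl rfl)
  · exact Or.inr (Or.inr rfl)

/-- no edges between two `vc`'s -/
theorem no_cc {x y : CIdx G} (h : (Gam Nset).Adj (vc x) (vc y)) : False := by
  rcases adj_vc h with h | ⟨t, h, -⟩ | ⟨b, s, h, -⟩ | ⟨a, h, -⟩ <;> cases h

/-- no triangle contains a `vc` vertex. -/
theorem no_tri_c {u v : Vert G} {y : CIdx G} (hu : (Gam Nset).Adj u (vc y))
    (hv : (Gam Nset).Adj v (vc y)) (huv : (Gam Nset).Adj u v) : False := by
  rcases adj_vc hu with h | ⟨t, h, -⟩ | ⟨b, s, h, hy⟩ | ⟨a, h, hy, -⟩ <;> subst h <;>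
    rcases adj_vc hv with h' | ⟨t', h', -⟩ | ⟨b', s', h', hy'⟩ | ⟨a', h', hy', -⟩ <;> subst h' <;>
      rcases adj_iff.1 huv with ⟨-, hE | hE⟩ <;> cases hE <;>
        first
          | exact cin_ne_cmk _ (hy.symm.trans hy')
          | exact cin_ne_cmk _ (hy'.symm.trans hy)

/-- no triangle contains a `vd` vertex. -/
theorem no_tri_d {u v : Vert G} {t : CIdx G} (hu : (Gam Nset).Adj u (vd t))
    (hv : (Gam Nset).Adj v (vd t)) (huv : (Gam Nset).Adj u v) : False := by
  obtain ⟨x, rfl, -⟩ := adj_vd hu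
  obtain ⟨x', rfl, -⟩ := adj_vd hv
  exact no_cc huv

/-- common neighbors of `vg w` and `vc (cin s)` : only `vp w s`. -/
theorem cn_pg {v : Vert G} {w : G} {s : SGr G} (h1 : (Gam Nset).Adj v (vg w))
    (h2 : (Gam Nset).Adj v (vc (cin s))) : v = vp w s := by
  rcases adj_vc h2 with h' | ⟨t', h', -⟩ | ⟨b', s'', h', hy'⟩ | ⟨a', h', hy', -⟩
  · subst h'
    rcases adj_vg h1 with ⟨s1, h⟩ | ⟨s1, h⟩ | ⟨b1, s1, h, -⟩ | ⟨h, -⟩ <;> cases h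
  · subst h'
    rcases adj_vg h1 with ⟨s1, h⟩ | ⟨s1, h⟩ | ⟨b1, s1, h, -⟩ | ⟨h, -⟩ <;> cases h
  · subst h'
    obtain rfl : s = s'' := cin_inj hy'
    rcases adj_vg h1 with ⟨s1, h⟩ | ⟨s1, h⟩ | ⟨b1, s1, h, -⟩ | ⟨h, -⟩
    · injection h with hb hs
      subst hb; rfl
    · cases h
    · cases h
    · cases h
  · exact absurd hy' (cin_ne_cmk s)

/-! ### Two neighbours for every vertex other than `vr0` -/

theorem two_nbrs (s₀ : SGr G) {z : Vert G} (hz : z ≠ vr0) :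
    ∃ w₁ w₂, w₁ ≠ w₂ ∧ (Gam Nset).Adj z w₁ ∧ (Gam Nset).Adj z w₂ := by
  cases z with
  | vr0 => exact absurd rfl hz
  | vr1 => exact ⟨vr0, vc cmk, (by simp), (adjE E.rr (by simp)).symm, adjE (E.rc cmk) (by simp)⟩
  | vc x =>
      exact ⟨vr1, vd x, (by simp), (adjE (E.rc x) (by simp)).symm, adjE (E.cd x x (Or.inr rfl)) (by simp)⟩
  | vd t =>
      refine ⟨vc t, vc (csucc t), ?_, (adjE (E.cd t t (Or.inr rfl)) (by simp)).symm,
        (adjE (E.cd (csucc t) t (Or.inl (cr_csucc t))) (by simp)).symm⟩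
      intro hcc
      injection hcc with h'
      exact csucc_ne t h'.symm
  | vg a => exact ⟨vp a s₀, vh a s₀, (by simp), (adjE (E.pg a s₀) (by simp)).symm,
      (adjE (E.hga a s₀) (by simp)).symm⟩
  | vp a s => exact ⟨vg a, vh a s, (by simp), adjE (E.pg a s) (by simp), adjE (E.ph a s) (by simp)⟩
  | vh a s => exact ⟨vp a s, vg a, (by simp), (adjE (E.ph a s) (by simp)).symm, adjE (E.hga a s) (by simp)⟩

/-! ### The model bimorphisms -/

/-- The left-translation bimorphism attached to `n : G`. -/
def Phi (n : G) : Vert G → Vert G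
  | vr0 => vr0
  | vr1 => vr1
  | vc x => vc x
  | vd x => vd x
  | vg a => vg (n * a)
  | vp a s => vp (n * a) s
  | vh a s => vh (n * a) s

theorem Phi_one : Phi (1 : G) = id := by
  funext v; cases v <;> simp [Phi]

theorem Phi_comp (n m : G) : Phi n ∘ Phi m = Phi (n * m) := by
  funext v; cases v <;> simp [Phi, mul_assoc]

theorem Phi_bij (n : G) : Function.Bijective (Phi n) := by
  have h1 : Phi n⁻¹ ∘ Phi n = id := by rw [Phi_comp, inv_mul_cancel, Phi_one]
  have h2 : Phi n ∘ Phi n⁻¹ = id := by rw [Phi_comp, mul_inv_cancel, Phi_one]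
  exact ⟨Function.LeftInverse.injective (congrFun h1),
    Function.RightInverse.surjective (congrFun h2)⟩

theorem Phi_E {Nsub : Submonoid G} {n : G} (hn : n ∈ Nsub) {u v : Vert G}
    (h : E (↑Nsub : Set G) u v) : E (↑Nsub : Set G) (Phi n u) (Phi n v) := by
  cases h with
  | rr => exact E.rr
  | rc x => exact E.rc x
  | cd x t ht => exact E.cd x t ht
  | gc a ha => exact E.gc (n * a) (Nsub.mul_mem hn ha)
  | pg a s => exact E.pg (n * a) s
  | pc a s => exact E.pc (n * a) s
  | ph a s => exact E.ph (n * a) s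
  | hg a s =>
      have h2 : E (↑Nsub : Set G) (vh (n * a) s) (vg ((n * a) * s.val)) := E.hg (n * a) s
      rw [mul_assoc] at h2
      exact h2
  | hga a s => exact E.hga (n * a) s

theorem Phi_adj {Nsub : Submonoid G} {n : G} (hn : n ∈ Nsub) {u v : Vert G}
    (hab : (Gam (↑Nsub : Set G)).Adj u v) :
    (Gam (↑Nsub : Set G)).Adj (Phi n u) (Phi n v) := by
  rcases adj_iff.1 hab with ⟨hne, hE | hE⟩
  · exact adj_iff.2 ⟨fun hh => hne ((Phi_bij n).1 hh), Or.inl (Phi_E hn hE)⟩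
  · exact adj_iff.2 ⟨fun hh => hne ((Phi_bij n).1 hh), Or.inr (Phi_E hn hE)⟩

/-! ### Rigidity: every bimorphism is some `Phi n` -/

theorem rigid [Nontrivial G] {Nset : Set G} (h1mem : (1 : G) ∈ Nset) {f : Vert G → Vert G}
    (hbij : Function.Bijective f)
    (hadj : ∀ u v, (Gam Nset).Adj u v → (Gam Nset).Adj (f u) (f v)) :
    ∃ n ∈ Nset, f = Phi n := by
  obtain ⟨g₀, hg₀⟩ := exists_ne (1 : G)
  have finj := hbij.1
  -- Step 1 : `f` fixes `vr0`.
  have hfr0 : f vr0 = vr0 := by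
    obtain ⟨z, hz⟩ := hbij.2 vr0
    rcases eq_or_ne z vr0 with rfl | hzne
    · exact hz
    · exfalso
      obtain ⟨w₁, w₂, hww, h1, h2⟩ := two_nbrs (Nset := Nset) ⟨g₀, hg₀⟩ hzne
      have a1 := hadj _ _ h1
      have a2 := hadj _ _ h2
      rw [hz] at a1 a2
      have e1 := adj_vr0 a1.symm
      have e2 := adj_vr0 a2.symm
      exact hww (finj (e1.trans e2.symm))
  -- Step 2 : `f` fixes `vr1`.
  have hfr1 : f vr1 = vr1 := by
    have a := hadj _ _ (adjE (u := vr0) E.rr (by simp))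
    rw [hfr0] at a
    exact adj_vr0 a.symm
  -- Step 3 : `f` maps the `vc`'s to `vc`'s.
  have hfc' : ∀ x, ∃ y, f (vc x) = vc y := by
    intro x
    have a := hadj _ _ (adjE (u := vr1) (E.rc x) (by simp))
    rw [hfr1] at a
    rcases adj_vr1 a.symm with h | ⟨y, hy⟩
    · exfalso; have := finj (h.trans hfr0.symm); cases this
    · exact ⟨y, hy⟩
  choose α hα using hfc'
  have hαinj : Function.Injective α := by
    intro a b hab
    have h1 : f (vc a) = f (vc b) := by rw [hα, hα, hab]
    have h2 := finj h1
    injection h2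
  -- Step 3' : `f` maps the `vd`'s to `vd`'s.
  have hfd' : ∀ t, ∃ u, f (vd t) = vd u := by
    intro t
    have a1 := hadj _ _ (adjE (u := vc t) (E.cd t t (Or.inr rfl)) (by simp))
    have a2 := hadj _ _ (adjE (u := vc (csucc t)) (E.cd (csucc t) t (Or.inl (cr_csucc t))) (by simp))
    rw [hα t] at a1
    rw [hα (csucc t)] at a2
    have hne : α t ≠ α (csucc t) := fun hh => csucc_ne t (hαinj hh).symm
    rcases adj_vc a1.symm with h | ⟨u, hu, -⟩ | ⟨b, s, hb, hy⟩ | ⟨a, ha, hy, -⟩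
    · exfalso; have := finj (h.trans hfr1.symm); cases this
    · exact ⟨u, hu⟩
    · exfalso
      rcases adj_vc a2.symm with h' | ⟨u', hu', -⟩ | ⟨b', s', hb', hy'⟩ | ⟨a', ha', hy', -⟩
      · cases hb.symm.trans h'
      · cases hb.symm.trans hu'
      · have hss : s = s' := by
          have h3 := hb.symm.trans hb'
          injection h3 with h4 h5
        exact hne (by rw [hy, hy', hss])
      · cases hb.symm.trans ha'
    · exfalso
      rcases adj_vc a2.symm with h' | ⟨u', hu', -⟩ | ⟨b', s', hb', hy'⟩ | ⟨a', ha', hy', -⟩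
      · cases ha.symm.trans h'
      · cases ha.symm.trans hu'
      · cases ha.symm.trans hb'
      · exact hne (by rw [hy, hy'])
  choose β hβ using hfd'
  have hβinj : Function.Injective β := by
    intro a b hab
    have h1 : f (vd a) = f (vd b) := by rw [hβ, hβ, hab]
    have h2 := finj h1
    injection h2
  -- The order constraint.
  have hcons : ∀ t x, crle t x → crle (β t) (α x) := by
    intro t x htx
    have a := hadj _ _ (adjE (u := vc x) (E.cd x t htx) (by simp))
    rw [hα x, hβ t] at a
    obtain ⟨x', hx', hle⟩ := adj_vd a
    have h2 : α x = x' := by injection hx'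
    rwa [h2]
  -- Surjectivity of `α`.
  have hαsurj : Function.Surjective α := by
    intro y
    obtain ⟨z, hz⟩ := hbij.2 (vc y)
    cases z with
    | vr0 => exfalso; rw [hfr0] at hz; cases hz
    | vr1 => exfalso; rw [hfr1] at hz; cases hz
    | vc x =>
        refine ⟨x, ?_⟩
        have h1 := (hα x).symm.trans hz
        injection h1
    | vd t => exfalso; rw [hβ t] at hz; cases hz
    | vg a =>
        exfalso
        have h1 := hadj _ _ (adjE (u := vp a ⟨g₀, hg₀⟩) (E.pg a ⟨g₀, hg₀⟩) (by simp))
        have h2 := hadj _ _ (adjE (u := vp a ⟨g₀, hg₀⟩) (E.ph a ⟨g₀, hg₀⟩) (by simp))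
        have h3 := hadj _ _ (adjE (u := vh a ⟨g₀, hg₀⟩) (E.hga a ⟨g₀, hg₀⟩) (by simp))
        rw [hz] at h1 h3
        exact no_tri_c h1 h3 h2
    | vp a s =>
        exfalso
        have h1 := hadj _ _ (adjE (u := vp a s) (E.pc a s) (by simp))
        rw [hz, hα] at h1
        exact no_cc h1
    | vh a s =>
        exfalso
        have h1 := hadj _ _ (adjE (u := vp a s) (E.ph a s) (by simp))
        have h2 := hadj _ _ (adjE (u := vp a s) (E.pg a s) (by simp))
        have h3 := hadj _ _ (adjE (u := vh a s) (E.hga a s) (by simp))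
        rw [hz] at h1 h3
        exact no_tri_c h1 h3.symm h2
  -- Surjectivity of `β`.
  have hβsurj : Function.Surjective β := by
    intro u
    obtain ⟨z, hz⟩ := hbij.2 (vd u)
    cases z with
    | vr0 => exfalso; rw [hfr0] at hz; cases hz
    | vr1 => exfalso; rw [hfr1] at hz; cases hz
    | vc x => exfalso; rw [hα x] at hz; cases hz
    | vd t =>
        refine ⟨t, ?_⟩
        have h1 := (hβ t).symm.trans hz
        injection h1
    | vg a =>
        exfalso
        have h1 := hadj _ _ (adjE (u := vp a ⟨g₀, hg₀⟩) (E.pg a ⟨g₀, hg₀⟩) (by simp))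
        have h2 := hadj _ _ (adjE (u := vp a ⟨g₀, hg₀⟩) (E.ph a ⟨g₀, hg₀⟩) (by simp))
        have h3 := hadj _ _ (adjE (u := vh a ⟨g₀, hg₀⟩) (E.hga a ⟨g₀, hg₀⟩) (by simp))
        rw [hz] at h1 h3
        exact no_tri_d h1 h3 h2
    | vp a s =>
        exfalso
        have h1 := hadj _ _ (adjE (u := vp a s) (E.pg a s) (by simp))
        have h2 := hadj _ _ (adjE (u := vp a s) (E.ph a s) (by simp))
        have h3 := hadj _ _ (adjE (u := vh a s) (E.hga a s) (by simp))
        rw [hz] at h1 h2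
        exact no_tri_d h1.symm h2.symm h3.symm
    | vh a s =>
        exfalso
        have h1 := hadj _ _ (adjE (u := vp a s) (E.ph a s) (by simp))
        have h2 := hadj _ _ (adjE (u := vp a s) (E.pg a s) (by simp))
        have h3 := hadj _ _ (adjE (u := vh a s) (E.hga a s) (by simp))
        rw [hz] at h1 h3
        exact no_tri_d h1 h3.symm h2
  -- Conclude that `α = β = id`.
  have hfix := wo_fix (cr G) ⟨hαinj, hαsurj⟩ ⟨hβinj, hβsurj⟩ hcons
  have hfc : ∀ x, f (vc x) = vc x := fun x => by rw [hα x, (hfix x).1]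
  have hfd : ∀ t, f (vd t) = vd t := fun t => by rw [hβ t, (hfix t).2]
  -- Find the translation element.
  have hn : ∃ n ∈ Nset, f (vg 1) = vg n := by
    have a := hadj _ _ (adjE (u := vg 1) (E.gc 1 h1mem) (by simp))
    rw [hfc cmk] at a
    rcases adj_vc a with h | ⟨t, ht, -⟩ | ⟨b, s, hb, hy⟩ | ⟨aa, haa, -, hmem⟩
    · exfalso; have := finj (h.trans hfr1.symm); cases this
    · exfalso; have := finj (ht.trans (hfd t).symm); cases this
    · exact absurd hy.symm (cin_ne_cmk s)
    · exact ⟨aa, hmem, haa⟩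
  obtain ⟨n, hnmem, hfg1⟩ := hn
  -- All `vg`'s.
  have hfg : ∀ b : G, f (vg b) = vg (n * b) := by
    intro b
    rcases eq_or_ne b 1 with rfl | hb
    · rw [hfg1, mul_one]
    · have hp1 : f (vp 1 ⟨b, hb⟩) = vp n ⟨b, hb⟩ := by
        have a1 := hadj _ _ (adjE (u := vp 1 ⟨b, hb⟩) (E.pg 1 ⟨b, hb⟩) (by simp))
        have a2 := hadj _ _ (adjE (u := vp 1 ⟨b, hb⟩) (E.pc 1 ⟨b, hb⟩) (by simp))
        rw [hfg1] at a1
        rw [hfc (cin ⟨b, hb⟩)] at a2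
        exact cn_pg a1 a2
      have hh1 : f (vh 1 ⟨b, hb⟩) = vh n ⟨b, hb⟩ := by
        have a := hadj _ _ (adjE (u := vp 1 ⟨b, hb⟩) (E.ph 1 ⟨b, hb⟩) (by simp))
        rw [hp1] at a
        rcases adj_vp a.symm with h | h | h
        · exfalso; have := finj (h.trans hfg1.symm); cases this
        · exfalso; have := finj (h.trans (hfc (cin ⟨b, hb⟩)).symm); cases this
        · exact h
      have a := hadj _ _ (adjE (u := vh 1 ⟨b, hb⟩) (E.hg 1 ⟨b, hb⟩) (by simp))
      rw [hh1] at a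
      have hbs : (1 : G) * (⟨b, hb⟩ : SGr G).val = b := one_mul b
      rw [hbs] at a
      rcases adj_vh a.symm with h | h | h
      · exfalso; have := finj (h.trans hp1.symm); cases this
      · exact h
      · exfalso
        have h2 := finj (h.trans hfg1.symm)
        injection h2 with h3
        exact hb h3
  -- All `vp`'s.
  have hfp : ∀ (a : G) (s : SGr G), f (vp a s) = vp (n * a) s := by
    intro a s
    have a1 := hadj _ _ (adjE (u := vp a s) (E.pg a s) (by simp))
    have a2 := hadj _ _ (adjE (u := vp a s) (E.pc a s) (by simp))
    rw [hfg a] at a1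
    rw [hfc (cin s)] at a2
    exact cn_pg a1 a2
  -- All `vh`'s.
  have hfh : ∀ (a : G) (s : SGr G), f (vh a s) = vh (n * a) s := by
    intro a s
    have aa := hadj _ _ (adjE (u := vp a s) (E.ph a s) (by simp))
    rw [hfp a s] at aa
    rcases adj_vp aa.symm with h | h | h
    · exfalso; have := finj (h.trans (hfg a).symm); cases this
    · exfalso; have := finj (h.trans (hfc (cin s)).symm); cases this
    · exact h
  refine ⟨n, hnmem, ?_⟩
  funext v
  cases v with
  | vr0 => exact hfr0
  | vr1 => exact hfr1
  | vc x => exact hfc x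
  | vd t => exact hfd t
  | vg a => exact hfg a
  | vp a s => exact hfp a s
  | vh a s => exact hfh a s


theorem mem_bi {V : Type u} (Γ : SimpleGraph V) (f : Function.End V) :
    f ∈ biSubmonoid Γ ↔ Function.Bijective f ∧ ∀ a b, Γ.Adj a b → Γ.Adj (f a) (f b) :=
  Iff.rfl

theorem realize {M : Type u} [Monoid M] (G : Type u) [Group G] [Nontrivial G]
    (φ : M →* G) (hφ : Function.Injective φ) :
    Nonempty (biSubmonoid (Gam ((MonoidHom.mrange φ : Submonoid G) : Set G)) ≃* M) := by
  have hmem : ∀ m : M,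
      Phi (φ m) ∈ biSubmonoid (Gam ((MonoidHom.mrange φ : Submonoid G) : Set G)) := fun m =>
    (mem_bi _ _).2 ⟨Phi_bij _, fun a b hab =>
      Phi_adj (Nsub := MonoidHom.mrange φ) ⟨m, rfl⟩ hab⟩
  let ψ : M →* biSubmonoid (Gam ((MonoidHom.mrange φ : Submonoid G) : Set G)) :=
    { toFun := fun m => ⟨Phi (φ m), hmem m⟩
      map_one' := by
        apply Subtype.ext
        show Phi (φ 1) = _
        rw [map_one, Phi_one]
        rfl
      map_mul' := fun m m' => by
        apply Subtype.ext
        show Phi (φ (m * m')) = Phi (φ m) ∘ Phi (φ m')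
        rw [map_mul, Phi_comp] }
  have hψbij : Function.Bijective ψ := by
    constructor
    · intro m m' hmm'
      have h1 : Phi (φ m) = Phi (φ m') := congrArg Subtype.val hmm'
      have h2 := congrFun h1 (vg 1)
      simp only [Phi] at h2
      injection h2 with h3
      apply hφ
      rwa [mul_one, mul_one] at h3
    · rintro ⟨f, hf⟩
      obtain ⟨hbijf, hadjf⟩ := (mem_bi _ f).1 hf
      obtain ⟨n, hnm, rfl⟩ :=
        rigid (Nset := ((MonoidHom.mrange φ : Submonoid G) : Set G))
          (MonoidHom.mrange φ).one_mem hbijf hadjf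
      obtain ⟨m, hm⟩ := MonoidHom.mem_mrange.1 hnm
      refine ⟨m, Subtype.ext ?_⟩
      show Phi (φ m) = Phi n
      rw [hm]
  exact ⟨(MulEquiv.ofBijective ψ hψbij).symm⟩

end BiRealize

/-- Every group-embeddable monoid is isomorphic to the bimorphism monoid of some
simple graph. -/
theorem monoid_embeds_into_group_iso_bimorphism_monoid {M : Type u} [Monoid M]
    (h : ∃ (G : Type u) (_ : Group G) (φ : M →* G), Function.Injective φ) :
    ∃ (V : Type u) (Γ : SimpleGraph V), Nonempty (biSubmonoid Γ ≃* M) := by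
  obtain ⟨G₀, _instG, φ₀, hφ₀⟩ := h
  haveI : Nontrivial (G₀ × ULift.{u} (Multiplicative ℤ)) := by
    refine ⟨(1, ULift.up 1), (1, ULift.up (Multiplicative.ofAdd 1)), ?_⟩
    intro hEq
    have h2 := congrArg (fun x => Multiplicative.toAdd (x.2.down)) hEq
    simp at h2
  let φ : M →* G₀ × ULift.{u} (Multiplicative ℤ) :=
    (MonoidHom.inl G₀ (ULift.{u} (Multiplicative ℤ))).comp φ₀
  have hφ : Function.Injective φ := by
    intro a b hab
    apply hφ₀
    have h2 := congrArg Prod.fst hab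
    simpa [φ] using h2
  obtain ⟨e⟩ := BiRealize.realize (G₀ × ULift.{u} (Multiplicative ℤ)) φ hφ
  exact ⟨_, _, ⟨e⟩⟩
end

section
/- Let G be a simple graph that is connected, and let H be a simple graph that is acyclic (contains no cycles). Then every bijective graph homomorphism f : G → H preserves non-adjacency, and hence is a graph isomorphism from G onto H. -/
/-- A bijective graph homomorphism from a connected simple graph to an acyclic simple
graph reflects adjacency, and hence is a graph isomorphism. -/
theorem bijective_hom_connected_to_acyclic_is_iso {V W : Type*}
    {G : SimpleGraph V} {H : SimpleGraph W}
    (hG : G.Connected) (hH : H.IsAcyclic)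
    (f : V → W) (hb : Function.Bijective f)
    (hom : ∀ a b, G.Adj a b → H.Adj (f a) (f b)) :
    (∀ a b, H.Adj (f a) (f b) → G.Adj a b) ∧ ∃ e : G ≃g H, ⇑e = f := by
  have key : ∀ a b, H.Adj (f a) (f b) → G.Adj a b := by
    intro a b hadj
    let φ : G →g H := ⟨f, fun h => hom _ _ h⟩
    classical
    obtain ⟨w⟩ := hG.preconnected a b
    have hp := w.toPath
    have hQ : (SimpleGraph.Walk.cons hadj SimpleGraph.Walk.nil).IsPath := by
      simp [SimpleGraph.Walk.isPath_def, hadj.ne]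
    have := hH.path_unique (hp.map φ hb.1) ⟨_, hQ⟩
    have hlen : (hp : G.Walk a b).length = 1 := by
      have h1 : ((hp.map φ hb.1 : H.Path (f a) (f b)) : H.Walk (f a) (f b)).length = 1 := by
        rw [this]
        simp
      simpa [SimpleGraph.Path.map] using h1
    exact SimpleGraph.Walk.adj_of_length_eq_one hlen
  refine ⟨key, ⟨⟨Equiv.ofBijective f hb, ?_⟩, rfl⟩⟩
  intro a b
  exact ⟨key a b, hom a b⟩
end

section
/- If Γ is a tree (a connected acyclic simple graph), then every bimorphism of Γ is an automorphism; that is, Bi(Γ) = Aut(Γ) for any tree Γ. -/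
/-- Every bimorphism (bijective adjacency-preserving self-map) of a tree is an
automorphism; that is, `Bi(Γ) = Aut(Γ)` for any tree `Γ`. -/
theorem tree_bimorphism_is_automorphism {V : Type*} {Γ : SimpleGraph V} (h : Γ.IsTree)
    (f : V → V) (hb : Function.Bijective f)
    (hom : ∀ a b, Γ.Adj a b → Γ.Adj (f a) (f b)) :
    ∃ e : Γ ≃g Γ, ⇑e = f := by
  have key : ∀ a b, Γ.Adj (f a) (f b) → Γ.Adj a b := by
    intro a b hfab
    obtain ⟨p, hp, -⟩ := h.existsUnique_path a b
    let fhom : Γ →g Γ := ⟨f, fun {x y} hxy => hom x y hxy⟩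
    have hq : (p.map fhom).IsPath := p.map_isPath_of_injective hb.injective hp
    have huniq := h.existsUnique_path (f a) (f b)
    obtain ⟨q0, -, hu⟩ := huniq
    have h1 : p.map fhom = (SimpleGraph.Path.singleton hfab : SimpleGraph.Path Γ (f a) (f b)).1 := by
      rw [hu _ hq, hu _ (SimpleGraph.Path.singleton hfab).2]
    have hlen : p.length = 1 := by
      have := congrArg SimpleGraph.Walk.length h1
      simpa [SimpleGraph.Path.singleton] using this
    exact p.adj_of_length_eq_one hlen
  refine ⟨⟨Equiv.ofBijective f hb, ?_⟩, rfl⟩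
  intro a b
  exact ⟨key a b, hom a b⟩
end

section
/- Let G and H be trees (connected acyclic simple graphs). If G and H are bimorphism equivalent, i.e., there exist a bijective graph homomorphism from G to H and a bijective graph homomorphism from H to G, then G and H are isomorphic as graphs. -/
/-- Bimorphism-equivalent trees are isomorphic: if there are bijective graph
homomorphisms between the trees `G` and `H` in both directions, then `G ≅ H`. -/
theorem bimorphism_equivalent_trees_isomorphic {V W : Type*}
    {G : SimpleGraph V} {H : SimpleGraph W}
    (hG : G.IsTree) (hH : H.IsTree)
    (α : V → W) (hα : Function.Bijective α)
    (hαhom : ∀ a b, G.Adj a b → H.Adj (α a) (α b))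
    (β : W → V) (hβ : Function.Bijective β)
    (hβhom : ∀ a b, H.Adj a b → G.Adj (β a) (β b)) :
    Nonempty (G ≃g H) := by
  have key : ∀ a b, H.Adj (α a) (α b) → G.Adj a b := by
    intro a b hadj
    -- the edge s(α a, α b) is a bridge in H
    have hbridge : H.IsBridge s(α a, α b) :=
      (SimpleGraph.isAcyclic_iff_forall_adj_isBridge.mp hH.IsAcyclic) hadj
    have hnr := (SimpleGraph.isBridge_iff).mp hbridge
    -- take a walk from a to b in G and map it to H
    obtain ⟨w⟩ := hG.isConnected.preconnected a b
    let f : G →g H := ⟨α, fun h => hαhom _ _ h⟩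
    have hmem : s(α a, α b) ∈ (w.map f).edges := by
      by_contra hnot
      exact hnr (SimpleGraph.reachable_delete_edges_iff_exists_walk.mpr ⟨w.map f, hnot⟩)
    rw [SimpleGraph.Walk.edges_map, List.mem_map] at hmem
    obtain ⟨e, he, heq⟩ := hmem
    induction e using Sym2.inductionOn with
    | hf p q =>
      have hpq : G.Adj p q := w.adj_of_mem_edges he
      have : s(α p, α q) = s(α a, α b) := heq
      rw [Sym2.eq_iff] at this
      rcases this with ⟨h1, h2⟩ | ⟨h1, h2⟩
      · rwa [hα.injective h1, hα.injective h2] at hpq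
      · rw [hα.injective h1, hα.injective h2] at hpq
        exact hpq.symm
  exact ⟨⟨Equiv.ofBijective α hα, fun {a b} => ⟨key a b, hαhom a b⟩⟩⟩
end

section
/- For every cardinal κ there exists a family, indexed by a type of cardinality κ, of simple graphs such that each graph in the family is a tree with trivial automorphism group (its only automorphism is the identity), and distinct members of the family are pairwise non-isomorphic. -/
universe u v

open SimpleGraph

namespace RigidTreeAux

variable {W : Type u} [LinearOrder W]

/-- Vertices of the tree `S a`: strictly increasing lists (leaf label first)
with all entries `< a`.  The empty list is the root; the list `l ++ [c]`
is a vertex in the branch attached to the root through the child `[c]`. -/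
def Vtx (a : W) : Type u := {l : List W // l.Pairwise (· < ·) ∧ ∀ x ∈ l, x < a}

/-- The tree on `Vtx a`: two vertices are adjacent iff one is the tail of the other. -/
def S (a : W) : SimpleGraph (Vtx a) where
  Adj x y := (x.1 = y.1.tail ∧ y.1 ≠ []) ∨ (y.1 = x.1.tail ∧ x.1 ≠ [])
  symm := ⟨fun x y h => h.symm⟩
  loopless := by
    refine ⟨?_⟩
    rintro x (⟨h1, h2⟩ | ⟨h1, h2⟩) <;>
    · have hl := congrArg List.length h1
      rw [List.length_tail] at hl
      have : x.1.length ≠ 0 := fun h0 => h2 (List.length_eq_zero_iff.mp h0)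
      omega

def root (a : W) : Vtx a := ⟨[], by simp⟩

lemma valid_tail {a : W} {l : List W} (h : l.Pairwise (· < ·) ∧ ∀ x ∈ l, x < a) :
    l.tail.Pairwise (· < ·) ∧ ∀ x ∈ l.tail, x < a :=
  ⟨h.1.sublist (List.tail_sublist l), fun x hx => h.2 x (List.mem_of_mem_tail hx)⟩

def parent {a : W} (x : Vtx a) : Vtx a := ⟨x.1.tail, valid_tail x.2⟩

lemma adj_class {a : W} {x y : Vtx a} (h : (S a).Adj x y) :
    (x = parent y ∧ y.1.length = x.1.length + 1) ∨
    (y = parent x ∧ x.1.length = y.1.length + 1) := by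
  rcases h with ⟨h1, h2⟩ | ⟨h1, h2⟩
  · left
    have hpos : 0 < y.1.length := List.length_pos_iff.mpr h2
    have hl := congrArg List.length h1
    rw [List.length_tail] at hl
    exact ⟨Subtype.ext h1, by omega⟩
  · right
    have hpos : 0 < x.1.length := List.length_pos_iff.mpr h2
    have hl := congrArg List.length h1
    rw [List.length_tail] at hl
    exact ⟨Subtype.ext h1, by omega⟩

/-! ### Acyclicity -/

lemma first_edge_mem {X : Type v} {G : SimpleGraph X} {x y : X} (w : G.Walk x y)
    (hw : ¬w.Nil) : s(x, w.getVert 1) ∈ w.edges := by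
  cases w with
  | nil => simp at hw
  | cons h r =>
      rw [Walk.getVert_cons_succ, Walk.getVert_zero]
      simp [Walk.edges_cons]

theorem isAcyclic_of_parent {X : Type v} {G : SimpleGraph X} (hgt : X → ℕ) (p : X → X)
    (hadj : ∀ x y, G.Adj x y → (x = p y ∧ hgt y = hgt x + 1) ∨ (y = p x ∧ hgt x = hgt y + 1)) :
    G.IsAcyclic := by
  intro v c hc
  classical
  obtain ⟨u, hu_mem, hu_max⟩ : ∃ u ∈ c.support, ∀ z ∈ c.support, hgt z ≤ hgt u := by
    obtain ⟨b, hb, hbm⟩ := c.support.toFinset.exists_max_image hgt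
      ⟨v, List.mem_toFinset.mpr c.start_mem_support⟩
    exact ⟨b, List.mem_toFinset.mp hb, fun z hz => hbm z (List.mem_toFinset.mpr hz)⟩
  have hc' : (c.rotate u hu_mem).IsCycle := hc.rotate hu_mem
  have hsup : ∀ z ∈ (c.rotate u hu_mem).support, hgt z ≤ hgt u := by
    intro z hz
    rw [Walk.support_eq_cons] at hz
    rcases List.mem_cons.mp hz with rfl | hz
    · exact le_refl _
    · exact hu_max z (List.mem_of_mem_tail
        ((c.support_rotate u hu_mem).mem_iff.mp hz))
  have hlen : 3 ≤ (c.rotate u hu_mem).length := hc'.three_le_length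
  revert hc' hsup hlen
  cases hrot : c.rotate u hu_mem with
  | nil => intro hc' _ _; exact hc'.not_of_nil
  | @cons _ a _ hua q =>
    intro hc' hsup hlen
    rw [Walk.cons_isCycle_iff] at hc'
    obtain ⟨hq, he⟩ := hc'
    have hqlen : 1 ≤ q.length := by
      simp only [Walk.length_cons] at hlen; omega
    have hqrevnil : ¬q.reverse.Nil := by
      rw [Walk.nil_iff_length_eq, Walk.length_reverse]
      omega
    set b := q.reverse.getVert 1 with hbdef
    have hub : G.Adj u b := Walk.adj_snd hqrevnil
    have hb_mem : b ∈ q.support := by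
      rw [Walk.mem_support_iff_exists_getVert]
      refine ⟨q.length - 1, ?_, by omega⟩
      rw [hbdef, Walk.getVert_reverse]
    have hbu : hgt b ≤ hgt u := by
      apply hsup; rw [Walk.support_cons]; exact List.mem_cons_of_mem _ hb_mem
    have hau : hgt a ≤ hgt u := by
      apply hsup; rw [Walk.support_cons]; exact List.mem_cons_of_mem _ q.start_mem_support
    have hA : a = p u := by
      rcases hadj u a hua with ⟨_, h2⟩ | ⟨h1, _⟩
      · omega
      · exact h1
    have hB : b = p u := by
      rcases hadj u b hub with ⟨_, h2⟩ | ⟨h1, _⟩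
      · omega
      · exact h1
    have hedge : s(u, b) ∈ q.edges := by
      have := first_edge_mem q.reverse hqrevnil
      rw [Walk.edges_reverse, List.mem_reverse] at this
      exact this
    rw [hB, ← hA] at hedge
    exact he hedge

/-! ### Connectivity -/

def walkToRoot (a : W) : (l : List W) → (hl : l.Pairwise (· < ·) ∧ ∀ x ∈ l, x < a) →
    (S a).Walk ⟨l, hl⟩ (root a)
  | [], _ => Walk.nil
  | c :: t, hl =>
      Walk.cons (Or.inr ⟨rfl, List.cons_ne_nil c t⟩ :
        (S a).Adj ⟨c :: t, hl⟩ ⟨t, valid_tail hl⟩) (walkToRoot a t (valid_tail hl))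

lemma walkToRoot_length (a : W) : ∀ (l : List W) (hl : _),
    (walkToRoot a l hl).length = l.length
  | [], _ => rfl
  | c :: t, hl => by
      show (walkToRoot a t (valid_tail hl)).length + 1 = (c :: t).length
      rw [walkToRoot_length a t (valid_tail hl),
        List.length_cons]

lemma S_connected (a : W) : (S a).Connected := by
  rw [connected_iff]
  refine ⟨fun x y => ?_, ⟨root a⟩⟩
  exact ((walkToRoot a x.1 x.2).reachable).trans ((walkToRoot a y.1 y.2).reachable).symm

lemma S_isTree (a : W) : (S a).IsTree :=
  ⟨S_connected a, isAcyclic_of_parent (fun x : Vtx a => x.1.length) parent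
    (fun _ _ h => adj_class h)⟩

/-! ### Distances -/

lemma length_le_of_walk {a : W} {x y : Vtx a} (w : (S a).Walk x y) :
    y.1.length ≤ x.1.length + w.length := by
  induction w with
  | nil => simp
  | cons h w ih =>
      rcases adj_class h with ⟨_, h2⟩ | ⟨_, h2⟩ <;>
        · rw [Walk.length_cons]; omega

lemma dist_root_eq {a : W} (x : Vtx a) : (S a).dist (root a) x = x.1.length := by
  refine le_antisymm ?_ ?_
  · have h := SimpleGraph.dist_le (walkToRoot a x.1 x.2).reverse
    exact h.trans (le_of_eq ((Walk.length_reverse _).trans (walkToRoot_length a x.1 x.2)))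
  · obtain ⟨w, hw⟩ := ((S_connected a).preconnected (root a) x).exists_walk_length_eq_dist
    have := length_le_of_walk w
    simp only [root, List.length_nil] at this
    exact this.trans (by rw [Nat.zero_add]; exact hw.le)

lemma dist_le_of_iso {α β : Type v} {G : SimpleGraph α} {H : SimpleGraph β} (f : G ≃g H)
    {x y : α} (h : G.Reachable x y) : H.dist (f x) (f y) ≤ G.dist x y := by
  obtain ⟨w, hw⟩ := h.exists_walk_length_eq_dist
  have := SimpleGraph.dist_le (w.map f.toHom)
  rwa [Walk.length_map, hw] at this

lemma dist_iso_eq {α β : Type v} {G : SimpleGraph α} {H : SimpleGraph β} (f : G ≃g H)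
    {x y : α} (h : G.Reachable x y) : H.dist (f x) (f y) = G.dist x y := by
  refine le_antisymm (dist_le_of_iso f h) ?_
  have h2 : H.Reachable (f x) (f y) := h.map f.toHom
  have := dist_le_of_iso f.symm h2
  simpa using this

lemma iso_length {a b : W} (f : S a ≃g S b) (hf : f (root a) = root b) (x : Vtx a) :
    (f x).1.length = x.1.length := by
  have h1 := dist_iso_eq f ((S_connected a).preconnected (root a) x)
  rw [hf, dist_root_eq, dist_root_eq] at h1
  exact h1

/-! ### Children and descendants -/

def Child {a : W} (x y : Vtx a) : Prop :=
  (S a).Adj x y ∧ y.1.length = x.1.length + 1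

lemma child_iff {a : W} {x y : Vtx a} :
    Child x y ↔ x.1 = y.1.tail ∧ y.1 ≠ [] := by
  constructor
  · rintro ⟨hadj, hlen⟩
    rcases hadj with h | ⟨h1, h2⟩
    · exact h
    · have hl := congrArg List.length h1
      rw [List.length_tail] at hl
      omega
  · rintro ⟨h1, h2⟩
    refine ⟨Or.inl ⟨h1, h2⟩, ?_⟩
    have hpos : 0 < y.1.length := List.length_pos_iff.mpr h2
    have hl := congrArg List.length h1
    rw [List.length_tail] at hl
    omega

lemma child_map {a b : W} (f : S a ≃g S b) (hf : f (root a) = root b) {x y : Vtx a}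
    (h : Child x y) : Child (f x) (f y) :=
  ⟨f.map_rel_iff.mpr h.1, by rw [iso_length f hf, iso_length f hf]; exact h.2⟩

lemma desc_of_suffix {a : W} : ∀ (n : ℕ) (x y : Vtx a), y.1.length ≤ n → x.1 <:+ y.1 →
    Relation.ReflTransGen Child x y := by
  intro n
  induction n with
  | zero =>
      intro x y hy hs
      rw [Nat.le_zero, List.length_eq_zero_iff] at hy
      rw [hy] at hs
      have := List.suffix_nil.mp hs
      have hxy : x = y := Subtype.ext (by rw [this, hy])
      exact hxy ▸ Relation.ReflTransGen.refl
  | succ n ih =>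
      intro x y hy hs
      by_cases hxy : x.1 = y.1
      · exact (Subtype.ext hxy : x = y) ▸ Relation.ReflTransGen.refl
      · have hyne : y.1 ≠ [] := by
          intro h0
          rw [h0] at hs
          exact hxy (by rw [List.suffix_nil.mp hs, h0])
        have hsuf' : x.1 <:+ y.1.tail := by
          obtain ⟨d, t, hdt⟩ := List.exists_cons_of_ne_nil hyne
          rw [hdt] at hs ⊢
          rcases List.suffix_cons_iff.mp hs with h | h
          · exact absurd (hdt ▸ h) hxy
          · exact h
        have htl : (parent y).1.length ≤ n := by
          have := List.length_pos_iff.mpr hyne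
          simp only [parent, List.length_tail]
          omega
        refine Relation.ReflTransGen.tail (ih x (parent y) htl hsuf') ?_
        exact child_iff.mpr ⟨rfl, hyne⟩

lemma suffix_of_desc {a : W} {x y : Vtx a} (h : Relation.ReflTransGen Child x y) :
    x.1 <:+ y.1 := by
  induction h with
  | refl => exact List.suffix_refl _
  | tail _ hstep ih =>
      rcases child_iff.mp hstep with ⟨h1, _⟩
      exact ih.trans (h1 ▸ List.tail_suffix _)

lemma desc_iff_suffix {a : W} {x y : Vtx a} :
    Relation.ReflTransGen Child x y ↔ x.1 <:+ y.1 :=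
  ⟨suffix_of_desc, fun h => desc_of_suffix y.1.length x y le_rfl h⟩

lemma suffix_map {a b : W} (f : S a ≃g S b) (hf : f (root a) = root b) {x y : Vtx a}
    (h : x.1 <:+ y.1) : (f x).1 <:+ (f y).1 := by
  rw [← desc_iff_suffix] at h ⊢
  induction h with
  | refl => exact Relation.ReflTransGen.refl
  | tail _ hstep ih => exact Relation.ReflTransGen.tail ih (child_map f hf hstep)

/-! ### The append embedding of subtrees -/

def app (a : W) {c : W} (hc : c < a) (u : Vtx c) : Vtx a :=
  ⟨u.1 ++ [c], by
    constructor
    · rw [List.pairwise_append]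
      refine ⟨u.2.1, List.pairwise_singleton _ _, fun x hx y hy => ?_⟩
      rw [List.mem_singleton] at hy
      exact hy ▸ u.2.2 x hx
    · intro x hx
      rcases List.mem_append.mp hx with h | h
      · exact lt_trans (u.2.2 x h) hc
      · rw [List.mem_singleton] at h; exact h ▸ hc⟩

lemma app_inj {a c : W} (hc : c < a) : Function.Injective (app a hc) := by
  intro u v h
  have : u.1 ++ [c] = v.1 ++ [c] := congrArg Subtype.val h
  exact Subtype.ext (List.append_cancel_right this)

lemma app_adj {a c : W} (hc : c < a) (u u' : Vtx c) :
    (S a).Adj (app a hc u) (app a hc u') ↔ (S c).Adj u u' := by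
  have key : ∀ v v' : Vtx c,
      (v.1 ++ [c] = (v'.1 ++ [c]).tail ∧ v'.1 ++ [c] ≠ []) ↔ (v.1 = v'.1.tail ∧ v'.1 ≠ []) := by
    intro v v'
    constructor
    · rintro ⟨h1, -⟩
      cases hv' : v'.1 with
      | nil => rw [hv'] at h1; simp at h1
      | cons d t =>
          rw [hv', List.cons_append, List.tail_cons] at h1
          have hvt := List.append_cancel_right h1
          constructor <;> simp [hv', hvt]
    · rintro ⟨h1, h2⟩
      obtain ⟨d, t, hdt⟩ := List.exists_cons_of_ne_nil h2
      refine ⟨?_, by simp⟩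
      rw [hdt, List.cons_append, List.tail_cons, h1, hdt, List.tail_cons]
  constructor
  · rintro (h | h)
    · exact Or.inl ((key u u').mp h)
    · exact Or.inr ((key u' u).mp h)
  · rintro (h | h)
    · exact Or.inl ((key u u').mpr h)
    · exact Or.inr ((key u' u).mpr h)

lemma exists_app_of_suffix {a c : W} (hc : c < a) {x : Vtx a} (h : [c] <:+ x.1) :
    ∃ u : Vtx c, x = app a hc u := by
  obtain ⟨t, ht⟩ := h
  have hpw := x.2.1
  rw [← ht, List.pairwise_append] at hpw
  refine ⟨⟨t, hpw.1, fun z hz => hpw.2.2 z hz c (List.mem_singleton_self c)⟩, ?_⟩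
  exact Subtype.ext ht.symm

def singl (a : W) {c : W} (hc : c < a) : Vtx a := app a hc (root c)

/-! ### Subtree isomorphisms -/

lemma subtree {a b : W} (f : S a ≃g S b) (hf : f (root a) = root b) {c : W} (hc : c < a) :
    ∃ (c' : W) (hc' : c' < b) (φ : S c ≃g S c'),
      φ (root c) = root c' ∧ ∀ u : Vtx c, f (app a hc u) = app b hc' (φ u) := by
  have hlen1 : (f (singl a hc)).1.length = 1 := by
    rw [iso_length f hf]; rfl
  obtain ⟨c', hc'val⟩ := List.length_eq_one_iff.mp hlen1
  have hc' : c' < b := (f (singl a hc)).2.2 c' (by rw [hc'val]; exact List.mem_singleton_self c')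
  have hfs : f.symm (root b) = root a := by
    rw [← hf, RelIso.symm_apply_apply]
  have hsingl : f (singl a hc) = singl b hc' := Subtype.ext (by rw [hc'val]; rfl)
  have hsingl' : f.symm (singl b hc') = singl a hc := by
    rw [← hsingl, RelIso.symm_apply_apply]
  have fwd : ∀ u : Vtx c, ∃ v : Vtx c', f (app a hc u) = app b hc' v := by
    intro u
    have h1 : (singl a hc).1 <:+ (app a hc u).1 := List.suffix_append _ _
    have h2 := suffix_map f hf h1
    rw [hsingl] at h2
    exact exists_app_of_suffix hc' h2
  have bwd : ∀ v : Vtx c', ∃ u : Vtx c, f.symm (app b hc' v) = app a hc u := by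
    intro v
    have h1 : (singl b hc').1 <:+ (app b hc' v).1 := List.suffix_append _ _
    have h2 := suffix_map f.symm hfs h1
    rw [hsingl'] at h2
    exact exists_app_of_suffix hc h2
  choose φ0 hφ0 using fwd
  choose ψ0 hψ0 using bwd
  have li : ∀ u, ψ0 (φ0 u) = u := by
    intro u
    apply app_inj hc
    rw [← hψ0 (φ0 u), ← hφ0 u, RelIso.symm_apply_apply]
  have ri : ∀ v, φ0 (ψ0 v) = v := by
    intro v
    apply app_inj hc'
    rw [← hφ0 (ψ0 v), ← hψ0 v, RelIso.apply_symm_apply]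
  refine ⟨c', hc', ⟨⟨φ0, ψ0, li, ri⟩, ?_⟩, ?_, fun u => hφ0 u⟩
  · intro x y
    show (S c').Adj (φ0 x) (φ0 y) ↔ (S c).Adj x y
    rw [← app_adj hc' (φ0 x) (φ0 y), ← hφ0, ← hφ0, SimpleGraph.Iso.map_adj_iff,
      app_adj hc]
  · show φ0 (root c) = root c'
    apply app_inj hc'
    rw [← hφ0 (root c)]
    exact hsingl

section WellFounded

variable [WellFoundedLT W]

theorem eq_of_pointed_iso : ∀ (a b : W) (f : S a ≃g S b), f (root a) = root b → a = b := by
  intro a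
  induction a using WellFoundedLT.induction with
  | ind a IH =>
    intro b f hf
    have h1 : ∀ c, c < a → c < b := by
      intro c hcA
      obtain ⟨c', hc', φ, hφ, -⟩ := subtree f hf hcA
      exact IH c hcA c' φ hφ ▸ hc'
    have hfs : f.symm (root b) = root a := by
      rw [← hf, RelIso.symm_apply_apply]
    have h2 : ∀ c, c < b → c < a := by
      intro c hcB
      obtain ⟨c'', hc'', ψ, hψ, -⟩ := subtree f.symm hfs hcB
      have hψs : ψ.symm (root c'') = root c := by
        rw [← hψ, RelIso.symm_apply_apply]
      exact IH c'' hc'' c ψ.symm hψs ▸ hc''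
    rcases lt_trichotomy a b with h | h | h
    · exact absurd (h2 a h) (lt_irrefl a)
    · exact h
    · exact absurd (h1 b h) (lt_irrefl b)

theorem pointed_auto_fixed : ∀ (a : W) (f : S a ≃g S a), f (root a) = root a →
    ∀ x : Vtx a, f x = x := by
  intro a
  induction a using WellFoundedLT.induction with
  | ind a IH =>
    intro f hf x
    by_cases hx : x.1 = []
    · have hroot : x = root a := Subtype.ext hx
      rw [hroot]; exact hf
    · have hc : x.1.getLast hx < a := x.2.2 _ (List.getLast_mem hx)
      have hsuf : [x.1.getLast hx] <:+ x.1 :=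
        ⟨x.1.dropLast, List.dropLast_append_getLast hx⟩
      obtain ⟨u, hu⟩ := exists_app_of_suffix hc hsuf
      obtain ⟨c', hc', φ, hφ, happ⟩ := subtree f hf hc
      obtain rfl : x.1.getLast hx = c' := eq_of_pointed_iso _ _ φ hφ
      rw [hu, happ u, IH _ hc φ hφ u]

end WellFounded

/-! ### Neighbor set cardinalities -/

def rootNb (a : W) (c : {c : W // c < a}) : ((S a).neighborSet (root a)) :=
  ⟨⟨[c.1], List.pairwise_singleton _ _, fun x hx => by
      rw [List.mem_singleton] at hx; exact hx ▸ c.2⟩,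
    Or.inl ⟨rfl, List.cons_ne_nil _ _⟩⟩

lemma mk_nb_root (a : W) :
    Cardinal.mk ((S a).neighborSet (root a)) = Cardinal.mk {c : W // c < a} := by
  have hbij : Function.Bijective (rootNb a) := by
    constructor
    · intro c c' h
      have : [c.1] = [c'.1] :=
        congrArg (fun z : ((S a).neighborSet (root a)) => (z.1.1 : List W)) h
      exact Subtype.ext (List.singleton_injective this)
    · rintro ⟨y, hy⟩
      rcases hy with ⟨h1, h2⟩ | ⟨h1, h2⟩
      · obtain ⟨d, t, hyv⟩ := List.exists_cons_of_ne_nil h2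
        have ht : t = [] := by
          have h1' := h1
          rw [hyv] at h1'
          exact h1'.symm
        refine ⟨⟨d, y.2.2 d (by rw [hyv]; exact List.mem_cons_self)⟩, ?_⟩
        apply Subtype.ext
        apply Subtype.ext
        show [d] = y.1
        rw [hyv, ht]
      · exact absurd rfl h2
  exact (Cardinal.mk_congr (Equiv.ofBijective (rootNb a) hbij)).symm

lemma child_val {a : W} {x z : Vtx a} (hadj : (S a).Adj x z) (hne : z.1 ≠ x.1.tail) :
    ∃ (hz : z.1 ≠ []), z.1 = z.1.head hz :: x.1 := by
  rcases hadj with ⟨h1, h2⟩ | ⟨h1, h2⟩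
  · refine ⟨h2, ?_⟩
    rw [h1]
    exact (List.cons_head_tail _).symm
  · exact absurd h1 hne

lemma child_head_lt {a : W} {x z : Vtx a} (hz : z.1 ≠ []) (hx : x.1 ≠ [])
    (heq : z.1 = z.1.head hz :: x.1) : z.1.head hz < x.1.head hx := by
  have hpw := z.2.1
  rw [heq, List.pairwise_cons] at hpw
  exact hpw.1 _ (List.head_mem hx)

lemma mk_nb_nonroot {a : W} {x : Vtx a} (hx : x.1 ≠ []) :
    Cardinal.mk ((S a).neighborSet x) ≤ Cardinal.mk {d : W // d < x.1.head hx} + 1 := by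
  classical
  rw [← Cardinal.mk_option]
  refine Cardinal.mk_le_of_injective (f := fun y =>
    if h : (y : Vtx a).1 = x.1.tail then (none : Option {d : W // d < x.1.head hx})
    else some ⟨(y : Vtx a).1.head (child_val y.2 h).fst,
      child_head_lt _ hx (child_val y.2 h).snd⟩) ?_
  intro y y' h
  dsimp only at h
  split_ifs at h with h1 h2 h2
  case pos => exact Subtype.ext (Subtype.ext (h1.trans h2.symm))
  all_goals simp at h
  have hv := (child_val y.2 h1).snd
  have hv' := (child_val y'.2 h2).snd
  exact Subtype.ext (Subtype.ext (hv.trans (by rw [h]; exact hv'.symm)))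

/-! ### Rigidity and non-isomorphism from cardinality hypotheses -/

section Rigid

variable [WellFoundedLT W]

lemma nb_le {a : W}
    (H : ∀ c, c < a → Cardinal.mk {d : W // d < c} + 1 < Cardinal.mk {c' : W // c' < a})
    (x : Vtx a) :
    Cardinal.mk ((S a).neighborSet x) ≤ Cardinal.mk {c' : W // c' < a} := by
  by_cases hx : x.1 = []
  · have hroot : x = root a := Subtype.ext hx
    rw [hroot, mk_nb_root]
  · exact le_of_lt (lt_of_le_of_lt (mk_nb_nonroot hx) (H _ (x.2.2 _ (List.head_mem hx))))

lemma root_of_mk_eq {a : W}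
    (H : ∀ c, c < a → Cardinal.mk {d : W // d < c} + 1 < Cardinal.mk {c' : W // c' < a})
    {x : Vtx a} (hmk : Cardinal.mk ((S a).neighborSet x) = Cardinal.mk {c' : W // c' < a}) :
    x = root a := by
  by_contra hne
  have hx : x.1 ≠ [] := fun h => hne (Subtype.ext h)
  have := lt_of_le_of_lt (mk_nb_nonroot hx) (H _ (x.2.2 _ (List.head_mem hx)))
  exact absurd hmk (ne_of_lt this)

lemma auto_id {a : W}
    (H : ∀ c, c < a → Cardinal.mk {d : W // d < c} + 1 < Cardinal.mk {c' : W // c' < a})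
    (e : S a ≃g S a) (x : Vtx a) : e x = x := by
  have h0 : Cardinal.mk ((S a).neighborSet (e (root a))) = Cardinal.mk {c' : W // c' < a} := by
    rw [← mk_nb_root a]
    exact (Cardinal.mk_congr (e.mapNeighborSet (root a))).symm
  exact pointed_auto_fixed a e (root_of_mk_eq H h0) x

lemma noniso {a b : W}
    (Ha : ∀ c, c < a → Cardinal.mk {d : W // d < c} + 1 < Cardinal.mk {c' : W // c' < a})
    (Hb : ∀ c, c < b → Cardinal.mk {d : W // d < c} + 1 < Cardinal.mk {c' : W // c' < b})
    (hne : Cardinal.mk {c' : W // c' < a} ≠ Cardinal.mk {c' : W // c' < b}) :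
    IsEmpty (S a ≃g S b) := by
  constructor
  intro e
  apply hne
  apply le_antisymm
  · rw [← mk_nb_root a, Cardinal.mk_congr (e.mapNeighborSet (root a))]
    exact nb_le Hb _
  · rw [← mk_nb_root b, Cardinal.mk_congr (e.symm.mapNeighborSet (root b))]
    exact nb_le Ha _

end Rigid

end RigidTreeAux

open RigidTreeAux in
/-- For every cardinal `κ` there is a family of `κ` many pairwise non-isomorphic
rigid trees: each member is a tree whose only automorphism is the identity, and
distinct members are non-isomorphic. -/
theorem exists_family_of_rigid_pairwise_nonisomorphic_trees (κ : Cardinal.{u}) :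
    ∃ (ι : Type u) (V : ι → Type u) (Γ : ∀ i, SimpleGraph (V i)),
      Cardinal.mk ι = κ ∧
      (∀ i, (Γ i).IsTree) ∧
      (∀ i (e : Γ i ≃g Γ i) (v : V i), e v = v) ∧
      (∀ i j, i ≠ j → IsEmpty (Γ i ≃g Γ j)) := by
  classical
  set lam : κ.out → Cardinal.{u} := fun i => Cardinal.aleph ((embeddingToCardinal i).ord)
    with hlam
  have laminf : ∀ i, Cardinal.aleph0 ≤ lam i := fun i => Cardinal.aleph0_le_aleph _
  have laminj : ∀ i j, lam i = lam j → i = j := by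
    intro i j h
    by_contra hne
    have h1 : embeddingToCardinal i ≠ embeddingToCardinal j :=
      fun hh => hne (embeddingToCardinal.injective hh)
    rcases h1.lt_or_gt with hlt | hlt
    · exact absurd h (ne_of_lt (Cardinal.aleph_lt_aleph.mpr (Cardinal.ord_lt_ord.mpr hlt)))
    · exact absurd h (ne_of_gt (Cardinal.aleph_lt_aleph.mpr (Cardinal.ord_lt_ord.mpr hlt)))
  set Λ : Ordinal.{u} := Ordinal.lsub fun i => (lam i).ord with hΛdef
  have hΛ : ∀ i, (lam i).ord < Λ := fun i => Ordinal.lt_lsub _ i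
  letI : IsWellOrder Λ.ToType (· < ·) := isWellOrder_lt
  set w : κ.out → Λ.ToType := fun i => Ordinal.ToType.mk (o := Λ) ⟨(lam i).ord, hΛ i⟩ with hw
  have hty : ∀ i, Ordinal.typein (α := Λ.ToType) (· < ·) (w i) = (lam i).ord := by
    intro i
    have h1 := (Ordinal.ToType.mk (o := Λ)).symm_apply_apply ⟨(lam i).ord, hΛ i⟩
    have h2 := congrArg Subtype.val h1
    simpa [Ordinal.ToType.mk, hw] using h2
  have hIio : ∀ (x : Λ.ToType), Cardinal.mk {c : Λ.ToType // c < x}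
      = (Ordinal.typein (α := Λ.ToType) (· < ·) x).card := fun x => Ordinal.card_typein x
  have hIiow : ∀ i, Cardinal.mk {c : Λ.ToType // c < w i} = lam i := by
    intro i
    rw [hIio, hty, Cardinal.card_ord]
  have hH : ∀ i, ∀ c : Λ.ToType, c < w i →
      Cardinal.mk {d : Λ.ToType // d < c} + 1 < Cardinal.mk {c' : Λ.ToType // c' < w i} := by
    intro i c hc
    rw [hIiow]
    have h1 : Ordinal.typein (α := Λ.ToType) (· < ·) c < (lam i).ord := by
      rw [← hty i]
      exact (Ordinal.typein_lt_typein _).mpr hc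
    have h2 : (Ordinal.typein (α := Λ.ToType) (· < ·) c).card < lam i := Cardinal.lt_ord.mp h1
    rw [hIio]
    exact Cardinal.add_lt_of_lt (laminf i) h2
      (lt_of_lt_of_le Cardinal.one_lt_aleph0 (laminf i))
  refine ⟨κ.out, fun i => Vtx (w i), fun i => S (w i), Cardinal.mk_out κ,
    fun i => S_isTree (w i), fun i e v => auto_id (hH i) e v, fun i j hij => ?_⟩
  refine noniso (hH i) (hH j) ?_
  rw [hIiow i, hIiow j]
  exact fun h => hij (laminj i j h)
end

section
/- Every graph in de Groot's family of rigid trees is bimorphism-rigid: if Γ is a tree whose automorphism group is trivial, then the only bimorphism of Γ is the identity map, i.e., Bi(Γ) is the trivial monoid. -/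
/-- A rigid tree is bimorphism-rigid: if `Γ` is a tree whose only automorphism is the
identity, then its only bimorphism (bijective adjacency-preserving self-map) is the
identity map. -/
theorem rigid_tree_is_bimorphism_rigid {V : Type*} {Γ : SimpleGraph V} (ht : Γ.IsTree)
    (hrigid : ∀ (e : Γ ≃g Γ) (v : V), e v = v)
    (f : V → V) (hb : Function.Bijective f)
    (hom : ∀ a b, Γ.Adj a b → Γ.Adj (f a) (f b)) :
    f = id := by
  classical
  have hinj := hb.injective
  let φ : Γ →g Γ := ⟨f, fun {a b} h => hom a b h⟩
  have hu := SimpleGraph.isAcyclic_iff_path_unique.mp ht.IsAcyclic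
  have key : ∀ a b, Γ.Adj (f a) (f b) → Γ.Adj a b := by
    intro a b h
    obtain ⟨w⟩ := ht.isConnected a b
    have p := w.toPath
    have heq := hu (p.map φ hinj) (SimpleGraph.Path.singleton h)
    have hlen : (p.map φ hinj).1.length = 1 := by
      rw [heq]; simp [SimpleGraph.Path.singleton]
    have hlen' : p.1.length = 1 := by
      simpa [SimpleGraph.Path.map] using hlen
    exact p.1.adj_of_length_eq_one hlen'
  let e : Γ ≃g Γ :=
    { toEquiv := Equiv.ofBijective f hb
      map_rel_iff' := fun {a b} => ⟨key a b, hom a b⟩ }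
  funext v
  exact (hrigid e v : f v = v)
end

section
/- Let Γ be the simple graph with vertex set ℤ × {0,1} and adjacency: (a,0) ∼ (b,1) iff a = b; (a,0) ∼ (b,0) iff |a − b| = 1; and (a,1) ∼ (b,1) iff a ≤ 0 and |a − b| = 1. Then Γ is rigid: its only automorphism is the identity map. -/
/-- The graph on `ℤ × {0,1}` (with `false` playing the role of `0` and `true` of `1`):
`(a,0) ∼ (b,1)` iff `a = b`; `(a,0) ∼ (b,0)` iff `|a - b| = 1`; and `(a,1) ∼ (b,1)`
iff both coordinates are `≤ 0` and `|a - b| = 1`. -/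
def GammaZ : SimpleGraph (ℤ × Bool) where
  Adj v w :=
    (v.2 = false ∧ w.2 = false ∧ |v.1 - w.1| = 1) ∨
    (v.2 ≠ w.2 ∧ v.1 = w.1) ∨
    (v.2 = true ∧ w.2 = true ∧ v.1 ≤ 0 ∧ w.1 ≤ 0 ∧ |v.1 - w.1| = 1)
  symm := by
    constructor
    rintro ⟨a, i⟩ ⟨b, j⟩ (⟨hi, hj, h⟩ | ⟨hij, h⟩ | ⟨hi, hj, ha, hb, h⟩)
    · exact Or.inl ⟨hj, hi, by rw [abs_sub_comm]; exact h⟩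
    · exact Or.inr (Or.inl ⟨Ne.symm hij, h.symm⟩)
    · exact Or.inr (Or.inr ⟨hj, hi, hb, ha, by rw [abs_sub_comm]; exact h⟩)
  loopless := by
    constructor
    rintro ⟨a, i⟩ (⟨_, _, h⟩ | ⟨hij, _⟩ | ⟨_, _, _, _, h⟩)
    · simp at h
    · exact hij rfl
    · simp at h

lemma adj_def (v w : ℤ × Bool) : GammaZ.Adj v w ↔
    ((v.2 = false ∧ w.2 = false ∧ |v.1 - w.1| = 1) ∨
    (v.2 ≠ w.2 ∧ v.1 = w.1) ∨
    (v.2 = true ∧ w.2 = true ∧ v.1 ≤ 0 ∧ w.1 ≤ 0 ∧ |v.1 - w.1| = 1)) := Iff.rfl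

lemma abs_one_iff (a b : ℤ) : |a - b| = 1 ↔ b = a - 1 ∨ b = a + 1 := by
  rw [abs_eq (by norm_num : (0:ℤ) ≤ 1)]; omega

lemma abs_one_iff' (b : ℤ) : |b| = 1 ↔ b = 1 ∨ b = -1 := by
  rw [abs_eq (by norm_num : (0:ℤ) ≤ 1)]

lemma adjF (a : ℤ) (w : ℤ × Bool) :
    GammaZ.Adj (a, false) w ↔ w = (a-1, false) ∨ w = (a+1, false) ∨ w = (a, true) := by
  obtain ⟨b, j⟩ := w
  cases j <;> (simp [adj_def, abs_one_iff, abs_one_iff', Prod.ext_iff]; omega)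

lemma adjT0 (w : ℤ × Bool) :
    GammaZ.Adj ((0:ℤ), true) w ↔ w = ((0:ℤ), false) ∨ w = (-1, true) := by
  obtain ⟨b, j⟩ := w
  cases j <;> (simp [adj_def, abs_one_iff, abs_one_iff', Prod.ext_iff]; omega)

lemma adjTneg (a : ℤ) (ha : a ≤ -1) (w : ℤ × Bool) :
    GammaZ.Adj (a, true) w ↔ w = (a, false) ∨ w = (a-1, true) ∨ w = (a+1, true) := by
  obtain ⟨b, j⟩ := w
  cases j <;> (simp [adj_def, abs_one_iff, abs_one_iff', Prod.ext_iff]; omega)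

lemma adjTpos (a : ℤ) (ha : 1 ≤ a) (w : ℤ × Bool) :
    GammaZ.Adj (a, true) w ↔ w = (a, false) := by
  obtain ⟨b, j⟩ := w
  cases j <;> (simp [adj_def, abs_one_iff, abs_one_iff', Prod.ext_iff]; omega)

/-- `v` has at most one neighbour. -/
def le1 (v : ℤ × Bool) : Prop := ∃ w, ∀ u, GammaZ.Adj v u → u = w

/-- `v` has at most two neighbours. -/
def le2 (v : ℤ × Bool) : Prop := ∃ w₁ w₂, ∀ u, GammaZ.Adj v u → u = w₁ ∨ u = w₂

lemma le1_iff (v : ℤ × Bool) : le1 v ↔ v.2 = true ∧ 1 ≤ v.1 := by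
  obtain ⟨a, j⟩ := v
  constructor
  · rintro ⟨w, hw⟩
    cases j
    · exfalso
      have h1 := hw _ ((adjF a _).2 (Or.inl rfl))
      have h2 := hw _ ((adjF a _).2 (Or.inr (Or.inl rfl)))
      have : ((a-1 : ℤ), false) = ((a+1 : ℤ), false) := h1.trans h2.symm
      simp [Prod.ext_iff] at this
      omega
    · refine ⟨rfl, ?_⟩
      show 1 ≤ a
      by_contra hha
      push_neg at hha
      exfalso
      rcases eq_or_lt_of_le (by omega : a ≤ 0) with h0 | h0
      · subst h0
        have h1 := hw _ ((adjT0 _).2 (Or.inl rfl))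
        have h2 := hw _ ((adjT0 _).2 (Or.inr rfl))
        have : ((0 : ℤ), false) = ((-1 : ℤ), true) := h1.trans h2.symm
        simp [Prod.ext_iff] at this
      · have ha1 : a ≤ -1 := by omega
        have h1 := hw _ ((adjTneg a ha1 _).2 (Or.inl rfl))
        have h2 := hw _ ((adjTneg a ha1 _).2 (Or.inr (Or.inl rfl)))
        have : ((a : ℤ), false) = ((a - 1 : ℤ), true) := h1.trans h2.symm
        simp [Prod.ext_iff] at this
  · rintro ⟨hj, ha⟩
    cases j
    · simp at hj
    · exact ⟨(a, false), fun u hu => (adjTpos a ha u).1 hu⟩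

lemma not_le2_of_three {v x y z : ℤ × Bool} (hx : GammaZ.Adj v x) (hy : GammaZ.Adj v y)
    (hz : GammaZ.Adj v z) (hxy : x ≠ y) (hxz : x ≠ z) (hyz : y ≠ z) : ¬ le2 v := by
  rintro ⟨w₁, w₂, hw⟩
  rcases hw _ hx with k1 | k1 <;> rcases hw _ hy with k2 | k2 <;> rcases hw _ hz with k3 | k3
  · exact hxy (k1.trans k2.symm)
  · exact hxy (k1.trans k2.symm)
  · exact hxz (k1.trans k3.symm)
  · exact hyz (k2.trans k3.symm)
  · exact hyz (k2.trans k3.symm)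
  · exact hxz (k1.trans k3.symm)
  · exact hxy (k1.trans k2.symm)
  · exact hxy (k1.trans k2.symm)

lemma deg2_iff (v : ℤ × Bool) : le2 v ∧ ¬ le1 v ↔ v = ((0:ℤ), true) := by
  obtain ⟨a, j⟩ := v
  constructor
  · rintro ⟨h2, h1⟩
    cases j
    · exfalso
      refine not_le2_of_three ((adjF a _).2 (Or.inl rfl)) ((adjF a _).2 (Or.inr (Or.inl rfl)))
        ((adjF a _).2 (Or.inr (Or.inr rfl))) ?_ ?_ ?_ h2 <;>
        (intro h; simp [Prod.ext_iff] at h; all_goals omega)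
    · rw [le1_iff] at h1
      have ha : a ≤ 0 := by
        by_contra h0
        exact h1 ⟨rfl, by omega⟩
      rcases eq_or_lt_of_le ha with h0 | h0
      · rw [h0]
      · exfalso
        have ha1 : a ≤ -1 := by omega
        refine not_le2_of_three ((adjTneg a ha1 _).2 (Or.inl rfl))
          ((adjTneg a ha1 _).2 (Or.inr (Or.inl rfl)))
          ((adjTneg a ha1 _).2 (Or.inr (Or.inr rfl))) ?_ ?_ ?_ h2 <;>
          (intro h; simp [Prod.ext_iff] at h; all_goals omega)
  · rintro h
    rw [h]
    constructor
    · exact ⟨((0:ℤ), false), (-1, true), fun u hu => (adjT0 u).1 hu⟩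
    · rw [le1_iff]; simp

section Iso
variable (e : GammaZ ≃g GammaZ)

lemma le1_map (v : ℤ × Bool) : le1 (e v) ↔ le1 v := by
  constructor
  · rintro ⟨w, hw⟩
    refine ⟨e.symm w, fun u hu => ?_⟩
    have : GammaZ.Adj (e v) (e u) := e.map_adj_iff.2 hu
    have := hw _ this
    rw [← this, e.symm_apply_apply]
  · rintro ⟨w, hw⟩
    refine ⟨e w, fun u hu => ?_⟩
    have : GammaZ.Adj v (e.symm u) := by
      have := e.symm.map_adj_iff.2 hu
      simpa using this
    have h2 := hw _ this
    have : u = e (e.symm u) := (e.apply_symm_apply u).symm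
    rw [this, h2]

lemma le2_map (v : ℤ × Bool) : le2 (e v) ↔ le2 v := by
  constructor
  · rintro ⟨w₁, w₂, hw⟩
    refine ⟨e.symm w₁, e.symm w₂, fun u hu => ?_⟩
    have : GammaZ.Adj (e v) (e u) := e.map_adj_iff.2 hu
    rcases hw _ this with h | h
    · left; rw [← h, e.symm_apply_apply]
    · right; rw [← h, e.symm_apply_apply]
  · rintro ⟨w₁, w₂, hw⟩
    refine ⟨e w₁, e w₂, fun u hu => ?_⟩
    have : GammaZ.Adj v (e.symm u) := by
      have := e.symm.map_adj_iff.2 hu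
      simpa using this
    have hu' : u = e (e.symm u) := (e.apply_symm_apply u).symm
    rcases hw _ this with h | h
    · left; rw [hu', h]
    · right; rw [hu', h]

/-- `v` has a neighbour which is a leaf. -/
def hlf (v : ℤ × Bool) : Prop := ∃ u, GammaZ.Adj v u ∧ le1 u

lemma hlf_map (v : ℤ × Bool) : hlf (e v) ↔ hlf v := by
  constructor
  · rintro ⟨u, hu, hl⟩
    refine ⟨e.symm u, ?_, ?_⟩
    · have := e.symm.map_adj_iff.2 hu
      simpa using this
    · rw [← le1_map e, e.apply_symm_apply]; exact hl
  · rintro ⟨u, hu, hl⟩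
    exact ⟨e u, e.map_adj_iff.2 hu, (le1_map e u).2 hl⟩

/-- `v` has a neighbour which has a leaf neighbour. -/
def hlf2 (v : ℤ × Bool) : Prop := ∃ u, GammaZ.Adj v u ∧ hlf u

lemma hlf2_map (v : ℤ × Bool) : hlf2 (e v) ↔ hlf2 v := by
  constructor
  · rintro ⟨u, hu, hl⟩
    refine ⟨e.symm u, ?_, ?_⟩
    · have := e.symm.map_adj_iff.2 hu
      simpa using this
    · rw [← hlf_map e, e.apply_symm_apply]; exact hl
  · rintro ⟨u, hu, hl⟩
    exact ⟨e u, e.map_adj_iff.2 hu, (hlf_map e u).2 hl⟩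

lemma fix_t0 : e ((0:ℤ), true) = ((0:ℤ), true) := by
  rw [← deg2_iff]
  constructor
  · rw [le2_map]
    exact ((deg2_iff _).2 rfl).1
  · rw [le1_map]
    exact ((deg2_iff _).2 rfl).2

lemma not_hlf_fm1 : ¬ hlf ((-1:ℤ), false) := by
  rintro ⟨u, hu, hl⟩
  rw [adjF] at hu
  rw [le1_iff] at hl
  rcases hu with rfl | rfl | rfl <;> simp at hl <;> omega

lemma not_hlf_tm2 : ¬ hlf ((-2:ℤ), true) := by
  rintro ⟨u, hu, hl⟩
  rw [adjTneg _ (by norm_num)] at hu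
  rw [le1_iff] at hl
  rcases hu with rfl | rfl | rfl <;> simp at hl <;> omega

lemma not_hlf_t0 : ¬ hlf ((0:ℤ), true) := by
  rintro ⟨u, hu, hl⟩
  rw [adjT0] at hu
  rw [le1_iff] at hl
  rcases hu with rfl | rfl <;> simp at hl <;> omega

lemma hlf_f1 : hlf ((1:ℤ), false) := by
  refine ⟨((1:ℤ), true), (adjF 1 _).2 (Or.inr (Or.inr rfl)), ?_⟩
  rw [le1_iff]
  exact ⟨rfl, le_refl 1⟩

lemma hlf2_f0 : hlf2 ((0:ℤ), false) := by
  refine ⟨((1:ℤ), false), (adjF 0 _).2 (Or.inr (Or.inl (by norm_num))), hlf_f1⟩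

lemma not_hlf2_tm1 : ¬ hlf2 ((-1:ℤ), true) := by
  rintro ⟨u, hu, hl⟩
  rw [adjTneg _ (by norm_num)] at hu
  rcases hu with rfl | rfl | rfl
  · exact not_hlf_fm1 hl
  · exact not_hlf_tm2 (by convert hl using 2 <;> norm_num)
  · exact not_hlf_t0 (by convert hl using 2 <;> norm_num)

lemma fix_f0 : e ((0:ℤ), false) = ((0:ℤ), false) := by
  have h : GammaZ.Adj (e ((0:ℤ), true)) (e ((0:ℤ), false)) :=
    e.map_adj_iff.2 ((adjT0 _).2 (Or.inl rfl))
  rw [fix_t0] at h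
  rcases (adjT0 _).1 h with h' | h'
  · exact h'
  · exfalso
    have : hlf2 (e ((0:ℤ), false)) := (hlf2_map e _).2 hlf2_f0
    rw [h'] at this
    exact not_hlf2_tm1 this

lemma fix_tm1 : e ((-1:ℤ), true) = ((-1:ℤ), true) := by
  have h : GammaZ.Adj (e ((0:ℤ), true)) (e ((-1:ℤ), true)) :=
    e.map_adj_iff.2 ((adjT0 _).2 (Or.inr rfl))
  rw [fix_t0] at h
  rcases (adjT0 _).1 h with h' | h'
  · exfalso
    rw [← fix_f0 e] at h'
    have := e.injective h'
    simp [Prod.ext_iff] at this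
  · exact h'

lemma fix_f1 : e ((1:ℤ), false) = ((1:ℤ), false) := by
  have h : GammaZ.Adj (e ((0:ℤ), false)) (e ((1:ℤ), false)) :=
    e.map_adj_iff.2 ((adjF 0 _).2 (Or.inr (Or.inl (by norm_num))))
  rw [fix_f0] at h
  rcases (adjF 0 _).1 h with h' | h' | h'
  · exfalso
    have : hlf (e ((1:ℤ), false)) := (hlf_map e _).2 hlf_f1
    rw [h'] at this
    exact not_hlf_fm1 (by convert this using 2 <;> norm_num)
  · rw [h']; norm_num
  · exfalso
    rw [← fix_t0 e] at h'
    have := e.injective h'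
    simp [Prod.ext_iff] at this

lemma fix_fm1 : e ((-1:ℤ), false) = ((-1:ℤ), false) := by
  have h : GammaZ.Adj (e ((0:ℤ), false)) (e ((-1:ℤ), false)) :=
    e.map_adj_iff.2 ((adjF 0 _).2 (Or.inl (by norm_num)))
  rw [fix_f0] at h
  rcases (adjF 0 _).1 h with h' | h' | h'
  · rw [h']; norm_num
  · exfalso
    rw [show ((0:ℤ)+1, false) = ((1:ℤ), false) by norm_num, ← fix_f1 e] at h'
    have := e.injective h'
    simp [Prod.ext_iff] at this
  · exfalso
    rw [← fix_t0 e] at h'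
    have := e.injective h'
    simp [Prod.ext_iff] at this

lemma pair_eq (x y : ℤ) (i j : Bool) : (x, i) = (y, j) ↔ x = y ∧ i = j := Prod.ext_iff

lemma fixR : ∀ n : ℕ, e ((n:ℤ), false) = ((n:ℤ), false) ∧
    e ((n:ℤ)+1, false) = ((n:ℤ)+1, false) := by
  intro n
  induction n with
  | zero => exact ⟨by simpa using fix_f0 e, by simpa using fix_f1 e⟩
  | succ n ih =>
    have ha : (0:ℤ) ≤ (n:ℤ) := Int.natCast_nonneg n
    constructor
    · push_cast
      exact ih.2
    · push_cast
      set a : ℤ := (n:ℤ) with hadef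
      have h : GammaZ.Adj (e (a+1, false)) (e (a+1+1, false)) :=
        e.map_adj_iff.2 ((adjF (a+1) _).2 (Or.inr (Or.inl rfl)))
      rw [ih.2] at h
      rcases (adjF (a+1) _).1 h with h' | h' | h'
      · exfalso
        rw [show (a+1-1 : ℤ) = a by ring, ← ih.1] at h'
        have := e.injective h'
        rw [pair_eq] at this
        omega
      · exact h'
      · exfalso
        have hl : le1 ((a+1 : ℤ), true) := by
          rw [le1_iff]
          exact ⟨rfl, by omega⟩
        rw [← h'] at hl
        rw [le1_map] at hl
        rw [le1_iff] at hl
        simp at hl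
  termination_by n => n

lemma fix_fpos (a : ℤ) (ha : 0 ≤ a) : e (a, false) = (a, false) := by
  obtain ⟨n, rfl⟩ := Int.eq_ofNat_of_zero_le ha
  exact (fixR e n).1

lemma fix_tpos (a : ℤ) (ha : 1 ≤ a) : e (a, true) = (a, true) := by
  have h : GammaZ.Adj (e (a, false)) (e (a, true)) :=
    e.map_adj_iff.2 ((adjF a _).2 (Or.inr (Or.inr rfl)))
  rw [fix_fpos e a (by omega)] at h
  rcases (adjF a _).1 h with h' | h' | h'
  · exfalso
    rw [← fix_fpos e (a-1) (by omega)] at h'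
    have := e.injective h'
    rw [pair_eq] at this
    simp at this
  · exfalso
    rw [← fix_fpos e (a+1) (by omega)] at h'
    have := e.injective h'
    rw [pair_eq] at this
    simp at this
  · exact h'

lemma fixL : ∀ n : ℕ, (e (-(n:ℤ), false) = (-(n:ℤ), false) ∧ e (-(n:ℤ), true) = (-(n:ℤ), true))
    ∧ (e (-(n:ℤ)-1, false) = (-(n:ℤ)-1, false) ∧ e (-(n:ℤ)-1, true) = (-(n:ℤ)-1, true)) := by
  intro n
  induction n with
  | zero =>
    refine ⟨⟨by simpa using fix_f0 e, by simpa using fix_t0 e⟩, ?_, ?_⟩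
    · have := fix_fm1 e
      convert this using 2 <;> norm_num
    · have := fix_tm1 e
      convert this using 2 <;> norm_num
  | succ n ih =>
    set a : ℤ := -(n:ℤ)-1 with hadef
    have ha : a ≤ -1 := by omega
    have hcast : -((n:ℕ)+1:ℤ) = a := by omega
    have hfa : e (a, false) = (a, false) := ih.2.1
    have hta : e (a, true) = (a, true) := ih.2.2
    have hfa1 : e (a+1, false) = (a+1, false) := by
      rw [show (a+1 : ℤ) = -(n:ℤ) by omega]; exact ih.1.1
    have hta1 : e (a+1, true) = (a+1, true) := by
      rw [show (a+1 : ℤ) = -(n:ℤ) by omega]; exact ih.1.2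
    have key1 : e (a-1, false) = (a-1, false) := by
      have h : GammaZ.Adj (e (a, false)) (e (a-1, false)) :=
        e.map_adj_iff.2 ((adjF a _).2 (Or.inl rfl))
      rw [hfa] at h
      rcases (adjF a _).1 h with h' | h' | h'
      · exact h'
      · exfalso
        rw [← hfa1] at h'
        have := e.injective h'
        rw [pair_eq] at this
        omega
      · exfalso
        rw [← hta] at h'
        have := e.injective h'
        rw [pair_eq] at this
        simp at this
    have key2 : e (a-1, true) = (a-1, true) := by
      have h : GammaZ.Adj (e (a, true)) (e (a-1, true)) :=
        e.map_adj_iff.2 ((adjTneg a ha _).2 (Or.inr (Or.inl rfl)))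
      rw [hta] at h
      rcases (adjTneg a ha _).1 h with h' | h' | h'
      · exfalso
        rw [← hfa] at h'
        have := e.injective h'
        rw [pair_eq] at this
        simp at this
      · exact h'
      · exfalso
        rw [← hta1] at h'
        have := e.injective h'
        rw [pair_eq] at this
        omega
    refine ⟨⟨?_, ?_⟩, ?_, ?_⟩
    · rw [show (-((n:ℕ)+1:ℕ):ℤ) = a by push_cast; omega]; exact hfa
    · rw [show (-((n:ℕ)+1:ℕ):ℤ) = a by push_cast; omega]; exact hta
    · rw [show (-((n:ℕ)+1:ℕ):ℤ)-1 = a-1 by push_cast; omega]; exact key1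
    · rw [show (-((n:ℕ)+1:ℕ):ℤ)-1 = a-1 by push_cast; omega]; exact key2

theorem gammaZ_rigid' (e : GammaZ ≃g GammaZ) : ∀ v, e v = v := by
  rintro ⟨a, j⟩
  obtain ⟨n, rfl | rfl⟩ := Int.eq_nat_or_neg a
  · cases j
    · exact (fixR e n).1
    · rcases Nat.eq_zero_or_pos n with h | h
      · subst h; simpa using fix_t0 e
      · exact fix_tpos e n (by exact_mod_cast h)
  · cases j
    · exact (fixL e n).1.1
    · exact (fixL e n).1.2

end Iso

/-- The graph `GammaZ` is rigid: its only automorphism is the identity. -/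
theorem gammaZ_rigid (e : GammaZ ≃g GammaZ) : ∀ v, e v = v := gammaZ_rigid' e
end

section
/- Let Γ be the simple graph with vertex set ℤ × {0,1} and adjacency: (a,0) ∼ (b,1) iff a = b; (a,0) ∼ (b,0) iff |a − b| = 1; and (a,1) ∼ (b,1) iff a ≤ 0 and |a − b| = 1. Then the shift map α defined by (a,x)α = (a−1, x) is a bimorphism of Γ that is not an automorphism: α preserves all edges of Γ but maps the non-adjacent pair {(0,1),(1,1)} to the adjacent pair {(−1,1),(0,1)}. -/
/-- The shift map `(a,x) ↦ (a-1,x)` is a bimorphism of `GammaZ` that is not an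
automorphism: it is a bijection preserving all edges, yet it sends the non-adjacent
pair `{(0,1),(1,1)}` to the adjacent pair `{(-1,1),(0,1)}`. -/
theorem gammaZ_shift_is_bimorphism_not_automorphism :
    Function.Bijective (fun v : ℤ × Bool => (v.1 - 1, v.2)) ∧
    (∀ v w : ℤ × Bool, GammaZ.Adj v w → GammaZ.Adj (v.1 - 1, v.2) (w.1 - 1, w.2)) ∧
    ¬ GammaZ.Adj (0, true) (1, true) ∧
    GammaZ.Adj ((0 : ℤ) - 1, true) ((1 : ℤ) - 1, true) := by
  refine ⟨⟨?_, ?_⟩, ?_, ?_, ?_⟩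
  · rintro ⟨a, i⟩ ⟨b, j⟩ h
    simp only [Prod.mk.injEq] at h
    exact Prod.ext (by omega) h.2
  · rintro ⟨a, i⟩
    exact ⟨(a + 1, i), by simp⟩
  · rintro ⟨a, i⟩ ⟨b, j⟩ h
    simp only [GammaZ] at h ⊢
    rcases h with ⟨hi, hj, h⟩ | ⟨hij, h⟩ | ⟨hi, hj, ha, hb, h⟩
    · exact Or.inl ⟨hi, hj, by rw [show a - 1 - (b - 1) = a - b by ring]; exact h⟩
    · exact Or.inr (Or.inl ⟨hij, by omega⟩)
    · exact Or.inr (Or.inr ⟨hi, hj, by omega, by omega,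
        by rw [show a - 1 - (b - 1) = a - b by ring]; exact h⟩)
  · simp [GammaZ]
  · simp only [GammaZ]
    refine Or.inr (Or.inr ⟨trivial, trivial, by omega, by omega, ?_⟩)
    norm_num
end

section
/- Let Γ be the simple graph with vertex set ℤ × {0,1} and adjacency: (a,0) ∼ (b,1) iff a = b; (a,0) ∼ (b,0) iff |a − b| = 1; and (a,1) ∼ (b,1) iff a ≤ 0 and |a − b| = 1. Then a bijection β of the vertex set is a bimorphism of Γ if and only if there exists n ∈ ℕ (n ≥ 0) with (a,x)β = (a − n, x) for all vertices (a,x); consequently the bimorphism monoid Bi(Γ) is isomorphic to the additive monoid (ℕ, +) of natural numbers. -/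
lemma gadj_iff {a b : ℤ} {x y : Bool} :
    GammaZ.Adj (a,x) (b,y) ↔
      ((x = false ∧ y = false ∧ |a - b| = 1) ∨ (x ≠ y ∧ a = b) ∨
       (x = true ∧ y = true ∧ a ≤ 0 ∧ b ≤ 0 ∧ |a - b| = 1)) := Iff.rfl

lemma gabs_iff {a b : ℤ} : |a - b| = 1 ↔ (b = a - 1 ∨ b = a + 1) := by
  rw [abs_eq (by norm_num : (0:ℤ) ≤ 1)]; omega

lemma adjFF {a b : ℤ} (h : b = a - 1 ∨ b = a + 1) : GammaZ.Adj (a,false) (b,false) := by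
  rw [gadj_iff]; exact Or.inl ⟨rfl, rfl, gabs_iff.mpr h⟩

lemma adjX {a : ℤ} {x y : Bool} (h : x ≠ y) : GammaZ.Adj (a,x) (a,y) := by
  rw [gadj_iff]; exact Or.inr (Or.inl ⟨h, rfl⟩)

lemma adjTT {a b : ℤ} (ha : a ≤ 0) (hb : b ≤ 0) (h : b = a - 1 ∨ b = a + 1) :
    GammaZ.Adj (a,true) (b,true) := by
  rw [gadj_iff]; exact Or.inr (Or.inr ⟨rfl, rfl, ha, hb, gabs_iff.mpr h⟩)

lemma nbrF {c : ℤ} {w : ℤ × Bool} (h : GammaZ.Adj (c,false) w) :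
    w = (c-1,false) ∨ w = (c+1,false) ∨ w = (c,true) := by
  obtain ⟨b, y⟩ := w
  rw [gadj_iff] at h
  rcases h with ⟨-, hy, h⟩ | ⟨hxy, h⟩ | ⟨hx, -⟩
  · subst hy; rw [gabs_iff] at h
    rcases h with h | h <;> subst h
    · exact Or.inl rfl
    · exact Or.inr (Or.inl rfl)
  · subst h
    cases y
    · exact absurd rfl hxy
    · exact Or.inr (Or.inr rfl)
  · exact absurd hx (by simp)

lemma nbrT {c : ℤ} {w : ℤ × Bool} (h : GammaZ.Adj (c,true) w) :
    w = (c,false) ∨ (c ≤ 0 ∧ w = (c-1,true)) ∨ (c ≤ -1 ∧ w = (c+1,true)) := by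
  obtain ⟨b, y⟩ := w
  rw [gadj_iff] at h
  rcases h with ⟨hx, -, -⟩ | ⟨hxy, h⟩ | ⟨-, hy, hc, hb, h⟩
  · exact absurd hx (by simp)
  · subst h
    cases y
    · exact Or.inl rfl
    · exact absurd rfl hxy
  · subst hy; rw [gabs_iff] at h
    rcases h with h | h <;> subst h
    · exact Or.inr (Or.inl ⟨hc, rfl⟩)
    · exact Or.inr (Or.inr ⟨by omega, rfl⟩)

lemma ne_fst {a b : ℤ} {x y : Bool} (h : a ≠ b) : (a,x) ≠ (b,y) := fun e => h (congrArg Prod.fst e)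
lemma ne_snd {a b : ℤ} {x y : Bool} (h : x ≠ y) : (a,x) ≠ (b,y) := fun e => h (congrArg Prod.snd e)

lemma cast_pair {β : ℤ × Bool → ℤ × Bool} {a a' c c' : ℤ} {x : Bool}
    (h : β (a,x) = (c,x)) (ha : a' = a) (hc : c' = c) : β (a',x) = (c',x) := by
  subst ha; subst hc; exact h

lemma shift_hom (n : ℕ) : ∀ v w : ℤ × Bool, GammaZ.Adj v w → GammaZ.Adj (v.1 - n, v.2) (w.1 - n, w.2) := by
  rintro ⟨a, x⟩ ⟨b, y⟩ h
  rw [gadj_iff] at h ⊢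
  rcases h with ⟨h1, h2, h3⟩ | ⟨h1, h2⟩ | ⟨h1, h2, h3, h4, h5⟩
  · exact Or.inl ⟨h1, h2, by rw [gabs_iff] at h3 ⊢; omega⟩
  · exact Or.inr (Or.inl ⟨h1, by omega⟩)
  · exact Or.inr (Or.inr ⟨h1, h2, by omega, by omega, by rw [gabs_iff] at h5 ⊢; omega⟩)

lemma reflect (β : ℤ × Bool → ℤ × Bool) (hinj : Function.Injective β)
    (hhom : ∀ v w, GammaZ.Adj v w → GammaZ.Adj (β v) (β w)) (m : ℤ) (hm : 1 ≤ m)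
    (hu : β (m,true) = (1,true)) (hmf : β (m,false) = (1,false))
    (hL : β (m-1,false) = (2,false)) : False := by
  have Rf : ∀ k : ℕ, β (m - k, false) = ((k:ℤ) + 1, false) := by
    intro k
    induction k using Nat.strong_induction_on with
    | _ k ih =>
      rcases k with _ | k
      · exact cast_pair hmf (by omega) (by omega)
      · rcases k with _ | k
        · exact cast_pair hL (by omega) (by omega)
        · have prev : β (m - (k:ℤ) - 1, false) = ((k:ℤ) + 2, false) :=
            cast_pair (ih (k+1) (by omega)) (by omega) (by omega)
          have prev2 : β (m - (k:ℤ), false) = ((k:ℤ) + 1, false) :=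
            cast_pair (ih k (by omega)) (by omega) (by omega)
          have hadj := hhom (m - (k:ℤ) - 1, false) (m - (k:ℤ) - 2, false) (adjFF (by omega))
          rw [prev] at hadj
          rcases nbrF hadj with h | h | h
          · exact absurd (hinj (h.trans (cast_pair prev2 rfl (by omega)).symm)) (ne_fst (by omega))
          · exact cast_pair h (by omega) (by omega)
          · exfalso
            have hp := hhom (m - (k:ℤ) - 2, false) (m - (k:ℤ) - 2, true) (adjX (by simp))
            rw [h] at hp
            rcases nbrT hp with hp' | ⟨h1, -⟩ | ⟨h1, -⟩
            · exact absurd (hinj (hp'.trans prev.symm)) (ne_snd (by simp))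
            · omega
            · omega
  have Tf : ∀ k : ℕ, β (m - k, true) = ((k:ℤ) + 1, true) := by
    intro k
    rcases k with _ | k
    · exact cast_pair hu (by omega) (by omega)
    · have b0 : β (m - (k:ℤ) - 1, false) = ((k:ℤ) + 2, false) := cast_pair (Rf (k+1)) (by omega) (by omega)
      have bprev : β (m - (k:ℤ), false) = ((k:ℤ) + 1, false) := cast_pair (Rf k) (by omega) (by omega)
      have bnext : β (m - (k:ℤ) - 2, false) = ((k:ℤ) + 3, false) := cast_pair (Rf (k+2)) (by omega) (by omega)
      have hadj := hhom (m - (k:ℤ) - 1, false) (m - (k:ℤ) - 1, true) (adjX (by simp))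
      rw [b0] at hadj
      rcases nbrF hadj with h | h | h
      · exact absurd (hinj (h.trans (cast_pair bprev rfl (by omega)).symm)) (ne_snd (by simp))
      · exact absurd (hinj (h.trans (cast_pair bnext rfl (by omega)).symm)) (ne_snd (by simp))
      · exact cast_pair h (by omega) (by omega)
  have hA : β (m - (m.toNat:ℤ), true) = ((m.toNat:ℤ) + 1, true) := Tf m.toNat
  have hB : β (m - (m.toNat:ℤ) - 1, true) = ((m.toNat:ℤ) + 2, true) :=
    cast_pair (Tf (m.toNat+1)) (by omega) (by omega)
  have hadj := hhom (m - (m.toNat:ℤ), true) (m - (m.toNat:ℤ) - 1, true)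
    (adjTT (by omega) (by omega) (by omega))
  rw [hA, hB] at hadj
  rw [gadj_iff] at hadj
  rcases hadj with ⟨h, -, -⟩ | ⟨h, -⟩ | ⟨-, -, h1, -, -⟩
  · exact absurd h (by simp)
  · exact h rfl
  · omega

lemma forward (β : ℤ × Bool → ℤ × Bool) (hinj : Function.Injective β)
    (hhom : ∀ v w, GammaZ.Adj v w → GammaZ.Adj (β v) (β w)) (m : ℤ) (hm : 1 ≤ m)
    (hu : β (m,true) = (1,true)) (hmf : β (m,false) = (1,false))
    (hL : β (m-1,false) = (0,false)) (hR : β (m+1,false) = (2,false)) :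
    ∀ v : ℤ × Bool, β v = (v.1 - (m-1), v.2) := by
  have Rf : ∀ k : ℕ, β (m + k, false) = ((k:ℤ) + 1, false) := by
    intro k
    induction k using Nat.strong_induction_on with
    | _ k ih =>
      rcases k with _ | k
      · exact cast_pair hmf (by omega) (by omega)
      · rcases k with _ | k
        · exact cast_pair hR (by omega) (by omega)
        · have prev : β (m + (k:ℤ) + 1, false) = ((k:ℤ) + 2, false) :=
            cast_pair (ih (k+1) (by omega)) (by omega) (by omega)
          have prev2 : β (m + (k:ℤ), false) = ((k:ℤ) + 1, false) :=
            cast_pair (ih k (by omega)) (by omega) (by omega)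
          have hadj := hhom (m + (k:ℤ) + 1, false) (m + (k:ℤ) + 2, false) (adjFF (by omega))
          rw [prev] at hadj
          rcases nbrF hadj with h | h | h
          · exact absurd (hinj (h.trans (cast_pair prev2 rfl (by omega)).symm)) (ne_fst (by omega))
          · exact cast_pair h (by omega) (by omega)
          · exfalso
            have hp := hhom (m + (k:ℤ) + 2, false) (m + (k:ℤ) + 2, true) (adjX (by simp))
            rw [h] at hp
            rcases nbrT hp with hp' | ⟨h1, -⟩ | ⟨h1, -⟩
            · exact absurd (hinj (hp'.trans prev.symm)) (ne_snd (by simp))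
            · omega
            · omega
  have Tf : ∀ k : ℕ, β (m + k, true) = ((k:ℤ) + 1, true) := by
    intro k
    rcases k with _ | k
    · exact cast_pair hu (by omega) (by omega)
    · have b0 : β (m + (k:ℤ) + 1, false) = ((k:ℤ) + 2, false) := cast_pair (Rf (k+1)) (by omega) (by omega)
      have bprev : β (m + (k:ℤ), false) = ((k:ℤ) + 1, false) := cast_pair (Rf k) (by omega) (by omega)
      have bnext : β (m + (k:ℤ) + 2, false) = ((k:ℤ) + 3, false) := cast_pair (Rf (k+2)) (by omega) (by omega)
      have hadj := hhom (m + (k:ℤ) + 1, false) (m + (k:ℤ) + 1, true) (adjX (by simp))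
      rw [b0] at hadj
      rcases nbrF hadj with h | h | h
      · exact absurd (hinj (h.trans (cast_pair bprev rfl (by omega)).symm)) (ne_snd (by simp))
      · exact absurd (hinj (h.trans (cast_pair bnext rfl (by omega)).symm)) (ne_snd (by simp))
      · exact cast_pair h (by omega) (by omega)
  have Lf : ∀ k : ℕ, β (m - k, false) = (1 - (k:ℤ), false) ∧ β (m - k, true) = (1 - (k:ℤ), true) := by
    intro k
    induction k using Nat.strong_induction_on with
    | _ k ih =>
      rcases k with _ | k
      · exact ⟨cast_pair hmf (by omega) (by omega), cast_pair hu (by omega) (by omega)⟩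
      · obtain ⟨pf, pt⟩ := ih k (by omega)
        have pf : β (m - (k:ℤ), false) = (1 - (k:ℤ), false) := pf
        have pt : β (m - (k:ℤ), true) = (1 - (k:ℤ), true) := pt
        have pf2 : β (m - (k:ℤ) + 1, false) = (2 - (k:ℤ), false) := by
          rcases k with _ | j
          · exact cast_pair hR (by omega) (by omega)
          · exact cast_pair (ih j (by omega)).1 (by omega) (by omega)
        have hadj := hhom (m - (k:ℤ), false) (m - (k:ℤ) - 1, false) (adjFF (by omega))
        rw [pf] at hadj
        have bf : β (m - (k:ℤ) - 1, false) = (-(k:ℤ), false) := by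
          rcases nbrF hadj with h | h | h
          · exact cast_pair h rfl (by omega)
          · exact absurd (hinj (h.trans (cast_pair pf2 rfl (by omega)).symm)) (ne_fst (by omega))
          · exact absurd (hinj (h.trans (cast_pair pt rfl (by omega)).symm)) (ne_snd (by simp))
        have hadj2 := hhom (m - (k:ℤ) - 1, false) (m - (k:ℤ) - 1, true) (adjX (by simp))
        rw [bf] at hadj2
        have bt : β (m - (k:ℤ) - 1, true) = (-(k:ℤ), true) := by
          rcases nbrF hadj2 with h | h | h
          · exfalso
            have c1 := hhom (m - (k:ℤ) - 1, false) (m - (k:ℤ) - 2, false) (adjFF (by omega))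
            rw [bf] at c1
            have c1' : β (m - (k:ℤ) - 2, false) = (-(k:ℤ), true) := by
              rcases nbrF c1 with h' | h' | h'
              · exact absurd (hinj (h'.trans h.symm)) (ne_snd (by simp))
              · exact absurd (hinj (h'.trans (cast_pair pf rfl (by omega)).symm)) (ne_fst (by omega))
              · exact h'
            have d1 := hhom (m - (k:ℤ) - 2, false) (m - (k:ℤ) - 2, true) (adjX (by simp))
            rw [c1'] at d1
            have d1' : β (m - (k:ℤ) - 2, true) = (-(k:ℤ) - 1, true) := by
              rcases nbrT d1 with h' | ⟨-, h'⟩ | ⟨-, h'⟩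
              · exact absurd (hinj (h'.trans (cast_pair bf rfl (by omega)).symm)) (ne_snd (by simp))
              · exact cast_pair h' rfl (by omega)
              · exact absurd (hinj (h'.trans (cast_pair pt rfl (by omega)).symm)) (ne_fst (by omega))
            have d2 := hhom (m - (k:ℤ) - 2, false) (m - (k:ℤ) - 3, false) (adjFF (by omega))
            rw [c1'] at d2
            rcases nbrT d2 with h' | ⟨-, h'⟩ | ⟨-, h'⟩
            · exact absurd (hinj (h'.trans (cast_pair bf rfl (by omega)).symm)) (ne_fst (by omega))
            · exact absurd (hinj (h'.trans (cast_pair d1' rfl (by omega)).symm)) (ne_snd (by simp))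
            · exact absurd (hinj (h'.trans (cast_pair pt rfl (by omega)).symm)) (ne_fst (by omega))
          · exact absurd (hinj (h.trans (cast_pair pf rfl (by omega)).symm)) (ne_snd (by simp))
          · exact h
        exact ⟨cast_pair bf (by omega) (by omega), cast_pair bt (by omega) (by omega)⟩
  intro v
  obtain ⟨a, x⟩ := v
  rcases le_or_gt m a with hcase | hcase
  · cases x
    · show β (a, false) = (a - (m-1), false)
      exact cast_pair (Rf (a-m).toNat) (by omega) (by omega)
    · show β (a, true) = (a - (m-1), true)
      exact cast_pair (Tf (a-m).toNat) (by omega) (by omega)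
  · cases x
    · show β (a, false) = (a - (m-1), false)
      exact cast_pair (Lf (m-a).toNat).1 (by omega) (by omega)
    · show β (a, true) = (a - (m-1), true)
      exact cast_pair (Lf (m-a).toNat).2 (by omega) (by omega)

lemma classify (β : ℤ × Bool → ℤ × Bool) (hbij : Function.Bijective β)
    (hhom : ∀ v w, GammaZ.Adj v w → GammaZ.Adj (β v) (β w)) :
    ∃ n : ℕ, ∀ v : ℤ × Bool, β v = (v.1 - n, v.2) := by
  obtain ⟨hinj, hsurj⟩ := hbij
  have n1t : ∀ w : ℤ × Bool, GammaZ.Adj (1,true) w → w = (1,false) := by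
    intro w h
    rcases nbrT h with h' | ⟨h1, -⟩ | ⟨h1, -⟩
    · exact h'
    · omega
    · omega
  obtain ⟨⟨m, xm⟩, hu⟩ := hsurj (1, true)
  have key2 : ∀ v1 v2 : ℤ × Bool, GammaZ.Adj (m,xm) v1 → GammaZ.Adj (m,xm) v2 → v1 ≠ v2 → False := by
    intro v1 v2 h1 h2 hne
    have e1 : GammaZ.Adj (β (m,xm)) (β v1) := hhom _ _ h1
    have e2 : GammaZ.Adj (β (m,xm)) (β v2) := hhom _ _ h2
    rw [hu] at e1 e2
    exact hne (hinj ((n1t _ e1).trans (n1t _ e2).symm))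
  have hxm : xm = true := by
    cases xm
    · exact (key2 (m-1,false) (m+1,false) (adjFF (by omega)) (adjFF (by omega)) (ne_fst (by omega))).elim
    · rfl
  subst hxm
  have hm : 1 ≤ m := by
    by_contra hc
    push_neg at hc
    exact key2 (m,false) (m-1,true) (adjX (by simp)) (adjTT (by omega) (by omega) (by omega)) (ne_snd (by simp))
  have hmf : β (m,false) = (1,false) := by
    have h := hhom (m,true) (m,false) (adjX (by simp))
    rw [hu] at h
    exact n1t _ h
  have hnb : ∀ a : ℤ, (a = m - 1 ∨ a = m + 1) → β (a,false) = (0,false) ∨ β (a,false) = (2,false) := by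
    intro a ha
    have h := hhom (m,false) (a,false) (adjFF (by omega))
    rw [hmf] at h
    rcases nbrF h with h | h | h
    · left; exact cast_pair h rfl (by omega)
    · right; exact cast_pair h rfl (by omega)
    · exact absurd (hinj (h.trans hu.symm)) (ne_snd (by simp))
  rcases hnb (m-1) (Or.inl rfl) with hLc | hLc <;> rcases hnb (m+1) (Or.inr rfl) with hRc | hRc
  · exact absurd (hinj (hLc.trans hRc.symm)) (ne_fst (by omega))
  · refine ⟨(m-1).toNat, fun v => ?_⟩
    rw [forward β hinj hhom m hm hu hmf hLc hRc v]
    rw [show (((m-1).toNat : ℤ)) = m - 1 by omega]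
  · exact (reflect β hinj hhom m hm hu hmf hLc).elim
  · exact absurd (hinj (hLc.trans hRc.symm)) (ne_fst (by omega))


lemma mem_biSubmonoid {V : Type*} (Γ : SimpleGraph V) (f : Function.End V) :
    f ∈ biSubmonoid Γ ↔ Function.Bijective f ∧ ∀ a b, Γ.Adj a b → Γ.Adj (f a) (f b) := Iff.rfl

/-- A bijection of the vertex set of `GammaZ` is a bimorphism if and only if it is a
downward shift `(a,x) ↦ (a - n, x)` for some `n ∈ ℕ`; consequently the bimorphism
monoid of `GammaZ` is isomorphic to the additive monoid `(ℕ, +)`. -/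
theorem gammaZ_bimorphism_monoid_eq_nat :
    (∀ β : ℤ × Bool → ℤ × Bool, Function.Bijective β →
      ((∀ v w, GammaZ.Adj v w → GammaZ.Adj (β v) (β w)) ↔
        ∃ n : ℕ, ∀ v : ℤ × Bool, β v = (v.1 - n, v.2))) ∧
    Nonempty (biSubmonoid GammaZ ≃* Multiplicative ℕ) := by
  have main : ∀ β : ℤ × Bool → ℤ × Bool, Function.Bijective β →
      ((∀ v w, GammaZ.Adj v w → GammaZ.Adj (β v) (β w)) ↔
        ∃ n : ℕ, ∀ v : ℤ × Bool, β v = (v.1 - n, v.2)) := by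
    intro β hbij
    constructor
    · exact classify β hbij
    · rintro ⟨n, hn⟩ v w h
      rw [hn v, hn w]
      exact shift_hom n v w h
  refine ⟨main, ?_⟩
  have shift_mem : ∀ n : ℕ,
      (fun v : ℤ × Bool => (v.1 - (n:ℤ), v.2)) ∈ biSubmonoid GammaZ := by
    intro n
    refine (mem_biSubmonoid _ _).mpr ⟨⟨?_, ?_⟩, fun v w h => shift_hom n v w h⟩
    · intro v w h
      have h1 := congrArg Prod.fst h
      have h2 := congrArg Prod.snd h
      simp only at h1 h2
      exact Prod.ext (by omega) h2
    · intro w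
      exact ⟨(w.1 + n, w.2), Prod.ext (by simp) rfl⟩
  let φ : Multiplicative ℕ →* biSubmonoid GammaZ :=
    { toFun := fun n => ⟨fun v => (v.1 - ((Multiplicative.toAdd n : ℕ) : ℤ), v.2), shift_mem _⟩
      map_one' := by
        apply Subtype.ext
        funext v
        show (v.1 - ((Multiplicative.toAdd (1 : Multiplicative ℕ) : ℕ) : ℤ), v.2) = v
        simp
      map_mul' := by
        intro a b
        apply Subtype.ext
        funext v
        show (v.1 - ((Multiplicative.toAdd (a * b) : ℕ) : ℤ), v.2)
          = (v.1 - ((Multiplicative.toAdd b : ℕ) : ℤ) - ((Multiplicative.toAdd a : ℕ) : ℤ), v.2)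
        rw [toAdd_mul]
        refine Prod.ext ?_ rfl
        push_cast
        ring }
  have hφbij : Function.Bijective φ := by
    constructor
    · intro a b h
      have h' : (0:ℤ) - ((Multiplicative.toAdd a : ℕ) : ℤ)
          = (0:ℤ) - ((Multiplicative.toAdd b : ℕ) : ℤ) :=
        congrArg (fun f : biSubmonoid GammaZ => (f.val (0, false)).1) h
      have : (Multiplicative.toAdd a : ℕ) = (Multiplicative.toAdd b : ℕ) := by omega
      exact Multiplicative.toAdd.injective this
    · rintro ⟨f, hf⟩
      obtain ⟨hbij, hhom⟩ := (mem_biSubmonoid _ _).mp hf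
      obtain ⟨n, hn⟩ := classify f hbij hhom
      refine ⟨Multiplicative.ofAdd n, Subtype.ext (funext fun v => ?_)⟩
      exact (hn v).symm
  exact ⟨(MulEquiv.ofBijective φ hφbij).symm⟩
end

section
/- For every group G there exists a simple graph Γ such that every bimorphism of Γ is an automorphism and the automorphism group of Γ is isomorphic to G; in particular, the bimorphism monoid Bi(Γ) is isomorphic (as a monoid) to G. -/
set_option linter.unnecessarySeqFocus false
set_option linter.dupNamespace false
set_option linter.unreachableTactic false
set_option linter.unusedTactic false

/-- The automorphism group of a simple graph `Γ`, as the subgroup of the symmetric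
group on the vertex set consisting of permutations preserving adjacency and
non-adjacency. -/
def autSubgroup {V : Type*} (Γ : SimpleGraph V) : Subgroup (Equiv.Perm V) where
  carrier := {e | ∀ a b, Γ.Adj (e a) (e b) ↔ Γ.Adj a b}
  one_mem' := by intro a b; simp
  mul_mem' := by
    intro e f he hf a b
    rw [Equiv.Perm.mul_apply, Equiv.Perm.mul_apply, he, hf]
  inv_mem' := by
    intro e he a b
    have h := he (e⁻¹ a) (e⁻¹ b)
    simp only [Equiv.Perm.coe_inv, Equiv.apply_symm_apply] at h
    exact h.symm

def nbr : Nat → List Nat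
| 0 => [1,2,3,4]
| 1 => [0,2,3]
| 2 => [0,1,3,5]
| 3 => [0,1,2,5,6]
| 4 => [0,6,8]
| 5 => [2,3,6,7]
| 6 => [3,4,5,7,8]
| 7 => [5,6,8,9,15]
| 8 => [4,6,7,9,10,16]
| 9 => [7,8,10,11,15,17]
| 10 => [8,9,11,12,16,18]
| 11 => [9,10,12,13,17,19]
| 12 => [10,11,13,14,18,20]
| 13 => [11,12,14,19]
| 14 => [12,13,20]
| 15 => [7,9]
| 16 => [8,10]
| 17 => [9,11]
| 18 => [10,12]
| 19 => [11,13]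
| 20 => [12,14]
| _ => []

def fb (i j : Fin 21) : Bool := j.val ∈ nbr i.val

inductive Vt (G : Type u) : Type u
| F (i : Fin 21)
| A (a : G)
| S (c : G)
| T (d : G)
| U (c d : G) (h : WellOrderingRel c d)
| X (a b : G)
| Y (a b : G)

namespace Vt

variable {G : Type u} [Group G]

def adj0 : Vt G → Vt G → Prop
| F i, F j => fb i j = true
| F i, A _ => i = 15 | A _, F i => i = 15
| F i, S _ => i = 16 | S _, F i => i = 16
| F i, T _ => i = 17 | T _, F i => i = 17
| F i, U _ _ _ => i = 18 | U _ _ _, F i => i = 18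
| F i, X _ _ => i = 19 | X _ _, F i => i = 19
| F i, Y _ _ => i = 20 | Y _ _, F i => i = 20
| A t, X a _ => t = a | X a _, A t => t = a
| Y _ b, A t => t = b | A t, Y _ b => t = b
| X a b, Y a' b' => a = a' ∧ b = b' | Y a' b', X a b => a = a' ∧ b = b'
| X a b, S c => c = a⁻¹ * b | S c, X a b => c = a⁻¹ * b
| S c, U c' _ _ => c = c' | U c' _ _, S c => c = c'
| U _ d _, T d' => d = d' | T d', U _ d _ => d = d'
| T d, S d' => d' = d | S d', T d => d' = d
| _, _ => False

lemma fb_symm : ∀ i j : Fin 21, fb i j = fb j i := by decide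
lemma fb_irrefl : ∀ i : Fin 21, fb i i = false := by decide

lemma adj0_symm : ∀ x y : Vt G, adj0 x y → adj0 y x := by
  intro x y h
  cases x <;> cases y <;> simp_all [adj0] <;> try exact (fb_symm _ _) ▸ h

def Γg (G : Type u) [Group G] : SimpleGraph (Vt G) where
  Adj x y := adj0 x y
  symm := by constructor; intro x y h; exact adj0_symm x y h
  loopless := by
    constructor; intro x h
    cases x <;> simp_all [adj0, fb_irrefl]

lemma adjQ {x y : Vt G} : (Γg G).Adj x y ↔ adj0 x y := Iff.rfl

lemma adjFF {i j : Fin 21} (h : fb i j = true) : (Γg G).Adj (F i) (F j) := h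

/-! ### neighbourhood characterisations -/

lemma nbrA {a : G} {v : Vt G} (h : (Γg G).Adj (A a) v) :
    v = F 15 ∨ (∃ b, v = X a b) ∨ (∃ c, v = Y c a) := by
  cases v <;> simp_all [adjQ, adj0]

lemma nbrX {a b : G} {v : Vt G} (h : (Γg G).Adj (X a b) v) :
    v = F 19 ∨ v = A a ∨ v = Y a b ∨ v = S (a⁻¹ * b) := by
  cases v <;> simp_all [adjQ, adj0]

lemma nbrY {a b : G} {v : Vt G} (h : (Γg G).Adj (Y a b) v) :
    v = F 20 ∨ v = X a b ∨ v = A b := by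
  cases v <;> simp_all [adjQ, adj0]

lemma nbrS {c : G} {v : Vt G} (h : (Γg G).Adj (S c) v) :
    v = F 16 ∨ (∃ a b, v = X a b ∧ c = a⁻¹ * b) ∨ (∃ d hh, v = U c d hh) ∨ v = T c := by
  cases v <;> simp_all [adjQ, adj0]

lemma nbrT {d : G} {v : Vt G} (h : (Γg G).Adj (T d) v) :
    v = F 17 ∨ (∃ c hh, v = U c d hh) ∨ v = S d := by
  cases v <;> simp_all [adjQ, adj0]
  subst h; assumption

lemma nbrU {c d : G} {hh : WellOrderingRel c d} {v : Vt G} (h : (Γg G).Adj (U c d hh) v) :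
    v = F 18 ∨ v = S c ∨ v = T d := by
  cases v <;> simp_all [adjQ, adj0]

/-! ### no triangles in core neighbourhoods -/

lemma noTriA {a : G} {v2 v3 v4 : Vt G} (h2 : (Γg G).Adj (A a) v2) (h3 : (Γg G).Adj (A a) v3)
    (h4 : (Γg G).Adj (A a) v4) (h23 : (Γg G).Adj v2 v3) (h24 : (Γg G).Adj v2 v4)
    (h34 : (Γg G).Adj v3 v4) : False := by
  rcases nbrA h2 with rfl | ⟨b2, rfl⟩ | ⟨c2, rfl⟩ <;>
  rcases nbrA h3 with rfl | ⟨b3, rfl⟩ | ⟨c3, rfl⟩ <;>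
  rcases nbrA h4 with rfl | ⟨b4, rfl⟩ | ⟨c4, rfl⟩ <;>
  simp_all [adjQ, adj0]

lemma noTriS {c : G} {v2 v3 v4 : Vt G} (h2 : (Γg G).Adj (S c) v2) (h3 : (Γg G).Adj (S c) v3)
    (h4 : (Γg G).Adj (S c) v4) (h23 : (Γg G).Adj v2 v3) (h24 : (Γg G).Adj v2 v4)
    (h34 : (Γg G).Adj v3 v4) : False := by
  rcases nbrS h2 with rfl | ⟨a2, b2, rfl, hc2⟩ | ⟨d2, hh2, rfl⟩ | rfl <;>
  rcases nbrS h3 with rfl | ⟨a3, b3, rfl, hc3⟩ | ⟨d3, hh3, rfl⟩ | rfl <;>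
  rcases nbrS h4 with rfl | ⟨a4, b4, rfl, hc4⟩ | ⟨d4, hh4, rfl⟩ | rfl <;>
  simp_all [adjQ, adj0] <;>
  exact absurd rfl (WellOrderingRel.isWellOrder.irrefl _) |>.elim

lemma noTriT {d : G} {v2 v3 v4 : Vt G} (h2 : (Γg G).Adj (T d) v2) (h3 : (Γg G).Adj (T d) v3)
    (h4 : (Γg G).Adj (T d) v4) (h23 : (Γg G).Adj v2 v3) (h24 : (Γg G).Adj v2 v4)
    (h34 : (Γg G).Adj v3 v4) : False := by
  rcases nbrT h2 with rfl | ⟨c2, hh2, rfl⟩ | rfl <;>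
  rcases nbrT h3 with rfl | ⟨c3, hh3, rfl⟩ | rfl <;>
  rcases nbrT h4 with rfl | ⟨c4, hh4, rfl⟩ | rfl <;>
  simp_all [adjQ, adj0] <;>
  exact absurd rfl (WellOrderingRel.isWellOrder.irrefl _) |>.elim

lemma noTriU {c d : G} {hh : WellOrderingRel c d} {v2 v3 v4 : Vt G}
    (h2 : (Γg G).Adj (U c d hh) v2) (h3 : (Γg G).Adj (U c d hh) v3)
    (h4 : (Γg G).Adj (U c d hh) v4) (h23 : (Γg G).Adj v2 v3) (h24 : (Γg G).Adj v2 v4)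
    (h34 : (Γg G).Adj v3 v4) : False := by
  rcases nbrU h2 with rfl | rfl | rfl <;>
  rcases nbrU h3 with rfl | rfl | rfl <;>
  rcases nbrU h4 with rfl | rfl | rfl <;>
  simp_all [adjQ, adj0] <;>
  exact absurd rfl (WellOrderingRel.isWellOrder.irrefl _) |>.elim

lemma noTriX {a b : G} {v2 v3 v4 : Vt G} (h2 : (Γg G).Adj (X a b) v2) (h3 : (Γg G).Adj (X a b) v3)
    (h4 : (Γg G).Adj (X a b) v4) (h23 : (Γg G).Adj v2 v3) (h24 : (Γg G).Adj v2 v4)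
    (h34 : (Γg G).Adj v3 v4) : False := by
  rcases nbrX h2 with rfl | rfl | rfl | rfl <;>
  rcases nbrX h3 with rfl | rfl | rfl | rfl <;>
  rcases nbrX h4 with rfl | rfl | rfl | rfl <;>
  simp_all [adjQ, adj0]

lemma noTriY {a b : G} {v2 v3 v4 : Vt G} (h2 : (Γg G).Adj (Y a b) v2) (h3 : (Γg G).Adj (Y a b) v3)
    (h4 : (Γg G).Adj (Y a b) v4) (h23 : (Γg G).Adj v2 v3) (h24 : (Γg G).Adj v2 v4)
    (h34 : (Γg G).Adj v3 v4) : False := by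
  rcases nbrY h2 with rfl | rfl | rfl <;>
  rcases nbrY h3 with rfl | rfl | rfl <;>
  rcases nbrY h4 with rfl | rfl | rfl <;>
  simp_all [adjQ, adj0]

/-! ### apex neighbourhoods and triangles -/

lemma nbrF15 {v : Vt G} (h : (Γg G).Adj (F 15) v) :
    v = F 7 ∨ v = F 9 ∨ ∃ a, v = A a := by
  have hd : ∀ j : Fin 21, fb 15 j = true → j = 7 ∨ j = 9 := by decide
  cases v <;> simp_all [adjQ, adj0] <;> first | (exact hd _ h) | (exact absurd h (by decide))

lemma nbrF16 {v : Vt G} (h : (Γg G).Adj (F 16) v) :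
    v = F 8 ∨ v = F 10 ∨ ∃ c, v = S c := by
  have hd : ∀ j : Fin 21, fb 16 j = true → j = 8 ∨ j = 10 := by decide
  cases v <;> simp_all [adjQ, adj0] <;> first | (exact hd _ h) | (exact absurd h (by decide))

lemma nbrF17 {v : Vt G} (h : (Γg G).Adj (F 17) v) :
    v = F 9 ∨ v = F 11 ∨ ∃ d, v = T d := by
  have hd : ∀ j : Fin 21, fb 17 j = true → j = 9 ∨ j = 11 := by decide
  cases v <;> simp_all [adjQ, adj0] <;> first | (exact hd _ h) | (exact absurd h (by decide))

lemma nbrF18 {v : Vt G} (h : (Γg G).Adj (F 18) v) :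
    v = F 10 ∨ v = F 12 ∨ ∃ c d hh, v = U c d hh := by
  have hd : ∀ j : Fin 21, fb 18 j = true → j = 10 ∨ j = 12 := by decide
  cases v <;> simp_all [adjQ, adj0] <;> first | (exact hd _ h) | (exact absurd h (by decide))

lemma nbrF19 {v : Vt G} (h : (Γg G).Adj (F 19) v) :
    v = F 11 ∨ v = F 13 ∨ ∃ a b, v = X a b := by
  have hd : ∀ j : Fin 21, fb 19 j = true → j = 11 ∨ j = 13 := by decide
  cases v <;> simp_all [adjQ, adj0] <;> first | (exact hd _ h) | (exact absurd h (by decide))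

lemma nbrF20 {v : Vt G} (h : (Γg G).Adj (F 20) v) :
    v = F 12 ∨ v = F 14 ∨ ∃ a b, v = Y a b := by
  have hd : ∀ j : Fin 21, fb 20 j = true → j = 12 ∨ j = 14 := by decide
  cases v <;> simp_all [adjQ, adj0] <;> first | (exact hd _ h) | (exact absurd h (by decide))

lemma noTriF15 {v2 v3 v4 : Vt G} (h2 : (Γg G).Adj (F 15) v2) (h3 : (Γg G).Adj (F 15) v3)
    (h4 : (Γg G).Adj (F 15) v4) (h23 : (Γg G).Adj v2 v3) (h24 : (Γg G).Adj v2 v4)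
    (h34 : (Γg G).Adj v3 v4) : False := by
  rcases nbrF15 h2 with rfl | rfl | ⟨a2, rfl⟩ <;>
  rcases nbrF15 h3 with rfl | rfl | ⟨a3, rfl⟩ <;>
  rcases nbrF15 h4 with rfl | rfl | ⟨a4, rfl⟩ <;>
  simp_all [adjQ, adj0] <;>
  first
    | exact absurd h23 (by decide)
    | exact absurd h24 (by decide)
    | exact absurd h34 (by decide)

lemma noTriF16 {v2 v3 v4 : Vt G} (h2 : (Γg G).Adj (F 16) v2) (h3 : (Γg G).Adj (F 16) v3)
    (h4 : (Γg G).Adj (F 16) v4) (h23 : (Γg G).Adj v2 v3) (h24 : (Γg G).Adj v2 v4)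
    (h34 : (Γg G).Adj v3 v4) : False := by
  rcases nbrF16 h2 with rfl | rfl | ⟨a2, rfl⟩ <;>
  rcases nbrF16 h3 with rfl | rfl | ⟨a3, rfl⟩ <;>
  rcases nbrF16 h4 with rfl | rfl | ⟨a4, rfl⟩ <;>
  simp_all [adjQ, adj0] <;>
  first
    | exact absurd h23 (by decide)
    | exact absurd h24 (by decide)
    | exact absurd h34 (by decide)

lemma noTriF17 {v2 v3 v4 : Vt G} (h2 : (Γg G).Adj (F 17) v2) (h3 : (Γg G).Adj (F 17) v3)
    (h4 : (Γg G).Adj (F 17) v4) (h23 : (Γg G).Adj v2 v3) (h24 : (Γg G).Adj v2 v4)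
    (h34 : (Γg G).Adj v3 v4) : False := by
  rcases nbrF17 h2 with rfl | rfl | ⟨a2, rfl⟩ <;>
  rcases nbrF17 h3 with rfl | rfl | ⟨a3, rfl⟩ <;>
  rcases nbrF17 h4 with rfl | rfl | ⟨a4, rfl⟩ <;>
  simp_all [adjQ, adj0] <;>
  first
    | exact absurd h23 (by decide)
    | exact absurd h24 (by decide)
    | exact absurd h34 (by decide)

lemma noTriF18 {v2 v3 v4 : Vt G} (h2 : (Γg G).Adj (F 18) v2) (h3 : (Γg G).Adj (F 18) v3)
    (h4 : (Γg G).Adj (F 18) v4) (h23 : (Γg G).Adj v2 v3) (h24 : (Γg G).Adj v2 v4)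
    (h34 : (Γg G).Adj v3 v4) : False := by
  rcases nbrF18 h2 with rfl | rfl | ⟨c2, d2, hh2, rfl⟩ <;>
  rcases nbrF18 h3 with rfl | rfl | ⟨c3, d3, hh3, rfl⟩ <;>
  rcases nbrF18 h4 with rfl | rfl | ⟨c4, d4, hh4, rfl⟩ <;>
  simp_all [adjQ, adj0] <;>
  first
    | exact absurd h23 (by decide)
    | exact absurd h24 (by decide)
    | exact absurd h34 (by decide)

lemma noTriF19 {v2 v3 v4 : Vt G} (h2 : (Γg G).Adj (F 19) v2) (h3 : (Γg G).Adj (F 19) v3)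
    (h4 : (Γg G).Adj (F 19) v4) (h23 : (Γg G).Adj v2 v3) (h24 : (Γg G).Adj v2 v4)
    (h34 : (Γg G).Adj v3 v4) : False := by
  rcases nbrF19 h2 with rfl | rfl | ⟨a2, b2, rfl⟩ <;>
  rcases nbrF19 h3 with rfl | rfl | ⟨a3, b3, rfl⟩ <;>
  rcases nbrF19 h4 with rfl | rfl | ⟨a4, b4, rfl⟩ <;>
  simp_all [adjQ, adj0] <;>
  first
    | exact absurd h23 (by decide)
    | exact absurd h24 (by decide)
    | exact absurd h34 (by decide)

lemma noTriF20 {v2 v3 v4 : Vt G} (h2 : (Γg G).Adj (F 20) v2) (h3 : (Γg G).Adj (F 20) v3)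
    (h4 : (Γg G).Adj (F 20) v4) (h23 : (Γg G).Adj v2 v3) (h24 : (Γg G).Adj v2 v4)
    (h34 : (Γg G).Adj v3 v4) : False := by
  rcases nbrF20 h2 with rfl | rfl | ⟨a2, b2, rfl⟩ <;>
  rcases nbrF20 h3 with rfl | rfl | ⟨a3, b3, rfl⟩ <;>
  rcases nbrF20 h4 with rfl | rfl | ⟨a4, b4, rfl⟩ <;>
  simp_all [adjQ, adj0] <;>
  first
    | exact absurd h23 (by decide)
    | exact absurd h24 (by decide)
    | exact absurd h34 (by decide)

set_option maxHeartbeats 4000000 in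
set_option maxRecDepth 100000 in
/-- the unique `4`-clique of the frame -/
lemma frame4 : ∀ i j k l : Fin 21, fb i j = true → fb i k = true → fb i l = true →
    fb j k = true → fb j l = true → fb k l = true →
    (i.val < 4 ∧ j.val < 4 ∧ k.val < 4 ∧ l.val < 4) := by decide

/-- any vertex of a 4-clique is one of the four anchor vertices -/
lemma K4_mem {v1 v2 v3 v4 : Vt G} (h12 : (Γg G).Adj v1 v2) (h13 : (Γg G).Adj v1 v3)
    (h14 : (Γg G).Adj v1 v4) (h23 : (Γg G).Adj v2 v3) (h24 : (Γg G).Adj v2 v4)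
    (h34 : (Γg G).Adj v3 v4) : ∃ i : Fin 21, i.val < 4 ∧ v1 = F i := by
  cases v1 with
  | A a => exact (noTriA h12 h13 h14 h23 h24 h34).elim
  | S c => exact (noTriS h12 h13 h14 h23 h24 h34).elim
  | T d => exact (noTriT h12 h13 h14 h23 h24 h34).elim
  | U c d hh => exact (noTriU h12 h13 h14 h23 h24 h34).elim
  | X a b => exact (noTriX h12 h13 h14 h23 h24 h34).elim
  | Y a b => exact (noTriY h12 h13 h14 h23 h24 h34).elim
  | F i =>
    cases v2 with
    | A a =>
      have : i = 15 := h12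
      subst this
      exact (noTriF15 h12 h13 h14 h23 h24 h34).elim
    | S c =>
      have : i = 16 := h12
      subst this
      exact (noTriF16 h12 h13 h14 h23 h24 h34).elim
    | T d =>
      have : i = 17 := h12
      subst this
      exact (noTriF17 h12 h13 h14 h23 h24 h34).elim
    | U c d hh =>
      have : i = 18 := h12
      subst this
      exact (noTriF18 h12 h13 h14 h23 h24 h34).elim
    | X a b =>
      have : i = 19 := h12
      subst this
      exact (noTriF19 h12 h13 h14 h23 h24 h34).elim
    | Y a b =>
      have : i = 20 := h12
      subst this
      exact (noTriF20 h12 h13 h14 h23 h24 h34).elim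
    | F j =>
      cases v3 with
      | A a =>
        have hi : i = 15 := h13
        have hj : j = 15 := h23
        subst hi; subst hj
        exact absurd h12 (by exact fun hc => by simpa [fb_irrefl] using hc)
      | S c =>
        have hi : i = 16 := h13
        have hj : j = 16 := h23
        subst hi; subst hj
        exact absurd h12 (by exact fun hc => by simpa [fb_irrefl] using hc)
      | T d =>
        have hi : i = 17 := h13
        have hj : j = 17 := h23
        subst hi; subst hj
        exact absurd h12 (by exact fun hc => by simpa [fb_irrefl] using hc)
      | U c d hh =>
        have hi : i = 18 := h13
        have hj : j = 18 := h23
        subst hi; subst hj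
        exact absurd h12 (by exact fun hc => by simpa [fb_irrefl] using hc)
      | X a b =>
        have hi : i = 19 := h13
        have hj : j = 19 := h23
        subst hi; subst hj
        exact absurd h12 (by exact fun hc => by simpa [fb_irrefl] using hc)
      | Y a b =>
        have hi : i = 20 := h13
        have hj : j = 20 := h23
        subst hi; subst hj
        exact absurd h12 (by exact fun hc => by simpa [fb_irrefl] using hc)
      | F k =>
        cases v4 with
        | A a =>
          have hi : i = 15 := h14
          have hj : j = 15 := h24
          subst hi; subst hj
          exact absurd h12 (by exact fun hc => by simpa [fb_irrefl] using hc)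
        | S c =>
          have hi : i = 16 := h14
          have hj : j = 16 := h24
          subst hi; subst hj
          exact absurd h12 (by exact fun hc => by simpa [fb_irrefl] using hc)
        | T d =>
          have hi : i = 17 := h14
          have hj : j = 17 := h24
          subst hi; subst hj
          exact absurd h12 (by exact fun hc => by simpa [fb_irrefl] using hc)
        | U c d hh =>
          have hi : i = 18 := h14
          have hj : j = 18 := h24
          subst hi; subst hj
          exact absurd h12 (by exact fun hc => by simpa [fb_irrefl] using hc)
        | X a b =>
          have hi : i = 19 := h14
          have hj : j = 19 := h24
          subst hi; subst hj
          exact absurd h12 (by exact fun hc => by simpa [fb_irrefl] using hc)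
        | Y a b =>
          have hi : i = 20 := h14
          have hj : j = 20 := h24
          subst hi; subst hj
          exact absurd h12 (by exact fun hc => by simpa [fb_irrefl] using hc)
        | F l =>
          exact ⟨i, (frame4 i j k l h12 h13 h14 h23 h24 h34).1, rfl⟩

/-! ### common neighbours in the frame -/

lemma commonF {p q : Fin 21} (hp : p.val < 15) {v : Vt G} (h1 : (Γg G).Adj v (F p))
    (h2 : (Γg G).Adj v (F q)) :
    ∃ j : Fin 21, v = F j ∧ fb j p = true ∧ fb j q = true := by
  cases v <;> simp_all [adjQ, adj0] <;> omega

theorem pin (f : Vt G → Vt G) (hom : ∀ x y, (Γg G).Adj x y → (Γg G).Adj (f x) (f y))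
    (hinj : Function.Injective f) : ∀ i : Fin 21, f (F i) = F i := by
  have adjf : ∀ {i j : Fin 21}, fb i j = true → (Γg G).Adj (f (F i)) (f (F j)) :=
    fun h => hom _ _ (adjFF h)
  have jeq : ∀ {a b : Fin 21}, f (F a) = f (F b) → a = b := by
    intro a b h
    have := hinj h
    injection this
  obtain ⟨t0, ht0, e0⟩ := K4_mem (adjf (by decide : fb 0 1 = true))
    (adjf (by decide : fb 0 2 = true)) (adjf (by decide : fb 0 3 = true))
    (adjf (by decide : fb 1 2 = true)) (adjf (by decide : fb 1 3 = true))
    (adjf (by decide : fb 2 3 = true))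
  obtain ⟨t1, ht1, e1⟩ := K4_mem (adjf (by decide : fb 1 0 = true))
    (adjf (by decide : fb 1 2 = true)) (adjf (by decide : fb 1 3 = true))
    (adjf (by decide : fb 0 2 = true)) (adjf (by decide : fb 0 3 = true))
    (adjf (by decide : fb 2 3 = true))
  obtain ⟨t2, ht2, e2⟩ := K4_mem (adjf (by decide : fb 2 0 = true))
    (adjf (by decide : fb 2 1 = true)) (adjf (by decide : fb 2 3 = true))
    (adjf (by decide : fb 0 1 = true)) (adjf (by decide : fb 0 3 = true))
    (adjf (by decide : fb 1 3 = true))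
  obtain ⟨t3, ht3, e3⟩ := K4_mem (adjf (by decide : fb 3 0 = true))
    (adjf (by decide : fb 3 1 = true)) (adjf (by decide : fb 3 2 = true))
    (adjf (by decide : fb 0 1 = true)) (adjf (by decide : fb 0 2 = true))
    (adjf (by decide : fb 1 2 = true))
  have d01 : t0 ≠ t1 := fun h =>
    absurd (jeq (show f (F 0) = f (F 1) by rw [e0, e1, h])) (by decide)
  have d02 : t0 ≠ t2 := fun h =>
    absurd (jeq (show f (F 0) = f (F 2) by rw [e0, e2, h])) (by decide)
  have d03 : t0 ≠ t3 := fun h =>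
    absurd (jeq (show f (F 0) = f (F 3) by rw [e0, e3, h])) (by decide)
  have d12 : t1 ≠ t2 := fun h =>
    absurd (jeq (show f (F 1) = f (F 2) by rw [e1, e2, h])) (by decide)
  have d13 : t1 ≠ t3 := fun h =>
    absurd (jeq (show f (F 1) = f (F 3) by rw [e1, e3, h])) (by decide)
  have d23 : t2 ≠ t3 := fun h =>
    absurd (jeq (show f (F 2) = f (F 3) by rw [e2, e3, h])) (by decide)
  have cover : ∀ s : Fin 21, s.val < 4 → ∃ i : Fin 21, i.val < 4 ∧ f (F i) = F s := by
    intro s hs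
    by_contra hc
    push_neg at hc
    have n0 : t0 ≠ s := fun h => hc 0 (by decide) (h ▸ e0)
    have n1 : t1 ≠ s := fun h => hc 1 (by decide) (h ▸ e1)
    have n2 : t2 ≠ s := fun h => hc 2 (by decide) (h ▸ e2)
    have n3 : t3 ≠ s := fun h => hc 3 (by decide) (h ▸ e3)
    have v01 : t0.val ≠ t1.val := fun h => d01 (Fin.ext h)
    have v02 : t0.val ≠ t2.val := fun h => d02 (Fin.ext h)
    have v03 : t0.val ≠ t3.val := fun h => d03 (Fin.ext h)
    have v12 : t1.val ≠ t2.val := fun h => d12 (Fin.ext h)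
    have v13 : t1.val ≠ t3.val := fun h => d13 (Fin.ext h)
    have v23 : t2.val ≠ t3.val := fun h => d23 (Fin.ext h)
    have w0 : t0.val ≠ s.val := fun h => n0 (Fin.ext h)
    have w1 : t1.val ≠ s.val := fun h => n1 (Fin.ext h)
    have w2 : t2.val ≠ s.val := fun h => n2 (Fin.ext h)
    have w3 : t3.val ≠ s.val := fun h => n3 (Fin.ext h)
    omega
  have notK4 : ∀ (j : Fin 21), 4 ≤ j.val → ∀ s : Fin 21, s.val < 4 → f (F j) ≠ F s := by
    intro j hj s hs he
    obtain ⟨i, hi, e⟩ := cover s hs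
    have := jeq (he.trans e.symm)
    subst this
    omega
  -- pin w0 = F 5
  have hw0 : f (F 5) = F 5 := by
    obtain ⟨j, hv, hj2, hj3⟩ := commonF (show t2.val < 15 by omega)
      (e2 ▸ adjf (by decide : fb 5 2 = true)) (e3 ▸ adjf (by decide : fb 5 3 = true))
    have hd : ∀ (j s t : Fin 21), s.val < 4 → t.val < 4 → s ≠ t →
        fb j s = true → fb j t = true → j.val < 4 ∨ j = 5 := by decide
    rcases hd j t2 t3 ht2 ht3 d23 hj2 hj3 with h4 | rfl
    · exact absurd hv (notK4 5 (by decide) j h4)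
    · exact hv
  -- pin w1 = F 6
  have hw1 : f (F 6) = F 6 := by
    obtain ⟨j, hv, hj5, hjt⟩ := commonF (by decide : (5 : Fin 21).val < 15)
      (hw0 ▸ adjf (by decide : fb 6 5 = true)) (e3 ▸ adjf (by decide : fb 6 3 = true))
    have hd : ∀ (j t : Fin 21), t.val < 4 → fb j 5 = true → fb j t = true →
        j.val < 4 ∨ j = 6 := by decide
    rcases hd j t3 ht3 hj5 hjt with h4 | rfl
    · exact absurd hv (notK4 6 (by decide) j h4)
    · exact hv
  -- pin k4 = F 3
  have hk3 : f (F 3) = F 3 := by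
    have h : (Γg G).Adj (F t3) (F 6) := e3 ▸ hw1 ▸ adjf (by decide : fb 3 6 = true)
    have hd : ∀ t : Fin 21, t.val < 4 → fb t 6 = true → t = 3 := by decide
    rw [e3, hd t3 ht3 h]
  -- pin k3 = F 2
  have hk2 : f (F 2) = F 2 := by
    have h : (Γg G).Adj (F t2) (F 5) := e2 ▸ hw0 ▸ adjf (by decide : fb 2 5 = true)
    have hd : ∀ t : Fin 21, t.val < 4 → fb t 5 = true → t = 2 ∨ t = 3 := by decide
    have u3 : t3 = 3 := by injection e3.symm.trans hk3
    rcases hd t2 ht2 h with h2 | h2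
    · rw [e2, h2]
    · exact absurd (h2.trans u3.symm) d23
  -- generic step: pin the unique second common neighbour
  have step : ∀ (p q r j0 : Fin 21), p.val < 15 →
      (∀ j : Fin 21, fb j p = true → fb j q = true → j = r ∨ j = j0) →
      f (F p) = F p → f (F q) = F q → f (F r) = F r →
      fb j0 p = true → fb j0 q = true → r ≠ j0 → f (F j0) = F j0 := by
    intro p q r j0 hp hu ep eq2 er hj0p hj0q hne
    obtain ⟨j, hv, hjp, hjq⟩ := commonF hp (ep ▸ adjf hj0p) (eq2 ▸ adjf hj0q)
    rcases hu j hjp hjq with rfl | rfl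
    · exact absurd (jeq (hv.trans er.symm)).symm hne
    · exact hv
  have hw2 : f (F 7) = F 7 := step 5 6 3 7 (by decide) (by decide) hw0 hw1 hk3
    (by decide) (by decide) (by decide)
  have hw3 : f (F 8) = F 8 := step 6 7 5 8 (by decide) (by decide) hw1 hw2 hw0
    (by decide) (by decide) (by decide)
  have hw4 : f (F 9) = F 9 := step 7 8 6 9 (by decide) (by decide) hw2 hw3 hw1
    (by decide) (by decide) (by decide)
  have hw5 : f (F 10) = F 10 := step 8 9 7 10 (by decide) (by decide) hw3 hw4 hw2
    (by decide) (by decide) (by decide)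
  have hw6 : f (F 11) = F 11 := step 9 10 8 11 (by decide) (by decide) hw4 hw5 hw3
    (by decide) (by decide) (by decide)
  have hw7 : f (F 12) = F 12 := step 10 11 9 12 (by decide) (by decide) hw5 hw6 hw4
    (by decide) (by decide) (by decide)
  have hw8 : f (F 13) = F 13 := step 11 12 10 13 (by decide) (by decide) hw6 hw7 hw5
    (by decide) (by decide) (by decide)
  have hw9 : f (F 14) = F 14 := step 12 13 11 14 (by decide) (by decide) hw7 hw8 hw6
    (by decide) (by decide) (by decide)
  have hm : f (F 4) = F 4 := step 6 8 7 4 (by decide) (by decide) hw1 hw3 hw2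
    (by decide) (by decide) (by decide)
  -- pin k1 = F 0
  have hk0 : f (F 0) = F 0 := by
    have h : (Γg G).Adj (F t0) (F 4) := e0 ▸ hm ▸ adjf (by decide : fb 0 4 = true)
    have hd : ∀ t : Fin 21, t.val < 4 → fb t 4 = true → t = 0 := by decide
    rw [e0, hd t0 ht0 h]
  -- pin k2 = F 1
  have hk1 : f (F 1) = F 1 := by
    have u0 : t0 = 0 := by injection e0.symm.trans hk0
    have u2 : t2 = 2 := by injection e2.symm.trans hk2
    have u3 : t3 = 3 := by injection e3.symm.trans hk3
    have hd : ∀ u : Fin 21, u.val < 4 → u ≠ 0 → u ≠ 2 → u ≠ 3 → u = 1 := by decide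
    rw [e1, hd t1 ht1 (fun h => d01 (u0.trans h.symm)) (fun h => d12 (h.trans u2.symm))
      (fun h => d13 (h.trans u3.symm))]
  -- pin the apexes
  have hZ0 : f (F 15) = F 15 := step 7 9 8 15 (by decide) (by decide) hw2 hw4 hw3
    (by decide) (by decide) (by decide)
  have hZ1 : f (F 16) = F 16 := step 8 10 9 16 (by decide) (by decide) hw3 hw5 hw4
    (by decide) (by decide) (by decide)
  have hZ2 : f (F 17) = F 17 := step 9 11 10 17 (by decide) (by decide) hw4 hw6 hw5
    (by decide) (by decide) (by decide)
  have hZ3 : f (F 18) = F 18 := step 10 12 11 18 (by decide) (by decide) hw5 hw7 hw6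
    (by decide) (by decide) (by decide)
  have hZ4 : f (F 19) = F 19 := step 11 13 12 19 (by decide) (by decide) hw6 hw8 hw7
    (by decide) (by decide) (by decide)
  have hZ5 : f (F 20) = F 20 := step 12 14 13 20 (by decide) (by decide) hw7 hw9 hw8
    (by decide) (by decide) (by decide)
  intro i
  fin_cases i <;>
    first
      | exact hk0 | exact hk1 | exact hk2 | exact hk3 | exact hm
      | exact hw0 | exact hw1 | exact hw2 | exact hw3 | exact hw4 | exact hw5
      | exact hw6 | exact hw7 | exact hw8 | exact hw9
      | exact hZ0 | exact hZ1 | exact hZ2 | exact hZ3 | exact hZ4 | exact hZ5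


lemma U_eq {c d c' d' : G} {h : WellOrderingRel c d} {h' : WellOrderingRel c' d'}
    (e1 : c = c') (e2 : d = d') : U c d h = U c' d' h' := by
  subst e1; subst e2; rfl

/-! ### the translations -/

def transFun (g : G) : Vt G → Vt G
| F i => F i
| A a => A (g * a)
| S c => S c
| T d => T d
| U c d h => U c d h
| X a b => X (g * a) (g * b)
| Y a b => Y (g * a) (g * b)

lemma transFun_hom (g : G) : ∀ x y : Vt G, (Γg G).Adj x y → (Γg G).Adj (transFun g x) (transFun g y) := by
  intro x y h
  cases x <;> cases y <;>
    simp_all [adjQ, adj0, transFun, mul_inv_rev, mul_assoc, inv_mul_cancel_left]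

/-! ### main classification of bijective homomorphisms -/

theorem main (f : Vt G → Vt G) (hom : ∀ x y, (Γg G).Adj x y → (Γg G).Adj (f x) (f y))
    (hinj : Function.Injective f) (hsur : Function.Surjective f) :
    ∃ g : G, f = transFun g := by
  have hpin := pin f hom hinj
  -- basic edges
  have eAF : ∀ a : G, (Γg G).Adj (A a) (F 15) := fun a => rfl
  have eSF : ∀ c : G, (Γg G).Adj (S c) (F 16) := fun c => rfl
  have eTF : ∀ d : G, (Γg G).Adj (T d) (F 17) := fun d => rfl
  have eUF : ∀ (c d : G) (h : WellOrderingRel c d), (Γg G).Adj (U c d h) (F 18) := fun c d h => rfl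
  have eXF : ∀ a b : G, (Γg G).Adj (X a b) (F 19) := fun a b => rfl
  have eYF : ∀ a b : G, (Γg G).Adj (Y a b) (F 20) := fun a b => rfl
  have eXA : ∀ a b : G, (Γg G).Adj (X a b) (A a) := fun a b => rfl
  have eXS : ∀ a b : G, (Γg G).Adj (X a b) (S (a⁻¹ * b)) := fun a b => rfl
  have eYX : ∀ a b : G, (Γg G).Adj (Y a b) (X a b) := fun a b => ⟨rfl, rfl⟩
  have eYA : ∀ a b : G, (Γg G).Adj (Y a b) (A b) := fun a b => rfl
  have eUS : ∀ (c d : G) (h : WellOrderingRel c d), (Γg G).Adj (U c d h) (S c) := fun c d h => rfl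
  have eUT : ∀ (c d : G) (h : WellOrderingRel c d), (Γg G).Adj (U c d h) (T d) := fun c d h => rfl
  have eTS : ∀ d : G, (Γg G).Adj (T d) (S d) := fun d => rfl
  -- class preservation
  have hA : ∀ a : G, ∃ a', f (A a) = A a' := by
    intro a
    have h : (Γg G).Adj (F 15) (f (A a)) := ((hpin 15) ▸ hom _ _ (eAF a)).symm
    rcases nbrF15 h with he | he | ⟨a', he⟩
    · exact absurd (hinj (he.trans (hpin 7).symm)) (by simp)
    · exact absurd (hinj (he.trans (hpin 9).symm)) (by simp)
    · exact ⟨a', he⟩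
  have hS : ∀ c : G, ∃ c', f (S c) = S c' := by
    intro c
    have h : (Γg G).Adj (F 16) (f (S c)) := ((hpin 16) ▸ hom _ _ (eSF c)).symm
    rcases nbrF16 h with he | he | ⟨c', he⟩
    · exact absurd (hinj (he.trans (hpin 8).symm)) (by simp)
    · exact absurd (hinj (he.trans (hpin 10).symm)) (by simp)
    · exact ⟨c', he⟩
  have hT : ∀ d : G, ∃ d', f (T d) = T d' := by
    intro d
    have h : (Γg G).Adj (F 17) (f (T d)) := ((hpin 17) ▸ hom _ _ (eTF d)).symm
    rcases nbrF17 h with he | he | ⟨d', he⟩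
    · exact absurd (hinj (he.trans (hpin 9).symm)) (by simp)
    · exact absurd (hinj (he.trans (hpin 11).symm)) (by simp)
    · exact ⟨d', he⟩
  have hU : ∀ (c d : G) (h : WellOrderingRel c d), ∃ c' d' h', f (U c d h) = U c' d' h' := by
    intro c d hcd
    have h : (Γg G).Adj (F 18) (f (U c d hcd)) := ((hpin 18) ▸ hom _ _ (eUF c d hcd)).symm
    rcases nbrF18 h with he | he | ⟨c', d', h', he⟩
    · exact absurd (hinj (he.trans (hpin 10).symm)) (by simp)
    · exact absurd (hinj (he.trans (hpin 12).symm)) (by simp)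
    · exact ⟨c', d', h', he⟩
  have hX : ∀ a b : G, ∃ a' b', f (X a b) = X a' b' := by
    intro a b
    have h : (Γg G).Adj (F 19) (f (X a b)) := ((hpin 19) ▸ hom _ _ (eXF a b)).symm
    rcases nbrF19 h with he | he | ⟨a', b', he⟩
    · exact absurd (hinj (he.trans (hpin 11).symm)) (by simp)
    · exact absurd (hinj (he.trans (hpin 13).symm)) (by simp)
    · exact ⟨a', b', he⟩
  have hY : ∀ a b : G, ∃ a' b', f (Y a b) = Y a' b' := by
    intro a b
    have h : (Γg G).Adj (F 20) (f (Y a b)) := ((hpin 20) ▸ hom _ _ (eYF a b)).symm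
    rcases nbrF20 h with he | he | ⟨a', b', he⟩
    · exact absurd (hinj (he.trans (hpin 12).symm)) (by simp)
    · exact absurd (hinj (he.trans (hpin 14).symm)) (by simp)
    · exact ⟨a', b', he⟩
  choose φ hφ using hA
  choose σ hσ using hS
  choose τ hτ using hT
  choose u1 u2 u3 hUe using hU
  choose x1 x2 hXe using hX
  choose y1 y2 hYe using hY
  -- matchings
  have mXA : ∀ a b : G, φ a = x1 a b := by
    intro a b
    have h := hom _ _ (eXA a b)
    rw [hXe a b, hφ a] at h
    exact h
  have mXS : ∀ a b : G, σ (a⁻¹ * b) = (x1 a b)⁻¹ * (x2 a b) := by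
    intro a b
    have h := hom _ _ (eXS a b)
    rw [hXe a b, hσ (a⁻¹ * b)] at h
    exact h
  have mYX : ∀ a b : G, x1 a b = y1 a b ∧ x2 a b = y2 a b := by
    intro a b
    have h := hom _ _ (eYX a b)
    rw [hXe a b, hYe a b] at h
    exact h
  have mYA : ∀ a b : G, φ b = y2 a b := by
    intro a b
    have h := hom _ _ (eYA a b)
    rw [hYe a b, hφ b] at h
    exact h
  have τσ : ∀ d : G, τ d = σ d := by
    intro d
    have h := hom _ _ (eTS d)
    rw [hτ d, hσ d] at h
    exact Eq.symm h
  have mUS : ∀ (c d : G) (h : WellOrderingRel c d), u1 c d h = σ c := by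
    intro c d hcd
    have h := hom _ _ (eUS c d hcd)
    rw [hUe c d hcd, hσ c] at h
    exact Eq.symm h
  have mUT : ∀ (c d : G) (h : WellOrderingRel c d), u2 c d h = σ d := by
    intro c d hcd
    have h := hom _ _ (eUT c d hcd)
    rw [hUe c d hcd, hτ d] at h
    exact h.trans (τσ d)
  -- σ is bijective
  have σinj : Function.Injective σ := by
    intro c c' h
    have : f (S c) = f (S c') := by rw [hσ c, hσ c', h]
    have := hinj this
    injection this
  have σsur : Function.Surjective σ := by
    intro c'
    obtain ⟨v, hv⟩ := hsur (S c')
    cases v with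
    | F i => rw [hpin i] at hv; exact absurd hv (by simp)
    | A a => rw [hφ a] at hv; exact absurd hv (by simp)
    | S c => rw [hσ c] at hv; exact ⟨c, by injection hv⟩
    | T d => rw [hτ d] at hv; exact absurd hv (by simp)
    | U c d h => rw [hUe c d h] at hv; exact absurd hv (by simp)
    | X a b => rw [hXe a b] at hv; exact absurd hv (by simp)
    | Y a b => rw [hYe a b] at hv; exact absurd hv (by simp)
  have σmono : ∀ c d : G, WellOrderingRel c d → WellOrderingRel (σ c) (σ d) := by
    intro c d hcd
    have h := u3 c d hcd
    rwa [mUS c d hcd, mUT c d hcd] at h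
  -- rigidity of the well-order
  have isofix : ∀ (e : @RelIso G G WellOrderingRel WellOrderingRel) (c : G), e c = c := by
    intro e c
    have h : e.toInitialSeg = (RelIso.refl (@WellOrderingRel G)).toInitialSeg :=
      Subsingleton.elim _ _
    have h2 := congrArg
      (fun (F : @InitialSeg G G WellOrderingRel WellOrderingRel) => (F : G → G) c) h
    simpa using h2
  have σid : ∀ c : G, σ c = c := by
    intro c
    exact isofix ⟨Equiv.ofBijective σ ⟨σinj, σsur⟩, by
      intro a b
      constructor
      · intro h
        rcases trichotomous_of (WellOrderingRel (α := G)) a b with h' | h' | h'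
        · exact h'
        · subst h'
          exact absurd h (irrefl_of (WellOrderingRel (α := G)) _)
        · exact absurd h (asymm_of (WellOrderingRel (α := G)) (σmono _ _ h'))
      · exact σmono a b⟩ c
  -- φ is a left translation
  have key : ∀ a b : G, (φ a)⁻¹ * (φ b) = a⁻¹ * b := by
    intro a b
    have h := mXS a b
    rw [σid, ← mXA a b, (mYX a b).2, ← mYA a b] at h
    exact h.symm
  refine ⟨φ 1, funext fun v => ?_⟩
  have φeq : ∀ b : G, φ b = φ 1 * b := by
    intro b
    have h := key 1 b
    rw [inv_one, one_mul] at h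
    exact inv_mul_eq_iff_eq_mul.mp h
  cases v with
  | F i => simpa [transFun] using hpin i
  | A a => rw [transFun, hφ a, φeq a]
  | S c => rw [transFun, hσ c, σid c]
  | T d => rw [transFun, hτ d, τσ d, σid d]
  | U c d h =>
    have h1 := mUS c d h
    have h2 := mUT c d h
    rw [σid] at h1 h2
    rw [transFun]
    exact (hUe c d h).trans (U_eq h1 h2)
  | X a b =>
    rw [transFun, hXe a b, ← mXA a b, φeq a]
    congr 1
    rw [(mYX a b).2, ← mYA a b, φeq b]
  | Y a b =>
    rw [transFun, hYe a b, ← (mYX a b).1, ← mXA a b, φeq a]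
    congr 1
    rw [← mYA a b, φeq b]

/-! ### assembly -/

def transPerm (g : G) : Equiv.Perm (Vt G) where
  toFun := transFun g
  invFun := transFun g⁻¹
  left_inv := by intro v; cases v <;> simp [transFun]
  right_inv := by intro v; cases v <;> simp [transFun]

lemma transPerm_mem (g : G) : transPerm g ∈ autSubgroup (Γg G) := by
  intro a b
  constructor
  · intro h
    have h2 := transFun_hom g⁻¹ _ _ h
    have ea : transFun g⁻¹ (transPerm g a) = a := (transPerm g).left_inv a
    have eb : transFun g⁻¹ (transPerm g b) = b := (transPerm g).left_inv b
    rwa [ea, eb] at h2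
  · intro h
    exact transFun_hom g _ _ h

def Ψ (G : Type u) [Group G] : G →* (autSubgroup (Γg G)) where
  toFun g := ⟨transPerm g, transPerm_mem g⟩
  map_one' := by
    apply Subtype.ext
    apply Equiv.ext
    intro v
    cases v <;> simp [transPerm, transFun]
  map_mul' g h := by
    apply Subtype.ext
    apply Equiv.ext
    intro v
    cases v <;> simp [transPerm, transFun, mul_assoc]

lemma Ψ_bij : Function.Bijective (Ψ G) := by
  constructor
  · intro g g' h
    have h2 : transPerm g (A (1 : G)) = transPerm g' (A 1) := by
      rw [show transPerm g = ((Ψ G g : autSubgroup (Γg G)) : Equiv.Perm (Vt G)) from rfl, h]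
      rfl
    have h3 : A (g * 1) = A (g' * 1) := h2
    have h4 : g * 1 = g' * 1 := by injection h3
    simpa using h4
  · intro e
    obtain ⟨p, hp⟩ := e
    have hom : ∀ x y : Vt G, (Γg G).Adj x y → (Γg G).Adj (p x) (p y) :=
      fun x y h => (hp x y).mpr h
    obtain ⟨g, hg⟩ := main (⇑p) hom p.injective p.surjective
    refine ⟨g, Subtype.ext (Equiv.ext fun v => ?_)⟩
    have := congrFun hg v
    exact this.symm

end Vt

/-- For every group `G` there is a simple graph `Γ` all of whose bimorphisms are
automorphisms and whose automorphism group is isomorphic to `G`; in particular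
`Bi(Γ) ≅ G`. -/
theorem exists_graph_bimorphisms_are_automorphisms_aut_iso {G : Type u} [Group G] :
    ∃ (V : Type u) (Γ : SimpleGraph V),
      (∀ f : V → V, Function.Bijective f → (∀ a b, Γ.Adj a b → Γ.Adj (f a) (f b)) →
        ∃ e : Equiv.Perm V, e ∈ autSubgroup Γ ∧ ⇑e = f) ∧
      Nonempty (autSubgroup Γ ≃* G) := by
  refine ⟨Vt G, Vt.Γg G, ?_, ?_⟩
  · intro f hbij hf
    obtain ⟨g, rfl⟩ := Vt.main f hf hbij.1 hbij.2
    exact ⟨Vt.transPerm g, Vt.transPerm_mem g, rfl⟩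
  · exact ⟨(MulEquiv.ofBijective (Vt.Ψ G) Vt.Ψ_bij).symm⟩
end

section
/- A monoid M is isomorphic to the bimorphism monoid of some simple graph if and only if M embeds into a group; that is, there exist a vertex type V and a simple graph Γ on V with Bi(Γ) ≅ M if and only if there exist a group G and an injective monoid homomorphism from M into G. -/
universe u

open Cardinal

namespace BiMo

variable (G : Type u) [Group G]

/-- The ambient group: `G` with an extra infinite cyclic direction. -/
abbrev GZ : Type u := G × Multiplicative ℤ

def e1 : GZ G := (1, Multiplicative.ofAdd 1)

theorem e1_ne_one : e1 G ≠ 1 := fun h => by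
  have := congrArg (fun x : GZ G => Multiplicative.toAdd x.2) h
  simpa [e1] using this

theorem e1_sq_ne_one : e1 G * e1 G ≠ 1 := fun h => by
  have := congrArg (fun x : GZ G => Multiplicative.toAdd x.2) h
  simp only [e1, Prod.snd_mul, toAdd_mul, toAdd_ofAdd, Prod.snd_one, toAdd_one] at this
  omega

/-- Nonidentity elements of `GZ G`, used both as "difference tags" and as pair gadget data. -/
def Q : Type u := {x : GZ G // x ≠ 1}

instance : Infinite (Q G) :=
  Infinite.of_injective (fun n : ℕ => (⟨(1, Multiplicative.ofAdd ((n : ℤ) + 1)), fun h => by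
      have := congrArg (fun x : GZ G => Multiplicative.toAdd x.2) h
      simp only [toAdd_ofAdd, Prod.snd_one, toAdd_one] at this
      omega⟩ : Q G)) (by
    intro a b hab
    have := congrArg (fun x : Q G => Multiplicative.toAdd x.1.2) hab
    simp only [toAdd_ofAdd] at this
    omega)

/-- Index data for the scaffold: one index per tag plus three sort markers. -/
def T : Type u := Q G ⊕ Fin 3

instance : Infinite (T G) := by unfold T; infer_instance

/-- The cardinal of the tag set. -/
noncomputable def kappa : Cardinal.{u} := #(T G)

theorem aleph0_le_kappa : ℵ₀ ≤ kappa G := Cardinal.aleph0_le_mk _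

/-- The scaffold index well-order. -/
abbrev I : Type u := (kappa G).ord.ToType

theorem mk_I : #(I G) = kappa G := by
  rw [Cardinal.mk_toType, Cardinal.card_ord]

instance : IsWellOrder (I G) (· < ·) := isWellOrder_lt

theorem mk_lt_of_lt (i : I G) : #{j : I G // j < i} < kappa G := by
  rw [← Ordinal.card_typein (r := ((· < ·) : I G → I G → Prop)), ← Cardinal.lt_ord]
  have := Ordinal.typein_lt_type ((· < ·) : I G → I G → Prop) i
  rwa [Ordinal.type_toType] at this

theorem kappa_le_mk_gt (i : I G) : kappa G ≤ #{j : I G // i < j} := by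
  by_contra hlt
  push_neg at hlt
  have h1 : #{j : I G // j ≤ i} < kappa G := by
    have hsub : {j : I G | j ≤ i} ⊆ insert i {j : I G | j < i} := by
      intro j hj
      simp only [Set.mem_setOf_eq] at hj
      rcases hj.lt_or_eq with h | h
      · exact Set.mem_insert_of_mem _ h
      · simp [h]
    calc #{j : I G // j ≤ i} ≤ #(insert i {j : I G | j < i} : Set (I G)) :=
          Cardinal.mk_le_mk_of_subset hsub
      _ ≤ #{j : I G | j < i} + 1 := Cardinal.mk_insert_le
      _ < kappa G := Cardinal.add_lt_of_lt (aleph0_le_kappa G) (mk_lt_of_lt G i)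
          (lt_of_lt_of_le Cardinal.one_lt_aleph0 (aleph0_le_kappa G))
  have hsum := Cardinal.mk_sum_compl ({j : I G | j ≤ i} : Set (I G))
  have hc : #(↥({j : I G | j ≤ i}ᶜ)) = #{j : I G // i < j} := by
    apply Cardinal.mk_congr
    apply Equiv.subtypeEquivRight
    intro j
    simp [not_le]
  rw [hc] at hsum
  have : #(I G) < kappa G := by
    rw [← hsum]
    exact Cardinal.add_lt_of_lt (aleph0_le_kappa G) h1 hlt
  rw [mk_I] at this
  exact lt_irrefl _ this

theorem nonempty_gt (i : I G) : ∃ j : I G, i < j := by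
  have : Infinite {j : I G // i < j} :=
    Cardinal.infinite_iff.mpr (le_trans (aleph0_le_kappa G) (kappa_le_mk_gt G i))
  obtain ⟨j, hj⟩ := (Classical.arbitrary {j : I G // i < j} : {j : I G // i < j})
  exact ⟨j, hj⟩

/-- The tagging bijection. -/
noncomputable def tagOf : T G ≃ I G :=
  Classical.choice (Cardinal.eq.mp (by rw [mk_I, kappa]))

noncomputable def tagQ (q : Q G) : I G := tagOf G (Sum.inl q)
noncomputable def tagS : I G := tagOf G (Sum.inr 2)
noncomputable def markerB (g : GZ G) : I G :=
  tagOf G (Sum.inr (if Even (Multiplicative.toAdd g.2) then 0 else 1))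

theorem tagQ_ne_tagS (q : Q G) : tagQ G q ≠ tagS G := fun h =>
  absurd ((tagOf G).injective h) (by simp [Sum.inl_ne_inr])

theorem tagQ_ne_markerB (q : Q G) (g : GZ G) : tagQ G q ≠ markerB G g := fun h =>
  absurd ((tagOf G).injective h) (by simp [markerB, Sum.inl_ne_inr])

theorem tagS_ne_markerB (g : GZ G) : tagS G ≠ markerB G g := fun h => by
  have h2 := Sum.inr_injective ((tagOf G).injective h)
  revert h2
  split <;> decide

theorem tagQ_inj {q q' : Q G} (h : tagQ G q = tagQ G q') : q = q' :=
  Sum.inl_injective ((tagOf G).injective h)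

theorem markerB_mul_e1 (g : GZ G) : markerB G (g * e1 G) ≠ markerB G g := fun h => by
  have h2 := Sum.inr_injective ((tagOf G).injective h)
  have he : Multiplicative.toAdd ((g * e1 G).2) = Multiplicative.toAdd g.2 + 1 := by
    simp [e1]
  rw [he] at h2
  rcases Int.even_or_odd (Multiplicative.toAdd g.2) with hev | hod
  · rw [if_neg (by rw [Int.even_add_one]; exact fun hc => hc hev), if_pos hev] at h2
    exact absurd h2 (by decide)
  · have hne : ¬ Even (Multiplicative.toAdd g.2) := Int.not_even_iff_odd.mpr hod
    rw [if_pos (Int.even_add_one.mpr hne), if_neg hne] at h2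
    exact absurd h2 (by decide)

/-- Vertices of the rigid graph. -/
inductive Vtx (G : Type u) [Group G] : Type u
  | l (i : I G)
  | r (i : I G)
  | u (i : I G)
  | b (g : GZ G)
  | p1 (g : GZ G) (q : Q G)
  | p2 (g : GZ G) (q : Q G)

variable (S : Set (GZ G))

open Vtx

/-- Oriented adjacency rules. -/
noncomputable def rel : Vtx G → Vtx G → Prop
  | .l i, .r j => i < j
  | .r i, .u j => i < j
  | .u i, .l j => i < j
  | .p1 _ q, .l i => i = tagQ G q
  | .p2 _ _, .l i => i = tagS G
  | .b g, .l i => i = markerB G g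
  | .p1 g _, .b g' => g' = g
  | .p1 g q, .p2 g' q' => g' = g ∧ q' = q
  | .p2 g q, .b g' => g' = g ∨ g' = g * q.1
  | .b g, .b g' => g' = g * e1 G ∧ g ∈ S
  | _, _ => False

/-- The graph. -/
noncomputable def Γ : SimpleGraph (Vtx G) where
  Adj v w := rel G S v w ∨ rel G S w v
  symm := ⟨fun v w h => h.symm⟩
  loopless := by
    constructor
    intro v hv
    cases v <;> simp only [rel] at hv <;> rcases hv with h | h
    case b.inl g | b.inr g =>
      exact absurd h.1 (fun hh => (e1_ne_one G) (by
        have := congrArg (fun x => g⁻¹ * x) hh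
        simpa using this.symm))
    all_goals exact h

theorem adj_comm' {v w : Vtx G} : (Γ G S).Adj v w ↔ (Γ G S).Adj w v := ⟨fun h => h.symm, fun h => h.symm⟩

@[simp] theorem gamma_adj {v w : Vtx G} : (Γ G S).Adj v w ↔ rel G S v w ∨ rel G S w v := Iff.rfl

theorem adj_l {i : I G} {w : Vtx G} (h : (Γ G S).Adj (l i) w) :
    (∃ j, w = r j ∧ i < j) ∨ (∃ j, w = u j ∧ j < i) ∨
    (∃ g q, w = p1 g q ∧ i = tagQ G q) ∨ (∃ g q, w = p2 g q ∧ i = tagS G) ∨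
    (∃ g, w = b g ∧ i = markerB G g) := by
  rw [gamma_adj] at h
  cases w with
  | l j => simp [rel] at h
  | r j => exact Or.inl ⟨j, rfl, by simpa [rel] using h⟩
  | u j => exact Or.inr (Or.inl ⟨j, rfl, by simpa [rel] using h⟩)
  | p1 g q => exact Or.inr (Or.inr (Or.inl ⟨g, q, rfl, by simpa [rel] using h⟩))
  | p2 g q => exact Or.inr (Or.inr (Or.inr (Or.inl ⟨g, q, rfl, by simpa [rel] using h⟩)))
  | b g => exact Or.inr (Or.inr (Or.inr (Or.inr ⟨g, rfl, by simpa [rel] using h⟩)))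

theorem adj_r {i : I G} {w : Vtx G} (h : (Γ G S).Adj (r i) w) :
    (∃ j, w = l j ∧ j < i) ∨ (∃ j, w = u j ∧ i < j) := by
  rw [gamma_adj] at h
  cases w with
  | l j => exact Or.inl ⟨j, rfl, by simpa [rel] using h⟩
  | u j => exact Or.inr ⟨j, rfl, by simpa [rel] using h⟩
  | r j => simp [rel] at h
  | p1 g q => simp [rel] at h
  | p2 g q => simp [rel] at h
  | b g => simp [rel] at h

theorem adj_u {i : I G} {w : Vtx G} (h : (Γ G S).Adj (u i) w) :
    (∃ j, w = r j ∧ j < i) ∨ (∃ j, w = l j ∧ i < j) := by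
  rw [gamma_adj] at h
  cases w with
  | r j => exact Or.inl ⟨j, rfl, by simpa [rel] using h⟩
  | l j => exact Or.inr ⟨j, rfl, by simpa [rel] using h⟩
  | u j => simp [rel] at h
  | p1 g q => simp [rel] at h
  | p2 g q => simp [rel] at h
  | b g => simp [rel] at h

theorem adj_b {g : GZ G} {w : Vtx G} (h : (Γ G S).Adj (b g) w) :
    w = l (markerB G g) ∨ (∃ q, w = p1 g q) ∨ (∃ g' q, w = p2 g' q ∧ (g = g' ∨ g = g' * q.1)) ∨
    (w = b (g * e1 G) ∧ g ∈ S) ∨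
    (∃ x, w = b x ∧ g = x * e1 G ∧ x ∈ S) := by
  rw [gamma_adj] at h
  cases w with
  | l j => refine Or.inl ?_
           have : j = markerB G g := by simpa [rel] using h
           rw [this]
  | r j => simp [rel] at h
  | u j => simp [rel] at h
  | p1 g' q => have : g = g' := by simpa [rel] using h
               exact Or.inr (Or.inl ⟨q, by rw [this]⟩)
  | p2 g' q => have : g = g' ∨ g = g' * q.1 := by simpa [rel] using h
               exact Or.inr (Or.inr (Or.inl ⟨g', q, rfl, this⟩))
  | b g' =>
      simp only [rel, false_or, or_false] at h
      rcases h with ⟨h1, h2⟩ | ⟨h1, h2⟩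
      · exact Or.inr (Or.inr (Or.inr (Or.inl ⟨by rw [h1], h2⟩)))
      · exact Or.inr (Or.inr (Or.inr (Or.inr ⟨g', rfl, h1, h2⟩)))

theorem adj_p1 {g : GZ G} {q : Q G} {w : Vtx G} (h : (Γ G S).Adj (p1 g q) w) :
    w = l (tagQ G q) ∨ w = b g ∨ w = p2 g q := by
  rw [gamma_adj] at h
  cases w with
  | l j => have : j = tagQ G q := by simpa [rel] using h
           exact Or.inl (by rw [this])
  | r j => simp [rel] at h
  | u j => simp [rel] at h
  | p1 g' q' => simp [rel] at h
  | p2 g' q' => have : g' = g ∧ q' = q := by simpa [rel] using h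
                exact Or.inr (Or.inr (by rw [this.1, this.2]))
  | b g' => have : g' = g := by simpa [rel] using h
            exact Or.inr (Or.inl (by rw [this]))

theorem adj_p2 {g : GZ G} {q : Q G} {w : Vtx G} (h : (Γ G S).Adj (p2 g q) w) :
    w = l (tagS G) ∨ w = p1 g q ∨ w = b g ∨ w = b (g * q.1) := by
  rw [gamma_adj] at h
  cases w with
  | l j => have : j = tagS G := by simpa [rel] using h
           exact Or.inl (by rw [this])
  | r j => simp [rel] at h
  | u j => simp [rel] at h
  | p2 g' q' => simp [rel] at h
  | p1 g' q' => have : g = g' ∧ q = q' := by simpa [rel] using h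
                exact Or.inr (Or.inl (by rw [this.1, this.2]))
  | b g' => have : g' = g ∨ g' = g * q.1 := by simpa [rel] using h
            rcases this with h1 | h1
            · exact Or.inr (Or.inr (Or.inl (by rw [h1])))
            · exact Or.inr (Or.inr (Or.inr (by rw [h1])))

theorem adj_lr {i j : I G} (h : i < j) : (Γ G S).Adj (l i) (r j) := Or.inl h
theorem adj_ru {i j : I G} (h : i < j) : (Γ G S).Adj (r i) (u j) := Or.inl h
theorem adj_ul {i j : I G} (h : i < j) : (Γ G S).Adj (u i) (l j) := Or.inl h
theorem adj_p1l {g : GZ G} {q : Q G} : (Γ G S).Adj (p1 g q) (l (tagQ G q)) := Or.inl rfl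
theorem adj_p2l {g : GZ G} {q : Q G} : (Γ G S).Adj (p2 g q) (l (tagS G)) := Or.inl rfl
theorem adj_bl {g : GZ G} : (Γ G S).Adj (b g) (l (markerB G g)) := Or.inl rfl
theorem adj_p1b {g : GZ G} {q : Q G} : (Γ G S).Adj (p1 g q) (b g) := Or.inl rfl
theorem adj_p1p2 {g : GZ G} {q : Q G} : (Γ G S).Adj (p1 g q) (p2 g q) := Or.inl ⟨rfl, rfl⟩
theorem adj_p2b {g : GZ G} {q : Q G} : (Γ G S).Adj (p2 g q) (b g) := Or.inl (Or.inl rfl)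
theorem adj_p2b' {g : GZ G} {q : Q G} : (Γ G S).Adj (p2 g q) (b (g * q.1)) := Or.inl (Or.inr rfl)
theorem adj_bb {g : GZ G} (hg : g ∈ S) : (Γ G S).Adj (b g) (b (g * e1 G)) := Or.inl ⟨rfl, hg⟩

/-- The "moving" vertices. -/
def isW : Vtx G → Prop
  | .b _ => True
  | .p1 _ _ => True
  | .p2 _ _ => True
  | _ => False

/-- No triangle of `Γ` contains a scaffold vertex. -/
theorem tri (x y z : Vtx G) (hxy : (Γ G S).Adj x y) (hyz : (Γ G S).Adj y z)
    (hzx : (Γ G S).Adj z x) : isW G x := by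
  have hyzs := hyz
  cases x with
  | b g => trivial
  | p1 g q => trivial
  | p2 g q => trivial
  | l i =>
    exfalso
    rcases adj_l G S hxy with ⟨j, rfl, hj⟩ | ⟨j, rfl, hj⟩ | ⟨g, q, rfl, hq⟩ | ⟨g, q, rfl, hq⟩ |
        ⟨g, rfl, hq⟩ <;>
      rcases adj_l G S hzx.symm with ⟨k, rfl, hk⟩ | ⟨k, rfl, hk⟩ | ⟨g', q', rfl, hq'⟩ |
        ⟨g', q', rfl, hq'⟩ | ⟨g', rfl, hq'⟩
    -- y = r j cases
    · exact absurd hyz (by simp [rel])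
    · rcases adj_r G S hyz with ⟨m, hm, hmlt⟩ | ⟨m, hm, hmlt⟩
      · exact absurd hm (by simp)
      · cases hm
        exact lt_irrefl i (lt_trans (lt_trans hj hmlt) hk)
    · exact absurd hyz (by simp [rel])
    · exact absurd hyz (by simp [rel])
    · exact absurd hyz (by simp [rel])
    -- y = u j cases
    · rcases adj_u G S hyz with ⟨m, hm, hmlt⟩ | ⟨m, hm, hmlt⟩
      · cases hm
        exact lt_irrefl i (lt_trans (lt_trans hk hmlt) hj)
      · exact absurd hm (by simp)
    · exact absurd hyz (by simp [rel])
    · exact absurd hyz (by simp [rel])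
    · exact absurd hyz (by simp [rel])
    · exact absurd hyz (by simp [rel])
    -- y = p1 g q cases
    · exact absurd hyz (by simp [rel])
    · exact absurd hyz (by simp [rel])
    · exact absurd hyz (by simp [rel])
    · exact (tagQ_ne_tagS G q) (hq ▸ hq')
    · exact (tagQ_ne_markerB G q g') (hq ▸ hq')
    -- y = p2 g q cases
    · exact absurd hyz (by simp [rel])
    · exact absurd hyz (by simp [rel])
    · exact (tagQ_ne_tagS G q') (hq' ▸ hq)
    · exact absurd hyz (by simp [rel])
    · exact (tagS_ne_markerB G g') (hq ▸ hq')
    -- y = b g cases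
    · exact absurd hyz (by simp [rel])
    · exact absurd hyz (by simp [rel])
    · exact (tagQ_ne_markerB G q' g) (hq' ▸ hq)
    · exact (tagS_ne_markerB G g) (hq' ▸ hq)
    · -- two b's adjacent with the same marker
      rcases adj_b G S hyz with h1 | ⟨q, h1⟩ | ⟨g'', q, h1, h2⟩ | ⟨h1, h2⟩ | ⟨x, h1, h2, h3⟩
      · simp at h1
      · simp at h1
      · simp at h1
      · cases h1
        exact (markerB_mul_e1 G g) (hq'.symm.trans hq)
      · cases h1
        exact (markerB_mul_e1 G g') (by rw [← h2]; exact hq.symm.trans hq')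
  | r i =>
    exfalso
    rcases adj_r G S hxy with ⟨j, rfl, hj⟩ | ⟨j, rfl, hj⟩ <;>
      rcases adj_r G S hzx.symm with ⟨k, rfl, hk⟩ | ⟨k, rfl, hk⟩
    · exact absurd hyz (by simp [rel])
    · rcases adj_l G S hyz with ⟨m, hm, hmlt⟩ | ⟨m, hm, hmlt⟩ | ⟨g, q, hm, _⟩ | ⟨g, q, hm, _⟩ |
        ⟨g, hm, _⟩
      · exact absurd hm (by simp)
      · cases hm; exact lt_irrefl i (lt_trans (lt_trans hk hmlt) hj)
      · exact absurd hm (by simp)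
      · exact absurd hm (by simp)
      · exact absurd hm (by simp)
    · rcases adj_u G S hyz with ⟨m, hm, hmlt⟩ | ⟨m, hm, hmlt⟩
      · exact absurd hm (by simp)
      · cases hm; exact lt_irrefl i (lt_trans (lt_trans hj hmlt) hk)
    · exact absurd hyz (by simp [rel])
  | u i =>
    exfalso
    rcases adj_u G S hxy with ⟨j, rfl, hj⟩ | ⟨j, rfl, hj⟩ <;>
      rcases adj_u G S hzx.symm with ⟨k, rfl, hk⟩ | ⟨k, rfl, hk⟩
    · exact absurd hyz (by simp [rel])
    · rcases adj_r G S hyz with ⟨m, hm, hmlt⟩ | ⟨m, hm, hmlt⟩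
      · cases hm; exact lt_irrefl i (lt_trans (lt_trans hk hmlt) hj)
      · exact absurd hm (by simp)
    · rcases adj_l G S hyz with ⟨m, hm, hmlt⟩ | ⟨m, hm, hmlt⟩ | ⟨g, q, hm, _⟩ | ⟨g, q, hm, _⟩ |
        ⟨g, hm, _⟩
      · cases hm; exact lt_irrefl i (lt_trans (lt_trans hj hmlt) hk)
      · exact absurd hm (by simp)
      · exact absurd hm (by simp)
      · exact absurd hm (by simp)
      · exact absurd hm (by simp)
    · exact absurd hyz (by simp [rel])

def q0 : Q G := ⟨e1 G, e1_ne_one G⟩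

/-- Every moving vertex lies in a triangle. -/
theorem w_triangle (x : Vtx G) (hx : isW G x) :
    ∃ y z, (Γ G S).Adj x y ∧ (Γ G S).Adj y z ∧ (Γ G S).Adj z x := by
  cases x with
  | l i => exact absurd hx (by simp [isW])
  | r i => exact absurd hx (by simp [isW])
  | u i => exact absurd hx (by simp [isW])
  | b g =>
    exact ⟨p1 g (q0 G), p2 g (q0 G), (adj_p1b G S).symm, adj_p1p2 G S, adj_p2b G S⟩
  | p1 g q => exact ⟨p2 g q, b g, adj_p1p2 G S, adj_p2b G S, (adj_p1b G S).symm⟩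
  | p2 g q => exact ⟨b g, p1 g q, adj_p2b G S, (adj_p1b G S).symm, adj_p1p2 G S⟩

/-- The neighbourhood of a vertex, as a set. -/
def nb (v : Vtx G) : Set (Vtx G) := {w | (Γ G S).Adj v w}

/-- Vertices with `kappa`-sized neighbourhoods. -/
def Big (v : Vtx G) : Prop := kappa G ≤ #(nb G S v)

theorem big_l (i : I G) : Big G S (l i) := by
  refine le_trans (kappa_le_mk_gt G i) (Cardinal.mk_le_of_injective (f := fun j =>
    (⟨r j.1, adj_lr G S j.2⟩ : nb G S (l i))) ?_)
  intro a b hab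
  simpa [Subtype.ext_iff] using hab

theorem big_r (i : I G) : Big G S (r i) := by
  refine le_trans (kappa_le_mk_gt G i) (Cardinal.mk_le_of_injective (f := fun j =>
    (⟨u j.1, adj_ru G S j.2⟩ : nb G S (r i))) ?_)
  intro a b hab
  simpa [Subtype.ext_iff] using hab

theorem big_u (i : I G) : Big G S (u i) := by
  refine le_trans (kappa_le_mk_gt G i) (Cardinal.mk_le_of_injective (f := fun j =>
    (⟨l j.1, adj_ul G S j.2⟩ : nb G S (u i))) ?_)
  intro a b hab
  simpa [Subtype.ext_iff] using hab

theorem small_p1 (g : GZ G) (q : Q G) : ¬ Big G S (p1 g q) := by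
  intro hbig
  have hsub : nb G S (p1 g q) ⊆ {l (tagQ G q), b g, p2 g q} := by
    intro w hw
    rcases adj_p1 G S hw with h | h | h <;> simp [h]
  have : #(nb G S (p1 g q)) < ℵ₀ :=
    lt_of_le_of_lt (Cardinal.mk_le_mk_of_subset hsub)
      (lt_of_le_of_lt (Cardinal.mk_le_mk_of_subset (Set.Subset.refl _))
        ((Set.toFinite _).lt_aleph0))
  exact absurd (lt_of_lt_of_le this (aleph0_le_kappa G)) (not_lt_of_ge hbig)

theorem small_p2 (g : GZ G) (q : Q G) : ¬ Big G S (p2 g q) := by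
  intro hbig
  have hsub : nb G S (p2 g q) ⊆ {l (tagS G), p1 g q, b g, b (g * q.1)} := by
    intro w hw
    rcases adj_p2 G S hw with h | h | h | h <;> simp [h]
  have : #(nb G S (p2 g q)) < ℵ₀ :=
    lt_of_le_of_lt (Cardinal.mk_le_mk_of_subset hsub) ((Set.toFinite _).lt_aleph0)
  exact absurd (lt_of_lt_of_le this (aleph0_le_kappa G)) (not_lt_of_ge hbig)

/-- Big neighbours of a base vertex lie in an explicit 3-element set. -/
theorem b_big_nbrs {g : GZ G} {w : Vtx G} (hw : (Γ G S).Adj (b g) w) (hbig : Big G S w) :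
    w ∈ ({l (markerB G g), b (g * e1 G), b (g * (e1 G)⁻¹)} : Set (Vtx G)) := by
  rcases adj_b G S hw with h | ⟨q, h⟩ | ⟨g', q, h, h2⟩ | ⟨h, h2⟩ | ⟨x, h, h2, h3⟩
  · simp [h]
  · rw [h] at hbig; exact absurd hbig (small_p1 G S g q)
  · rw [h] at hbig; exact absurd hbig (small_p2 G S g' q)
  · simp [h]
  · have : x = g * (e1 G)⁻¹ := by rw [h2]; group
    rw [h, this]
    simp

theorem kappa_not_le_finite {s : Set (Vtx G)} (hs : s.Finite) : ¬ kappa G ≤ #s := fun h =>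
  absurd ((lt_of_le_of_lt h hs.lt_aleph0).trans_le (aleph0_le_kappa G)) (lt_irrefl _)

section Rigid

variable {G S}
variable {f : Vtx G → Vtx G} (hinj : Function.Injective f)
  (hadj : ∀ a c : Vtx G, (Γ G S).Adj a c → (Γ G S).Adj (f a) (f c))

include hinj hadj

theorem big_map {v : Vtx G} (hv : Big G S v) : Big G S (f v) := by
  refine le_trans hv (Cardinal.mk_le_of_injective (f := fun w =>
    (⟨f w.1, hadj _ _ w.2⟩ : nb G S (f v))) ?_)
  intro a c hac
  have := hinj (congrArg Subtype.val hac)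
  exact Subtype.ext this

theorem fW {v : Vtx G} (hv : isW G v) : isW G (f v) := by
  obtain ⟨y, z, h1, h2, h3⟩ := w_triangle G S v hv
  exact tri G S (f v) (f y) (f z) (hadj _ _ h1) (hadj _ _ h2) (hadj _ _ h3)

theorem family_contra {a : Vtx G} {i : I G} (F : {j : I G // i < j} → Vtx G)
    (hFinj : Function.Injective F) (hFadj : ∀ j, (Γ G S).Adj a (F j))
    (hFbig : ∀ j, Big G S (F j)) (y : GZ G) (hfa : f a = b y) : False := by
  have key : ∀ j, f (F j) ∈
      ({l (markerB G y), b (y * e1 G), b (y * (e1 G)⁻¹)} : Set (Vtx G)) := by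
    intro j
    refine b_big_nbrs G S ?_ (big_map hinj hadj (hFbig j))
    have := hadj _ _ (hFadj j)
    rwa [hfa] at this
  have hk : kappa G ≤ #({l (markerB G y), b (y * e1 G), b (y * (e1 G)⁻¹)} : Set (Vtx G)) := by
    refine le_trans (kappa_le_mk_gt G i) (Cardinal.mk_le_of_injective
      (f := fun j => ⟨f (F j), key j⟩) ?_)
    intro a' c' h
    exact hFinj (hinj (congrArg Subtype.val h))
  exact kappa_not_le_finite G (Set.toFinite _) hk

theorem f_anchor {a : Vtx G} (ha : ¬ isW G a) :
    (∃ i, f a = l i) ∨ (∃ i, f a = r i) ∨ (∃ i, f a = u i) := by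
  have habig : Big G S a := by
    cases a with
    | l i => exact big_l G S i
    | r i => exact big_r G S i
    | u i => exact big_u G S i
    | b g => exact absurd (by trivial) ha
    | p1 g q => exact absurd (by trivial) ha
    | p2 g q => exact absurd (by trivial) ha
  have hbig : Big G S (f a) := big_map hinj hadj habig
  cases hfa : f a with
  | l i => exact Or.inl ⟨i, rfl⟩
  | r i => exact Or.inr (Or.inl ⟨i, rfl⟩)
  | u i => exact Or.inr (Or.inr ⟨i, rfl⟩)
  | p1 g q => rw [hfa] at hbig; exact absurd hbig (small_p1 G S g q)
  | p2 g q => rw [hfa] at hbig; exact absurd hbig (small_p2 G S g q)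
  | b y =>
    exfalso
    cases a with
    | b g => exact absurd (by trivial) ha
    | p1 g q => exact absurd (by trivial) ha
    | p2 g q => exact absurd (by trivial) ha
    | l i =>
      refine family_contra hinj hadj (a := l i) (i := i) (fun j => r j.1) ?_
        (fun j => adj_lr G S j.2) (fun j => big_r G S j.1) y hfa
      intro a' c' h
      exact Subtype.ext (by injection h)
    | r i =>
      refine family_contra hinj hadj (a := r i) (i := i) (fun j => u j.1) ?_
        (fun j => adj_ru G S j.2) (fun j => big_u G S j.1) y hfa
      intro a' c' h
      exact Subtype.ext (by injection h)
    | u i =>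
      refine family_contra hinj hadj (a := u i) (i := i) (fun j => l j.1) ?_
        (fun j => adj_ul G S j.2) (fun j => big_l G S j.1) y hfa
      intro a' c' h
      exact Subtype.ext (by injection h)

theorem client_exists (i : I G) : ∃ w, (Γ G S).Adj (l i) w ∧ isW G w := by
  have hi : tagOf G ((tagOf G).symm i) = i := (tagOf G).apply_symm_apply i
  rcases h : (tagOf G).symm i with q | k
  · refine ⟨p1 1 q, ?_, trivial⟩
    have ht : tagQ G q = i := by rw [tagQ, ← h, hi]
    exact ht ▸ (adj_p1l G S).symm
  · by_cases hk0 : k = 0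
    · refine ⟨b 1, ?_, trivial⟩
      have ht : markerB G (1 : GZ G) = i := by
        have h0 : (if Even (Multiplicative.toAdd ((1 : GZ G).2)) then (0 : Fin 3) else 1)
            = (0 : Fin 3) := by simp
        rw [markerB, h0, ← hk0, ← h, hi]
      exact ht ▸ (adj_bl G S).symm
    · by_cases hk1 : k = 1
      · refine ⟨b (e1 G), ?_, trivial⟩
        have ht : markerB G (e1 G) = i := by
          have h0 : (if Even (Multiplicative.toAdd ((e1 G).2)) then (0 : Fin 3) else 1)
              = (1 : Fin 3) := by
            rw [if_neg]
            simp [e1]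
          rw [markerB, h0, ← hk1, ← h, hi]
        exact ht ▸ (adj_bl G S).symm
      · have hk2 : k = 2 := by omega
        refine ⟨p2 1 (q0 G), ?_, trivial⟩
        have ht : tagS G = i := by rw [tagS, ← hk2, ← h, hi]
        exact ht ▸ (adj_p2l G S).symm

theorem fl_L (i : I G) : ∃ j, f (l i) = l j := by
  rcases f_anchor hinj hadj (a := l i) (by simp [isW]) with ⟨j, hj⟩ | ⟨j, hj⟩ | ⟨j, hj⟩
  · exact ⟨j, hj⟩
  · exfalso
    obtain ⟨w, hw, hwW⟩ := client_exists hinj hadj i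
    have h2 := hadj _ _ hw
    rw [hj] at h2
    have h3 := fW hinj hadj hwW
    rcases adj_r G S h2 with ⟨m, hm, _⟩ | ⟨m, hm, _⟩ <;> rw [hm] at h3 <;>
      simp [isW] at h3
  · exfalso
    obtain ⟨w, hw, hwW⟩ := client_exists hinj hadj i
    have h2 := hadj _ _ hw
    rw [hj] at h2
    have h3 := fW hinj hadj hwW
    rcases adj_u G S h2 with ⟨m, hm, _⟩ | ⟨m, hm, _⟩ <;> rw [hm] at h3 <;>
      simp [isW] at h3

theorem fu_notL (i : I G) (s : I G) : f (u i) ≠ l s := by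
  intro hfu
  obtain ⟨j, hj⟩ := nonempty_gt G i
  obtain ⟨j', hj'⟩ := fl_L hinj hadj j
  have h2 := hadj _ _ (adj_ul G S hj)
  rw [hfu, hj'] at h2
  rcases adj_l G S h2 with ⟨m, hm, _⟩ | ⟨m, hm, _⟩ | ⟨g, q, hm, _⟩ | ⟨g, q, hm, _⟩ | ⟨g, hm, _⟩ <;>
    simp at hm

theorem fu_U (i : I G) : ∃ j, f (u i) = u j := by
  rcases f_anchor hinj hadj (a := u i) (by simp [isW]) with ⟨j, hj⟩ | ⟨j, hj⟩ | ⟨j, hj⟩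
  · exact absurd hj (fu_notL hinj hadj i j)
  · -- f (u i) = r s : the kappa-many l-neighbours of u i go to L, but land below s
    exfalso
    have key : ∀ (m : {x : I G // i < x}), ∃ m' : {x : I G // x < j},
        f (l m.1) = l m'.1 := by
      rintro ⟨m, hm⟩
      obtain ⟨m', hm'⟩ := fl_L hinj hadj m
      have h2 := hadj _ _ (adj_ul G S hm)
      rw [hj, hm'] at h2
      rcases adj_r G S h2 with ⟨x, hx, hxlt⟩ | ⟨x, hx, hxlt⟩
      · cases hx
        exact ⟨⟨m', hxlt⟩, hm'⟩
      · simp at hx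
    choose F hF using key
    have hFinj : Function.Injective F := by
      intro a c hac
      have : f (l a.1) = f (l c.1) := by rw [hF a, hF c, hac]
      have := hinj this
      exact Subtype.ext (by injection this)
    have hk := le_trans (kappa_le_mk_gt G i) (Cardinal.mk_le_of_injective hFinj)
    exact absurd (lt_of_le_of_lt hk (mk_lt_of_lt G j)) (lt_irrefl _)
  · exact ⟨j, hj⟩

theorem fr_R (i : I G) : ∃ j, f (r i) = r j := by
  rcases f_anchor hinj hadj (a := r i) (by simp [isW]) with ⟨j, hj⟩ | ⟨j, hj⟩ | ⟨j, hj⟩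
  · -- f (r i) = l j : the kappa-many u-neighbours of r i go to U, but land below j
    exfalso
    have key : ∀ (m : {x : I G // i < x}), ∃ m' : {x : I G // x < j},
        f (u m.1) = u m'.1 := by
      rintro ⟨m, hm⟩
      obtain ⟨m', hm'⟩ := fu_U hinj hadj m
      have h2 := hadj _ _ (adj_ru G S hm)
      rw [hj, hm'] at h2
      rcases adj_l G S h2 with ⟨x, hx, hxlt⟩ | ⟨x, hx, hxlt⟩ | ⟨g, q, hx, _⟩ |
          ⟨g, q, hx, _⟩ | ⟨g, hx, _⟩
      · simp at hx
      · cases hx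
        exact ⟨⟨m', hxlt⟩, hm'⟩
      · simp at hx
      · simp at hx
      · simp at hx
    choose F hF using key
    have hFinj : Function.Injective F := by
      intro a c hac
      have : f (u a.1) = f (u c.1) := by rw [hF a, hF c, hac]
      have := hinj this
      exact Subtype.ext (by injection this)
    have hk := le_trans (kappa_le_mk_gt G i) (Cardinal.mk_le_of_injective hFinj)
    exact absurd (lt_of_le_of_lt hk (mk_lt_of_lt G j)) (lt_irrefl _)
  · exact ⟨j, hj⟩
  · -- f (r i) = u j : take one u-neighbour of r i; its image is in U, not adjacent to u j
    exfalso
    obtain ⟨m, hm⟩ := nonempty_gt G i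
    obtain ⟨m', hm'⟩ := fu_U hinj hadj m
    have h2 := hadj _ _ (adj_ru G S hm)
    rw [hj, hm'] at h2
    rcases adj_u G S h2 with ⟨x, hx, _⟩ | ⟨x, hx, _⟩ <;> simp at hx

theorem anchor_ge : ∀ i : I G, (∀ j, f (l i) = l j → i ≤ j) ∧ (∀ j, f (r i) = r j → i ≤ j) ∧
    (∀ j, f (u i) = u j → i ≤ j) := by
  intro i
  induction i using WellFoundedLT.induction with
  | _ i IH =>
    refine ⟨?_, ?_, ?_⟩
    · intro j hj
      by_contra hnot
      push_neg at hnot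
      obtain ⟨k, hk⟩ := fu_U hinj hadj j
      have hjk := (IH j hnot).2.2 k hk
      have h2 := hadj _ _ (adj_ul G S hnot)
      rw [hj, hk] at h2
      rcases adj_u G S h2 with ⟨x, hx, _⟩ | ⟨x, hx, hxlt⟩
      · simp at hx
      · cases hx
        exact absurd (lt_of_le_of_lt hjk hxlt) (lt_irrefl _)
    · intro j hj
      by_contra hnot
      push_neg at hnot
      obtain ⟨k, hk⟩ := fl_L hinj hadj j
      have hjk := (IH j hnot).1 k hk
      have h2 := hadj _ _ (adj_lr G S hnot)
      rw [hj, hk] at h2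
      rcases adj_r G S h2.symm with ⟨x, hx, hxlt⟩ | ⟨x, hx, hxlt⟩
      · cases hx
        exact absurd (lt_of_le_of_lt hjk hxlt) (lt_irrefl _)
      · simp at hx
    · intro j hj
      by_contra hnot
      push_neg at hnot
      obtain ⟨k, hk⟩ := fr_R hinj hadj j
      have hjk := (IH j hnot).2.1 k hk
      have h2 := hadj _ _ (adj_ru G S hnot)
      rw [hj, hk] at h2
      rcases adj_u G S h2.symm with ⟨x, hx, hxlt⟩ | ⟨x, hx, hxlt⟩
      · cases hx
        exact absurd (lt_of_le_of_lt hjk hxlt) (lt_irrefl _)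
      · simp at hx

variable (hsurj : Function.Surjective f)
include hsurj

theorem fl_fix (i : I G) : f (l i) = l i := by
  by_contra h0
  have hne : {i : I G | f (l i) ≠ l i}.Nonempty := ⟨i, h0⟩
  obtain ⟨i₀, hi₀, hmin⟩ := (IsWellFounded.wf (α := I G) (r := (· < ·))).has_min _ hne
  obtain ⟨j, hj⟩ := fl_L hinj hadj i₀
  have hij : i₀ < j := lt_of_le_of_ne ((anchor_ge hinj hadj i₀).1 j hj)
    (fun h => hi₀ (by rw [hj, h]))
  obtain ⟨v, hv⟩ := hsurj (l i₀)
  have hvl : ∃ k, v = l k := by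
    cases v with
    | l k => exact ⟨k, rfl⟩
    | r k => obtain ⟨m, hm⟩ := fr_R hinj hadj k; rw [hv] at hm; simp at hm
    | u k => obtain ⟨m, hm⟩ := fu_U hinj hadj k; rw [hv] at hm; simp at hm
    | b g => have := fW hinj hadj (v := b g) trivial; rw [hv] at this; simp [isW] at this
    | p1 g q => have := fW hinj hadj (v := p1 g q) trivial; rw [hv] at this; simp [isW] at this
    | p2 g q => have := fW hinj hadj (v := p2 g q) trivial; rw [hv] at this; simp [isW] at this
  obtain ⟨k, rfl⟩ := hvl
  have hki : k ≤ i₀ := (anchor_ge hinj hadj k).1 i₀ hv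
  rcases lt_or_eq_of_le hki with hlt | heq
  · have : f (l k) = l k := by
      by_contra hc
      exact hmin k hc hlt
    rw [hv] at this
    have hik : i₀ = k := by injection this
    exact absurd (hik ▸ hlt) (lt_irrefl _)
  · rw [heq] at hv
    rw [hv] at hj
    have : i₀ = j := by injection hj
    exact absurd (this ▸ hij) (lt_irrefl _)

theorem fr_fix (i : I G) : f (r i) = r i := by
  by_contra h0
  have hne : {i : I G | f (r i) ≠ r i}.Nonempty := ⟨i, h0⟩
  obtain ⟨i₀, hi₀, hmin⟩ := (IsWellFounded.wf (α := I G) (r := (· < ·))).has_min _ hne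
  obtain ⟨j, hj⟩ := fr_R hinj hadj i₀
  have hij : i₀ < j := lt_of_le_of_ne ((anchor_ge hinj hadj i₀).2.1 j hj)
    (fun h => hi₀ (by rw [hj, h]))
  obtain ⟨v, hv⟩ := hsurj (r i₀)
  have hvl : ∃ k, v = r k := by
    cases v with
    | r k => exact ⟨k, rfl⟩
    | l k => obtain ⟨m, hm⟩ := fl_L hinj hadj k; rw [hv] at hm; simp at hm
    | u k => obtain ⟨m, hm⟩ := fu_U hinj hadj k; rw [hv] at hm; simp at hm
    | b g => have := fW hinj hadj (v := b g) trivial; rw [hv] at this; simp [isW] at this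
    | p1 g q => have := fW hinj hadj (v := p1 g q) trivial; rw [hv] at this; simp [isW] at this
    | p2 g q => have := fW hinj hadj (v := p2 g q) trivial; rw [hv] at this; simp [isW] at this
  obtain ⟨k, rfl⟩ := hvl
  have hki : k ≤ i₀ := (anchor_ge hinj hadj k).2.1 i₀ hv
  rcases lt_or_eq_of_le hki with hlt | heq
  · have : f (r k) = r k := by
      by_contra hc
      exact hmin k hc hlt
    rw [hv] at this
    have hik : i₀ = k := by injection this
    exact absurd (hik ▸ hlt) (lt_irrefl _)
  · rw [heq] at hv
    rw [hv] at hj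
    have : i₀ = j := by injection hj
    exact absurd (this ▸ hij) (lt_irrefl _)

theorem fu_fix (i : I G) : f (u i) = u i := by
  by_contra h0
  have hne : {i : I G | f (u i) ≠ u i}.Nonempty := ⟨i, h0⟩
  obtain ⟨i₀, hi₀, hmin⟩ := (IsWellFounded.wf (α := I G) (r := (· < ·))).has_min _ hne
  obtain ⟨j, hj⟩ := fu_U hinj hadj i₀
  have hij : i₀ < j := lt_of_le_of_ne ((anchor_ge hinj hadj i₀).2.2 j hj)
    (fun h => hi₀ (by rw [hj, h]))
  obtain ⟨v, hv⟩ := hsurj (u i₀)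
  have hvl : ∃ k, v = u k := by
    cases v with
    | u k => exact ⟨k, rfl⟩
    | l k => obtain ⟨m, hm⟩ := fl_L hinj hadj k; rw [hv] at hm; simp at hm
    | r k => obtain ⟨m, hm⟩ := fr_R hinj hadj k; rw [hv] at hm; simp at hm
    | b g => have := fW hinj hadj (v := b g) trivial; rw [hv] at this; simp [isW] at this
    | p1 g q => have := fW hinj hadj (v := p1 g q) trivial; rw [hv] at this; simp [isW] at this
    | p2 g q => have := fW hinj hadj (v := p2 g q) trivial; rw [hv] at this; simp [isW] at this
  obtain ⟨k, rfl⟩ := hvl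
  have hki : k ≤ i₀ := (anchor_ge hinj hadj k).2.2 i₀ hv
  rcases lt_or_eq_of_le hki with hlt | heq
  · have : f (u k) = u k := by
      by_contra hc
      exact hmin k hc hlt
    rw [hv] at this
    have hik : i₀ = k := by injection this
    exact absurd (hik ▸ hlt) (lt_irrefl _)
  · rw [heq] at hv
    rw [hv] at hj
    have : i₀ = j := by injection hj
    exact absurd (this ▸ hij) (lt_irrefl _)

theorem fb (g : GZ G) : ∃ y, f (b g) = b y := by
  have h2 := hadj _ _ (adj_bl G S (g := g))
  rw [fl_fix hinj hadj hsurj (markerB G g)] at h2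
  have hW := fW hinj hadj (v := b g) trivial
  cases hfb : f (b g) with
  | b y => exact ⟨y, rfl⟩
  | l k => rw [hfb] at hW; simp [isW] at hW
  | r k => rw [hfb] at hW; simp [isW] at hW
  | u k => rw [hfb] at hW; simp [isW] at hW
  | p1 y q =>
    rw [hfb] at h2
    exfalso
    rcases adj_p1 G S h2 with h | h | h <;> simp at h
    exact absurd h.symm (tagQ_ne_markerB G q g)
  | p2 y q =>
    rw [hfb] at h2
    exfalso
    rcases adj_p2 G S h2 with h | h | h | h <;> simp at h
    exact absurd h.symm (tagS_ne_markerB G g)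

theorem fp1 {g y : GZ G} (q : Q G) (hy : f (b g) = b y) : f (p1 g q) = p1 y q := by
  have h2 := hadj _ _ (adj_p1l G S (g := g) (q := q))
  rw [fl_fix hinj hadj hsurj (tagQ G q)] at h2
  have hW := fW hinj hadj (v := p1 g q) trivial
  cases hfp : f (p1 g q) with
  | l k => rw [hfp] at hW; simp [isW] at hW
  | r k => rw [hfp] at hW; simp [isW] at hW
  | u k => rw [hfp] at hW; simp [isW] at hW
  | b z =>
    rw [hfp] at h2
    exfalso
    rcases adj_b G S h2 with h | ⟨q', h⟩ | ⟨g', q', h, _⟩ | ⟨h, _⟩ | ⟨x, h, _, _⟩ <;> simp at h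
    exact (tagQ_ne_markerB G q z) h
  | p2 z q' =>
    rw [hfp] at h2
    exfalso
    rcases adj_p2 G S h2 with h | h | h | h <;> simp at h
    exact (tagQ_ne_tagS G q) h
  | p1 z qq =>
    rw [hfp] at h2
    have hq : qq = q := by
      rcases adj_p1 G S h2 with h | h | h <;> simp at h
      exact tagQ_inj G h.symm
    have h3 := hadj _ _ (adj_p1b G S (g := g) (q := q))
    rw [hfp, hy] at h3
    have hzy : z = y := by
      rcases adj_p1 G S h3 with h | h | h <;> simp at h
      · exact h.symm
    rw [hzy, hq]

theorem fp2 {g y : GZ G} (q : Q G) (hy : f (b g) = b y) : f (p2 g q) = p2 y q := by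
  have h2 := hadj _ _ (adj_p1p2 G S (g := g) (q := q))
  rw [fp1 hinj hadj hsurj q hy] at h2
  rcases adj_p1 G S h2 with h | h | h
  · have hW := fW hinj hadj (v := p2 g q) trivial
    rw [h] at hW; simp [isW] at hW
  · exfalso
    rw [← hy] at h
    have := hinj h
    simp at this
  · exact h

theorem psi_step {g y z : GZ G} (q : Q G) (hy : f (b g) = b y)
    (hz : f (b (g * q.1)) = b z) : z = y * q.1 := by
  have h2 := hadj _ _ (adj_p2b' G S (g := g) (q := q))
  rw [fp2 hinj hadj hsurj q hy, hz] at h2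
  rcases adj_p2 G S h2 with h | h | h | h
  · simp at h
  · simp at h
  · exfalso
    simp only [Vtx.b.injEq] at h
    rw [h] at hz
    rw [← hy] at hz
    have := hinj hz
    simp only [Vtx.b.injEq] at this
    have hq1 : q.1 = 1 := by
      have := congrArg (fun x => g⁻¹ * x) this
      simpa [mul_assoc] using this
    exact q.2 hq1
  · simpa using h

theorem psi_translation : ∃ c : GZ G, ∀ g : GZ G, f (b g) = b (c * g) := by
  obtain ⟨c, hc⟩ := fb hinj hadj hsurj 1
  refine ⟨c, fun g => ?_⟩
  by_cases hg : g = 1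
  · rw [hg, mul_one]
    exact hc
  · obtain ⟨z, hz⟩ := fb hinj hadj hsurj g
    have hstep := psi_step hinj hadj hsurj (q := ⟨g, hg⟩) (g := (1 : GZ G)) (y := c) (z := z)
      hc (by rw [one_mul]; exact hz)
    rw [hz, hstep]

theorem c_mem_S (hS1 : (1 : GZ G) ∈ S) {c : GZ G} (hc : ∀ g, f (b g) = b (c * g)) : c ∈ S := by
  have h2 := hadj _ _ (adj_bb G S hS1)
  rw [hc, hc, mul_one, one_mul] at h2
  rcases h2 with h | h
  · exact h.2
  · exfalso
    have h1 : c = c * e1 G * e1 G := h.1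
    have : e1 G * e1 G = 1 := by
      have := congrArg (fun x => c⁻¹ * x) h1
      simpa [mul_assoc] using this.symm
    exact e1_sq_ne_one G this

end Rigid

/-- Left translation on the moving part. -/
def Lam (c : GZ G) : Vtx G → Vtx G
  | .l i => l i
  | .r i => r i
  | .u i => u i
  | .b g => b (c * g)
  | .p1 g q => p1 (c * g) q
  | .p2 g q => p2 (c * g) q

theorem markerB_left (c g : GZ G) (hc2 : c.2 = 1) : markerB G (c * g) = markerB G g := by
  unfold markerB
  have : (c * g).2 = g.2 := by rw [Prod.snd_mul, hc2, one_mul]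
  rw [this]

theorem Lam_rel {c : GZ G} (hcS : ∀ x ∈ S, c * x ∈ S) (hc2 : c.2 = 1) {v w : Vtx G}
    (h : rel G S v w) : rel G S (Lam G c v) (Lam G c w) := by
  cases v <;> cases w <;> simp only [rel, Lam] at h ⊢
  case l.r => exact h
  case r.u => exact h
  case u.l => exact h
  case p1.l => exact h
  case p2.l => exact h
  case b.l g i => rw [h]; exact (markerB_left G c _ hc2).symm
  case p1.b => exact congrArg (c * ·) h
  case p1.p2 => exact ⟨congrArg (c * ·) h.1, h.2⟩
  case p2.b g q g' =>
    rcases h with h | h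
    · exact Or.inl (congrArg (c * ·) h)
    · exact Or.inr (by rw [h, mul_assoc])
  case b.b g g' =>
    exact ⟨by rw [h.1, mul_assoc], hcS g h.2⟩

theorem Lam_adj {c : GZ G} (hcS : ∀ x ∈ S, c * x ∈ S) (hc2 : c.2 = 1) {v w : Vtx G}
    (h : (Γ G S).Adj v w) : (Γ G S).Adj (Lam G c v) (Lam G c w) := by
  rcases h with h | h
  · exact Or.inl (Lam_rel G S hcS hc2 h)
  · exact Or.inr (Lam_rel G S hcS hc2 h)

theorem Lam_comp (c d : GZ G) : ∀ v, Lam G c (Lam G d v) = Lam G (c * d) v := by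
  intro v
  cases v <;> simp [Lam, mul_assoc]

theorem Lam_one : ∀ v, Lam G 1 v = v := by
  intro v
  cases v <;> simp [Lam]

theorem Lam_bijective (c : GZ G) : Function.Bijective (Lam G c) := by
  have h1 : ∀ v, Lam G c⁻¹ (Lam G c v) = v := by
    intro v
    rw [Lam_comp, inv_mul_cancel, Lam_one]
  have h2 : ∀ v, Lam G c (Lam G c⁻¹ v) = v := by
    intro v
    rw [Lam_comp, mul_inv_cancel, Lam_one]
  exact ⟨Function.LeftInverse.injective h1, Function.RightInverse.surjective h2⟩

/-- The complete rigidity theorem: every bimorphism of `Γ G S` is a translation `Lam c`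
with `c ∈ S`. -/
theorem rigidity (hS1 : (1 : GZ G) ∈ S) {f : Vtx G → Vtx G} (hbij : Function.Bijective f)
    (hadj : ∀ a c : Vtx G, (Γ G S).Adj a c → (Γ G S).Adj (f a) (f c)) :
    ∃ c ∈ S, f = Lam G c := by
  obtain ⟨c, hc⟩ := psi_translation hbij.1 hadj hbij.2
  refine ⟨c, c_mem_S hbij.1 hadj hbij.2 hS1 hc, ?_⟩
  funext v
  cases v with
  | l i => exact fl_fix hbij.1 hadj hbij.2 i
  | r i => exact fr_fix hbij.1 hadj hbij.2 i
  | u i => exact fu_fix hbij.1 hadj hbij.2 i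
  | b g => exact hc g
  | p1 g q => exact fp1 hbij.1 hadj hbij.2 q (hc g)
  | p2 g q => exact fp2 hbij.1 hadj hbij.2 q (hc g)

section MonoidPart

variable {M : Type u} [Monoid M] (φ : M →* G)

/-- The image of `M` inside `GZ G`. -/
def Sphi : Set (GZ G) := Set.range (fun m => ((φ m, 1) : GZ G))

theorem one_mem_Sphi : (1 : GZ G) ∈ Sphi G φ := ⟨1, by simp⟩

theorem mul_mem_Sphi (m : M) : ∀ x ∈ Sphi G φ, ((φ m, 1) : GZ G) * x ∈ Sphi G φ := by
  rintro x ⟨k, rfl⟩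
  exact ⟨m * k, by simp [Prod.mk_mul_mk]⟩

/-- The homomorphism from `M` to the bimorphism monoid. -/
noncomputable def Phi : M →* biSubmonoid (Γ G (Sphi G φ)) where
  toFun m := ⟨Lam G ((φ m, 1) : GZ G),
    ⟨Lam_bijective G (φ m, 1),
     fun _ _ h => Lam_adj G (Sphi G φ) (mul_mem_Sphi G φ m) rfl h⟩⟩
  map_one' := by
    apply Subtype.ext
    funext v
    show Lam G ((φ 1, 1) : GZ G) v = v
    rw [map_one]
    exact Lam_one G v
  map_mul' := by
    intro m n
    apply Subtype.ext
    funext v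
    show Lam G ((φ (m * n), 1) : GZ G) v = Lam G ((φ m, 1) : GZ G) (Lam G ((φ n, 1) : GZ G) v)
    rw [Lam_comp, Prod.mk_mul_mk, mul_one, map_mul]

theorem Phi_injective (hφ : Function.Injective φ) : Function.Injective (Phi G φ) := by
  intro m m' h
  have h2 := congrArg (fun F : biSubmonoid (Γ G (Sphi G φ)) => (F : Function.End (Vtx G)) (b 1)) h
  simp only [Phi, MonoidHom.coe_mk, OneHom.coe_mk] at h2
  have h3 : Lam G ((φ m, 1) : GZ G) (b 1) = Lam G ((φ m', 1) : GZ G) (b 1) := h2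
  simp only [Lam, mul_one, Vtx.b.injEq, Prod.ext_iff] at h3
  exact hφ h3.1

theorem Phi_surjective : Function.Surjective (Phi G φ) := by
  rintro ⟨F, hbij, hadjF⟩
  obtain ⟨c, hcS, hF⟩ := rigidity G (Sphi G φ) (one_mem_Sphi G φ) hbij hadjF
  obtain ⟨m, hm⟩ := hcS
  refine ⟨m, Subtype.ext ?_⟩
  show Lam G ((φ m, 1) : GZ G) = F
  have hm' : ((φ m, 1) : GZ G) = c := hm
  rw [hF, hm']

end MonoidPart

end BiMo

/-- A monoid is isomorphic to the bimorphism monoid of some simple graph if and only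
if it embeds into a group. -/
theorem iso_bimorphism_monoid_iff_embeds_into_group {M : Type u} [Monoid M] :
    (∃ (V : Type u) (Γ : SimpleGraph V), Nonempty (biSubmonoid Γ ≃* M)) ↔
    (∃ (G : Type u) (_ : Group G) (φ : M →* G), Function.Injective φ) := by
  constructor
  · rintro ⟨V, Γ, ⟨e⟩⟩
    refine ⟨Equiv.Perm V, inferInstance, ?_⟩
    have hmono : ∀ F : biSubmonoid Γ, Function.Bijective (F : Function.End V) :=
      fun F => F.2.1
    let ψ : biSubmonoid Γ →* Equiv.Perm V :=
      { toFun := fun F => Equiv.ofBijective _ (hmono F)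
        map_one' := by ext x; rfl
        map_mul' := by intro F F'; ext x; rfl }
    refine ⟨ψ.comp e.symm.toMonoidHom, ?_⟩
    intro m m' h
    have h2 : ∀ x, (e.symm m : Function.End V) x = (e.symm m' : Function.End V) x := by
      intro x
      exact congrArg (fun p : Equiv.Perm V => p x) h
    have h3 : e.symm m = e.symm m' := Subtype.ext (funext h2)
    exact e.symm.injective h3
  · rintro ⟨G, _, φ, hφ⟩
    refine ⟨BiMo.Vtx G, BiMo.Γ G (BiMo.Sphi G φ), ⟨?_⟩⟩
    exact (MulEquiv.ofBijective (BiMo.Phi G φ)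
      ⟨BiMo.Phi_injective G φ hφ, BiMo.Phi_surjective G φ⟩).symm
end
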